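/- arXiv:2310.09980 — 5 statements merged into one kernel-verified Lean document; each statement's English description precedes it below -/
import Mathlib

section
/- Let K be a totally real number field with ring of integers O_K, and let α be a totally positive element of O_K. Then α · p_K(α) = Σ_{0 ≺ β ≼ α} σ_K(β) · p_K(α − β), where the sum is over all totally positive β ∈ O_K with β ≼ α. -/
open NumberField

/-- An element of the ring of integers is totally positive if its image under
every real embedding of the field is positive. -/
def TotallyPositive (K : Type*) [Field K] [NumberField K] (x : 𝓞 K) : Prop :=
  ∀ φ : K →+* ℝ, 0 < φ (x : K)

/-- The partition function `p_K` : the number of ways to write `α` as a sum of a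
multiset of totally positive integers of `K`. -/
noncomputable def partitionFun (K : Type*) [Field K] [NumberField K] (α : 𝓞 K) : ℕ :=
  Nat.card {m : Multiset (𝓞 K) // (∀ β ∈ m, TotallyPositive K β) ∧ m.sum = α}

/-- `σ_K(β) = ∑_{n ∈ ℤ≥1, n ∣ β} β/n`, written as the sum of all `γ ∈ 𝓞 K`
such that `n • γ = β` for some positive natural number `n`. -/
noncomputable def sigmaK (K : Type*) [Field K] [NumberField K] (β : 𝓞 K) : 𝓞 K :=
  ∑ᶠ γ ∈ {γ : 𝓞 K | ∃ n : ℕ, 0 < n ∧ (n : 𝓞 K) * γ = β}, γ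

section Aux
variable {K : Type*} [Field K] [NumberField K]

def Sset (δ : 𝓞 K) : Set (𝓞 K) :=
  {β | TotallyPositive K β ∧ (TotallyPositive K (δ - β) ∨ β = δ)}

def Pset (δ : 𝓞 K) : Set (Multiset (𝓞 K)) :=
  {m | (∀ β ∈ m, TotallyPositive K β) ∧ m.sum = δ}

/-- real embedding of 𝓞 K from a real embedding of K -/
noncomputable local instance : DecidableEq (𝓞 K) := Classical.decEq _

noncomputable def remb (φ : K →+* ℝ) : 𝓞 K →+* ℝ := φ.comp (algebraMap (𝓞 K) K)

lemma remb_apply (φ : K →+* ℝ) (x : 𝓞 K) : remb φ x = φ (x : K) := rfl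

lemma tp_iff (x : 𝓞 K) : TotallyPositive K x ↔ ∀ φ : K →+* ℝ, 0 < remb φ x := Iff.rfl

lemma sum_map_pos {m : Multiset (𝓞 K)} {f : 𝓞 K → ℝ} (hm : m ≠ 0)
    (h : ∀ β ∈ m, 0 < f β) : 0 < (m.map f).sum := by
  obtain ⟨a, ha⟩ := Multiset.exists_mem_of_ne_zero hm
  have h1 : m = a ::ₘ m.erase a := (Multiset.cons_erase ha).symm
  rw [h1, Multiset.map_cons, Multiset.sum_cons]
  have h2 : 0 ≤ ((m.erase a).map f).sum := by
    apply Multiset.sum_nonneg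
    intro x hx
    obtain ⟨b, hb, rfl⟩ := Multiset.mem_map.mp hx
    exact (h b (Multiset.mem_of_mem_erase hb)).le
  linarith [h a ha]

lemma tp_sum {m : Multiset (𝓞 K)} (hm : m ≠ 0) (h : ∀ β ∈ m, TotallyPositive K β) :
    TotallyPositive K m.sum := by
  intro φ
  rw [← remb_apply, map_multiset_sum]
  exact sum_map_pos hm fun β hβ => h β hβ φ

lemma mem_Sset_of_mem_Pset {δ : 𝓞 K} {m : Multiset (𝓞 K)} (hm : m ∈ Pset δ)
    {β : 𝓞 K} (hβ : β ∈ m) : β ∈ Sset δ := by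
  obtain ⟨htp, hsum⟩ := hm
  refine ⟨htp β hβ, ?_⟩
  have hsum2 : β + (m.erase β).sum = δ := by
    rw [← Multiset.sum_cons, Multiset.cons_erase hβ, hsum]
  have h2 : δ - β = (m.erase β).sum := by rw [← hsum2]; ring
  rcases eq_or_ne (m.erase β) 0 with h0 | h0
  · right
    rw [← hsum2, h0, Multiset.sum_zero, add_zero]
  · left
    rw [h2]
    exact tp_sum h0 fun x hx => htp x (Multiset.mem_of_mem_erase hx)

end Aux

section Fin
variable {K : Type*} [Field K] [NumberField K]
variable (htotreal : ∀ v : InfinitePlace K, v.IsReal)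
include htotreal

lemma norm_le_of_mem_Sset {δ β : 𝓞 K} (hβ : β ∈ Sset δ) (φ : K →+* ℂ) :
    ‖φ (β : K)‖ ≤ ‖φ (δ : K)‖ := by
  have hre : ComplexEmbedding.IsReal φ :=
    InfinitePlace.isReal_mk_iff.mp (htotreal (InfinitePlace.mk φ))
  set ψ := hre.embedding with hψdef
  have hψ : ∀ x : K, φ x = ((ψ x : ℝ) : ℂ) := fun x => (hre.coe_embedding_apply x).symm
  have h1 : 0 < ψ (β : K) := hβ.1 ψ
  have h2 : ψ (β : K) ≤ ψ (δ : K) := by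
    rcases hβ.2 with h | h
    · have h3 := h ψ
      have h4 : ((δ - β : 𝓞 K) : K) = (δ : K) - (β : K) := by push_cast; ring
      rw [h4, map_sub] at h3
      linarith
    · rw [h]
  rw [hψ, hψ, Complex.norm_real, Complex.norm_real, Real.norm_eq_abs, Real.norm_eq_abs]
  rw [abs_of_pos h1, abs_of_nonneg (le_trans h1.le h2)]
  exact h2

lemma Sset_finite (δ : 𝓞 K) : (Sset δ).Finite := by
  classical
  set B : ℝ := ((Finset.univ.sup fun φ : K →+* ℂ => ‖φ (δ : K)‖₊ : NNReal) : ℝ) with hB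
  have hfin := Embeddings.finite_of_norm_le K ℂ B
  have hsub : Sset δ ⊆ (fun β : 𝓞 K => (β : K)) ⁻¹'
      {x : K | IsIntegral ℤ x ∧ ∀ φ : K →+* ℂ, ‖φ x‖ ≤ B} := by
    intro β hβ
    refine ⟨RingOfIntegers.isIntegral_coe β, fun φ => ?_⟩
    refine le_trans (norm_le_of_mem_Sset htotreal hβ φ) ?_
    have : (‖φ (δ : K)‖₊ : ℝ) ≤ B := by
      rw [hB]
      exact_mod_cast NNReal.coe_le_coe.mpr
        (Finset.le_sup (f := fun φ : K →+* ℂ => ‖φ (δ : K)‖₊) (Finset.mem_univ φ))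
    simpa using this
  exact (hfin.preimage (RingOfIntegers.coe_injective.injOn)).subset hsub


lemma Pset_finite (δ : 𝓞 K) : (Pset δ).Finite := by
  classical
  obtain ⟨v⟩ := (inferInstance : Nonempty (InfinitePlace K))
  set ψ : 𝓞 K →+* ℝ := remb (InfinitePlace.embedding_of_isReal (htotreal v)) with hψdef
  set T : Finset (𝓞 K) := (Sset_finite htotreal δ).toFinset with hT
  rcases T.eq_empty_or_nonempty with hTe | hTne
  · apply Set.Finite.subset (Set.finite_singleton (0 : Multiset (𝓞 K)))
    intro m hm
    simp only [Set.mem_singleton_iff]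
    by_contra h0
    obtain ⟨a, ha⟩ := Multiset.exists_mem_of_ne_zero h0
    have : a ∈ T := by
      rw [hT, Set.Finite.mem_toFinset]
      exact mem_Sset_of_mem_Pset hm ha
    simp [hTe] at this
  · set ε : ℝ := T.inf' hTne (fun γ => ψ γ) with hε
    have hε0 : 0 < ε := by
      rw [hε]
      apply (Finset.lt_inf'_iff _).mpr
      intro γ hγ
      rw [hT, Set.Finite.mem_toFinset] at hγ
      exact hγ.1 (InfinitePlace.embedding_of_isReal (htotreal v))
    set N : ℕ := ⌈ψ δ / ε⌉₊ with hN
    have hcard : ∀ m ∈ Pset δ, Multiset.card m ≤ N := by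
      intro m hm
      have h1 : ∀ x ∈ m.map ψ, ε ≤ x := by
        intro x hx
        obtain ⟨b, hb, rfl⟩ := Multiset.mem_map.mp hx
        apply Finset.inf'_le
        rw [hT, Set.Finite.mem_toFinset]
        exact mem_Sset_of_mem_Pset hm hb
      have h2 := Multiset.card_nsmul_le_sum h1
      rw [Multiset.card_map] at h2
      have h3 : (m.map ψ).sum = ψ δ := by rw [← map_multiset_sum, hm.2]
      rw [h3, nsmul_eq_mul] at h2
      have h4 : (Multiset.card m : ℝ) ≤ ψ δ / ε := (le_div_iff₀ hε0).mpr h2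
      exact_mod_cast h4.trans (Nat.le_ceil _)
    set M : Multiset (𝓞 K) := N • T.val with hM
    apply Set.Finite.subset (Multiset.finite_toSet M.powerset)
    intro m hm
    simp only [Multiset.mem_coe, Multiset.mem_powerset]
    show m ≤ M
    rw [Multiset.le_iff_count]
    intro a
    by_cases ha : a ∈ m
    · have haT : a ∈ T := by
        rw [hT, Set.Finite.mem_toFinset]; exact mem_Sset_of_mem_Pset hm ha
      have h5 : m.count a ≤ N := le_trans (Multiset.count_le_card a m) (hcard m hm)
      rw [hM, Multiset.count_nsmul, Multiset.count_eq_one_of_mem T.nodup haT, mul_one]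
      exact h5
    · rw [Multiset.count_eq_zero_of_notMem ha]
      exact Nat.zero_le _

end Fin

section Mid
variable {K : Type*} [Field K] [NumberField K]
variable (htotreal : ∀ v : InfinitePlace K, v.IsReal)

lemma cast_mul_coe (n : ℕ) (γ : 𝓞 K) : (((n : 𝓞 K) * γ : 𝓞 K) : K) = (n : K) * (γ : K) := by
  push_cast; ring

lemma tp_nsmul {γ : 𝓞 K} {n : ℕ} (hn : 0 < n) (hγ : TotallyPositive K γ) :
    TotallyPositive K ((n : 𝓞 K) * γ) := by
  intro φ
  rw [cast_mul_coe, map_mul, map_natCast]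
  exact mul_pos (by exact_mod_cast hn) (hγ φ)

lemma tp_of_nsmul {γ β : 𝓞 K} {n : ℕ} (hn : 0 < n) (h : (n : 𝓞 K) * γ = β)
    (hβ : TotallyPositive K β) : TotallyPositive K γ := by
  intro φ
  have h1 := hβ φ
  rw [← h, cast_mul_coe, map_mul, map_natCast] at h1
  have hn' : (0:ℝ) < (n : ℝ) := by exact_mod_cast hn
  nlinarith

lemma mem_Sset_of_div {α β γ : 𝓞 K} {n : ℕ} (hβ : β ∈ Sset α) (hn : 0 < n)
    (h : (n : 𝓞 K) * γ = β) : γ ∈ Sset α := by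
  have hγ : TotallyPositive K γ := tp_of_nsmul hn h hβ.1
  rcases Nat.lt_or_ge n 2 with h2 | h2
  · interval_cases n
    · have : γ = β := by simpa using h
      rw [this]; exact hβ
  · have hsplit : α - γ = (α - β) + ((n - 1 : ℕ) : 𝓞 K) * γ := by
      have : ((n - 1 : ℕ) : 𝓞 K) = (n : 𝓞 K) - 1 := by
        have := Nat.cast_sub (R := 𝓞 K) (le_of_lt (by omega : (1:ℕ) < n))
        simpa using this
      rw [this, ← h]; ring
    have htp1 : TotallyPositive K (((n - 1 : ℕ) : 𝓞 K) * γ) :=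
      tp_nsmul (by omega) hγ
    refine ⟨hγ, Or.inl ?_⟩
    rcases hβ.2 with h3 | h3
    · rw [hsplit]
      intro φ
      have := h3 φ; have := htp1 φ
      have hadd : ((α - β + ((n-1:ℕ):𝓞 K) * γ : 𝓞 K) : K)
          = ((α - β : 𝓞 K) : K) + ((((n-1:ℕ):𝓞 K) * γ : 𝓞 K) : K) := by push_cast; ring
      rw [hadd, map_add]
      linarith
    · rw [hsplit, h3, sub_self, zero_add]
      exact htp1

lemma tp_ne_zero (htotreal : ∀ v : InfinitePlace K, v.IsReal) {γ : 𝓞 K}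
    (hγ : TotallyPositive K γ) : γ ≠ 0 := by
  obtain ⟨v⟩ := (inferInstance : Nonempty (InfinitePlace K))
  intro h0
  have := hγ (InfinitePlace.embedding_of_isReal (htotreal v))
  rw [h0] at this
  simp at this

end Mid

section Main
variable {K : Type*} [Field K] [NumberField K]
variable (htotreal : ∀ v : InfinitePlace K, v.IsReal)
noncomputable local instance inst_s0 : DecidableEq (𝓞 K) := Classical.decEq _
include htotreal

lemma partitionFun_eq (δ : 𝓞 K) :
    partitionFun K δ = ((Pset_finite htotreal δ).toFinset).card := by
  have h1 : partitionFun K δ = Nat.card ↥(Pset δ) := rfl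
  rw [h1, Nat.card_coe_set_eq, Set.ncard_eq_toFinset_card _ (Pset_finite htotreal δ)]

lemma card_Q {α γ : 𝓞 K} (hγ : TotallyPositive K γ) {n : ℕ} (hn : 0 < n) :
    (((Pset_finite htotreal α).toFinset).filter (fun m => n ≤ m.count γ)).card
      = partitionFun K (α - (n : 𝓞 K) * γ) := by
  classical
  rw [partitionFun_eq htotreal]
  have hrep : (Multiset.replicate n γ).sum = (n : 𝓞 K) * γ := by
    rw [Multiset.sum_replicate, nsmul_eq_mul]
  refine Finset.card_bij' (fun m _ => m - Multiset.replicate n γ)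
    (fun m _ => m + Multiset.replicate n γ) ?_ ?_ ?_ ?_
  · intro m hm
    rw [Finset.mem_filter, Set.Finite.mem_toFinset] at hm
    obtain ⟨⟨htp, hsum⟩, hcount⟩ := hm
    have hle : Multiset.replicate n γ ≤ m := Multiset.le_count_iff_replicate_le.mp hcount
    rw [Set.Finite.mem_toFinset]
    constructor
    · intro b hb
      exact htp b (Multiset.mem_of_le (Multiset.sub_le_self _ _) hb)
    · have h2 : (m - Multiset.replicate n γ) + Multiset.replicate n γ = m :=
        tsub_add_cancel_of_le hle
      have h3 := congrArg Multiset.sum h2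
      rw [Multiset.sum_add, hrep, hsum] at h3
      exact eq_sub_of_add_eq h3
  · intro m hm
    rw [Set.Finite.mem_toFinset] at hm
    obtain ⟨htp, hsum⟩ := hm
    rw [Finset.mem_filter, Set.Finite.mem_toFinset]
    refine ⟨⟨?_, ?_⟩, ?_⟩
    · intro b hb
      rcases Multiset.mem_add.mp hb with h | h
      · exact htp b h
      · rw [Multiset.eq_of_mem_replicate h]; exact hγ
    · rw [Multiset.sum_add, hrep, hsum]; ring
    · rw [Multiset.count_add, Multiset.count_replicate, if_pos rfl]
      omega
  · intro m hm
    rw [Finset.mem_filter, Set.Finite.mem_toFinset] at hm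
    exact tsub_add_cancel_of_le (Multiset.le_count_iff_replicate_le.mp hm.2)
  · intro m _
    exact add_tsub_cancel_right _ _


lemma mem_Sset_of_partitionFun_ne_zero {α x : 𝓞 K} (hx : TotallyPositive K x)
    (hp : partitionFun K (α - x) ≠ 0) : x ∈ Sset α := by
  rw [partitionFun_eq htotreal] at hp
  obtain ⟨m, hm⟩ := Finset.card_ne_zero.mp hp |>.exists_mem
  rw [Set.Finite.mem_toFinset] at hm
  refine ⟨hx, ?_⟩
  rcases eq_or_ne m 0 with h0 | h0
  · right
    have := hm.2
    rw [h0, Multiset.sum_zero] at this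
    have : x = α := by linear_combination this
    exact this
  · left
    rw [← hm.2]
    exact tp_sum h0 hm.1

end Main


theorem recurrence_for_partition_function
    (K : Type*) [Field K] [NumberField K]
    (htotreal : ∀ v : InfinitePlace K, v.IsReal)
    (α : 𝓞 K) (hα : TotallyPositive K α) :
    α * (partitionFun K α : 𝓞 K) =
      ∑ᶠ β ∈ {β : 𝓞 K | TotallyPositive K β ∧
          (TotallyPositive K (α - β) ∨ β = α)},
        sigmaK K β * (partitionFun K (α - β) : 𝓞 K) := by
  classical
  set T : Finset (𝓞 K) := (Sset_finite htotreal α).toFinset with hTdef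
  set P : Finset (Multiset (𝓞 K)) := (Pset_finite htotreal α).toFinset with hPdef
  set N : ℕ := P.sup Multiset.card with hNdef
  have hmemT : ∀ {β : 𝓞 K}, β ∈ T ↔ β ∈ Sset α := fun {β} => Set.Finite.mem_toFinset _
  have hmemP : ∀ {m : Multiset (𝓞 K)}, m ∈ P ↔ m ∈ Pset α := fun {m} => Set.Finite.mem_toFinset _
  -- step 0 : rewrite the finsum as a finset sum over T
  have hset : {β : 𝓞 K | TotallyPositive K β ∧ (TotallyPositive K (α - β) ∨ β = α)}
      = (↑T : Set (𝓞 K)) := by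
    rw [hTdef, Set.Finite.coe_toFinset]; rfl
  rw [hset, finsum_mem_coe_finset]
  -- step 1 : LHS as double sum of counts
  have h1 : α * (partitionFun K α : 𝓞 K) = ∑ m ∈ P, ∑ γ ∈ T, m.count γ • γ := by
    have hcard : partitionFun K α = P.card := partitionFun_eq htotreal α
    have e1 : α * (partitionFun K α : 𝓞 K) = ∑ m ∈ P, α := by
      rw [Finset.sum_const, hcard, nsmul_eq_mul, mul_comm]
    rw [e1]
    apply Finset.sum_congr rfl
    intro m hm
    have hmP := hmemP.mp hm
    have e2 : m.sum = ∑ γ ∈ m.toFinset, m.count γ • γ := by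
      conv_lhs => rw [← Multiset.map_id m]
      exact Finset.sum_multiset_map_count m id
    have e3 : ∑ γ ∈ m.toFinset, m.count γ • γ = ∑ γ ∈ T, m.count γ • γ := by
      apply Finset.sum_subset
      · intro γ hγ
        exact hmemT.mpr (mem_Sset_of_mem_Pset hmP (Multiset.mem_toFinset.mp hγ))
      · intro γ _ hγ
        rw [Multiset.count_eq_zero_of_notMem (fun h => hγ (Multiset.mem_toFinset.mpr h))]
        simp
    rw [← hmP.2, e2, e3]
  -- step 2 : exchange and count by multiplicity layers
  have h2 : ∑ m ∈ P, ∑ γ ∈ T, m.count γ • γ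
      = ∑ γ ∈ T, ∑ n ∈ Finset.Icc 1 N, (P.filter fun m => n ≤ m.count γ).card • γ := by
    rw [Finset.sum_comm]
    apply Finset.sum_congr rfl
    intro γ _
    have e4 : ∀ m ∈ P, m.count γ = ∑ n ∈ Finset.Icc 1 N, if n ≤ m.count γ then 1 else 0 := by
      intro m hm
      have hcN : m.count γ ≤ N := le_trans (Multiset.count_le_card γ m)
        (Finset.le_sup (f := Multiset.card) hm)
      rw [← Finset.card_filter]
      have : (Finset.Icc 1 N).filter (fun n => n ≤ m.count γ) = Finset.Icc 1 (m.count γ) := by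
        ext a
        simp only [Finset.mem_filter, Finset.mem_Icc]
        omega
      rw [this, Nat.card_Icc]
      omega
    rw [← Finset.sum_smul]
    rw [Finset.sum_congr rfl e4, Finset.sum_comm]
    rw [Finset.sum_smul]
    simp_rw [Finset.card_filter]
  set sP : Finset (𝓞 K × ℕ) := (T ×ˢ Finset.Icc 1 N).filter
      (fun q => (P.filter fun m => q.2 ≤ m.count q.1).card ≠ 0) with hsP
  set tP : Finset (𝓞 K × 𝓞 K) := (T ×ˢ T).filter
      (fun q => (∃ n : ℕ, 0 < n ∧ (n : 𝓞 K) * q.2 = q.1) ∧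
        partitionFun K (α - q.1) ≠ 0) with htP
  -- step 3 : LHS as a sum over filtered pairs
  have h3 : ∑ γ ∈ T, ∑ n ∈ Finset.Icc 1 N, (P.filter fun m => n ≤ m.count γ).card • γ
      = ∑ q ∈ sP, (P.filter fun m => q.2 ≤ m.count q.1).card • q.1 := by
    have e := Finset.sum_product (s := T) (t := Finset.Icc 1 N)
      (f := fun q : 𝓞 K × ℕ => (P.filter fun m => q.2 ≤ m.count q.1).card • q.1)
    rw [← e, hsP]
    refine (Finset.sum_filter_of_ne ?_).symm
    intro q _ hf hq
    apply hf
    rw [hq]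
    simp
  -- step 4 : the bijection
  have h4 : ∑ q ∈ sP, (P.filter fun m => q.2 ≤ m.count q.1).card • q.1
      = ∑ q ∈ tP, q.2 * (partitionFun K (α - q.1) : 𝓞 K) := by
    apply Finset.sum_nbij (fun q : 𝓞 K × ℕ => (((q.2 : 𝓞 K) * q.1 : 𝓞 K), q.1))
    · rintro ⟨γ, n⟩ hq
      rw [hsP, Finset.mem_filter, Finset.mem_product, Finset.mem_Icc] at hq
      obtain ⟨⟨hγT, hn1, hnN⟩, hQ⟩ := hq
      have hγtp : TotallyPositive K γ := (hmemT.mp hγT).1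
      have hn : 0 < n := hn1
      have hcq := card_Q htotreal (α := α) hγtp hn
      rw [htP, Finset.mem_filter, Finset.mem_product]
      have hpne : partitionFun K (α - (n : 𝓞 K) * γ) ≠ 0 := by
        rw [← hcq]; exact hQ
      refine ⟨⟨?_, hγT⟩, ⟨n, hn, rfl⟩, hpne⟩
      exact hmemT.mpr (mem_Sset_of_partitionFun_ne_zero htotreal (tp_nsmul hn hγtp) hpne)
    · rintro ⟨γ, n⟩ hq ⟨γ', n'⟩ hq' heq
      simp only [Finset.coe_filter, Set.mem_setOf_eq, hsP] at hq hq'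
      obtain ⟨hmem, _⟩ := hq
      rw [Finset.mem_product] at hmem
      have hγtp : TotallyPositive K γ := (hmemT.mp hmem.1).1
      have hγ0 : γ ≠ 0 := tp_ne_zero htotreal hγtp
      have h2' : γ = γ' := congrArg Prod.snd heq
      have h1' : (n : 𝓞 K) * γ = (n' : 𝓞 K) * γ' := congrArg Prod.fst heq
      rw [← h2'] at h1'
      have : (n : 𝓞 K) = (n' : 𝓞 K) := mul_right_cancel₀ hγ0 h1'
      have : n = n' := Nat.cast_injective this
      simp [h2', this]
    · rintro ⟨β, γ⟩ hq
      simp only [Finset.coe_filter, Set.mem_setOf_eq, htP] at hq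
      obtain ⟨hmem, ⟨n, hn, hmul⟩, hpne⟩ := hq
      rw [Finset.mem_product] at hmem
      have hβS : β ∈ Sset α := hmemT.mp hmem.1
      have hγS : γ ∈ Sset α := mem_Sset_of_div hβS hn hmul
      have hγtp : TotallyPositive K γ := hγS.1
      have hcq := card_Q htotreal (α := α) hγtp hn
      have hQne : (P.filter fun m => n ≤ m.count γ).card ≠ 0 := by
        rw [hcq, hmul]; exact hpne
      have hnN : n ≤ N := by
        obtain ⟨m, hm⟩ := Finset.card_ne_zero.mp hQne |>.exists_mem
        rw [Finset.mem_filter] at hm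
        calc n ≤ m.count γ := hm.2
        _ ≤ Multiset.card m := Multiset.count_le_card γ m
        _ ≤ N := Finset.le_sup (f := Multiset.card) hm.1
      refine ⟨(γ, n), ?_, ?_⟩
      · rw [hsP]
        simp only [Finset.coe_filter, Set.mem_setOf_eq]
        exact ⟨Finset.mem_product.mpr ⟨hmemT.mpr hγS, Finset.mem_Icc.mpr ⟨hn, hnN⟩⟩, hQne⟩
      · simp [hmul]
    · rintro ⟨γ, n⟩ hq
      rw [hsP, Finset.mem_filter, Finset.mem_product, Finset.mem_Icc] at hq
      obtain ⟨⟨hγT, hn1, hnN⟩, hQ⟩ := hq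
      have hγtp : TotallyPositive K γ := (hmemT.mp hγT).1
      have hcq := card_Q htotreal (α := α) hγtp hn1
      rw [hcq, nsmul_eq_mul, mul_comm]
  -- step 5 : the filtered pair sum is the RHS
  have h5 : ∑ q ∈ tP, q.2 * (partitionFun K (α - q.1) : 𝓞 K)
      = ∑ β ∈ T, sigmaK K β * (partitionFun K (α - β) : 𝓞 K) := by
    have hsig : ∀ β ∈ T, sigmaK K β
        = ∑ γ ∈ T.filter (fun γ => ∃ n : ℕ, 0 < n ∧ (n : 𝓞 K) * γ = β), γ := by
      intro β hβ
      have hβS : β ∈ Sset α := hmemT.mp hβ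
      have hEq : {γ : 𝓞 K | ∃ n : ℕ, 0 < n ∧ (n : 𝓞 K) * γ = β}
          = ↑(T.filter (fun γ => ∃ n : ℕ, 0 < n ∧ (n : 𝓞 K) * γ = β)) := by
        ext γ
        simp only [Set.mem_setOf_eq, Finset.coe_filter]
        constructor
        · rintro ⟨n, hn, hmul⟩
          exact ⟨hmemT.mpr (mem_Sset_of_div hβS hn hmul), n, hn, hmul⟩
        · rintro ⟨_, h⟩; exact h
      rw [sigmaK, hEq, finsum_mem_coe_finset]
    rw [htP, Finset.sum_filter, Finset.sum_product]
    
    apply Finset.sum_congr rfl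
    intro β hβ
    rw [hsig β hβ, Finset.sum_mul, Finset.sum_filter]
    apply Finset.sum_congr rfl
    intro γ hγ
    by_cases hd : ∃ n : ℕ, 0 < n ∧ (n : 𝓞 K) * γ = β
    · by_cases hz : partitionFun K (α - β) ≠ 0
      · simp [hd, hz]
      · push_neg at hz
        simp [hd, hz]
    · simp [hd]
  rw [h1, h2, h3, h4, h5]
end

section
/- Let D ≥ 2 be a squarefree integer with D ≡ 2 or 3 (mod 4), and let K = ℚ(√D). Then there exist infinitely many n ∈ ℤ≥1 such that p_K(n) is odd, and infinitely many n ∈ ℤ≥1 such that p_K(n) is even. -/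
noncomputable section

/-- `ω_D`, so that `(1, ω_D)` is an integral basis of `𝓞(ℚ(√D))`. -/
def omegaD (D : ℤ) : ℝ := if D % 4 = 1 then (1 + Real.sqrt D) / 2 else Real.sqrt D

/-- The Galois conjugate `ω_D′` of `ω_D`. -/
def omegaD' (D : ℤ) : ℝ := if D % 4 = 1 then (1 - Real.sqrt D) / 2 else -(Real.sqrt D)

/-- `ξ_D = -ω_D′`. -/
def xiD (D : ℤ) : ℝ := -omegaD' D

/-- The real embedding of `𝓞 K`, an element `(x, y)` in the integral basis
`(1, ω_D)` being sent to `x + y ω_D`. -/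
def emb (D : ℤ) (a : ℤ × ℤ) : ℝ := a.1 + a.2 * omegaD D

/-- The conjugate real embedding, sending `(x, y)` to `x + y ω_D′`. -/
def embConj (D : ℤ) (a : ℤ × ℤ) : ℝ := a.1 + a.2 * omegaD' D

/-- An element of `𝓞 K` is totally positive if it and its conjugate are positive. -/
def TotPos (D : ℤ) (a : ℤ × ℤ) : Prop := 0 < emb D a ∧ 0 < embConj D a

/-- The partition function `p_K` of `K = ℚ(√D)`: the number of multisets of
totally positive integers of `K` with sum `α`. -/
def pK (D : ℤ) (α : ℤ × ℤ) : ℕ :=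
  Nat.card {m : Multiset (ℤ × ℤ) // (∀ β ∈ m, TotPos D β) ∧ m.sum = α}

end

namespace PKParity

/-- conjugation on `ℤ × ℤ` -/
def conj (β : ℤ × ℤ) : ℤ × ℤ := (β.1, -β.2)

variable {D : ℤ}

lemma sqrtD_gt_one (hD : 2 ≤ D) : 1 < Real.sqrt D := by
  have : (1 : ℝ) < (D : ℝ) := by exact_mod_cast lt_of_lt_of_le (by norm_num) hD
  calc (1:ℝ) = Real.sqrt 1 := (Real.sqrt_one).symm
  _ < Real.sqrt D := Real.sqrt_lt_sqrt (by norm_num) this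

lemma omega_eq (hmod : D % 4 = 2 ∨ D % 4 = 3) : omegaD D = Real.sqrt D := by
  have : ¬ (D % 4 = 1) := by rcases hmod with h | h <;> omega
  simp [omegaD, this]

lemma omega'_eq (hmod : D % 4 = 2 ∨ D % 4 = 3) : omegaD' D = -Real.sqrt D := by
  have : ¬ (D % 4 = 1) := by rcases hmod with h | h <;> omega
  simp [omegaD', this]

lemma totPos_iff (hmod : D % 4 = 2 ∨ D % 4 = 3) (β : ℤ × ℤ) :
    TotPos D β ↔ 0 < (β.1 : ℝ) + β.2 * Real.sqrt D ∧ 0 < (β.1 : ℝ) - β.2 * Real.sqrt D := by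
  unfold TotPos emb embConj
  rw [omega_eq hmod, omega'_eq hmod]
  constructor <;> (rintro ⟨h1, h2⟩; constructor <;> nlinarith)

lemma totPos_conj (hmod : D % 4 = 2 ∨ D % 4 = 3) (β : ℤ × ℤ) :
    TotPos D (conj β) ↔ TotPos D β := by
  rw [totPos_iff hmod, totPos_iff hmod]
  unfold conj
  push_cast
  constructor <;> (rintro ⟨h1, h2⟩; constructor <;> nlinarith)

lemma totPos_fst_pos (hmod : D % 4 = 2 ∨ D % 4 = 3) {β : ℤ × ℤ} (h : TotPos D β) :
    1 ≤ β.1 := by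
  rw [totPos_iff hmod] at h
  have : (0:ℝ) < β.1 := by nlinarith [h.1, h.2]
  have h0 : 0 < β.1 := by exact_mod_cast this
  omega

lemma totPos_abs_snd_lt (hD : 2 ≤ D) (hmod : D % 4 = 2 ∨ D % 4 = 3) {β : ℤ × ℤ}
    (h : TotPos D β) : |β.2| < β.1 := by
  have hs := sqrtD_gt_one hD
  rw [totPos_iff hmod] at h
  have h2 : (|β.2| : ℝ) * Real.sqrt D < β.1 := by
    rcases abs_cases (β.2 : ℝ) with ⟨he, _⟩ | ⟨he, _⟩ <;> rw [he] <;> nlinarith [h.1, h.2]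
  have h3 : (0:ℝ) ≤ (|β.2| : ℝ) := abs_nonneg _
  have h4 : (|β.2| : ℝ) < (β.1 : ℝ) := by nlinarith
  rw [← Int.cast_abs] at h4
  exact_mod_cast h4

lemma totPos_rat (hmod : D % 4 = 2 ∨ D % 4 = 3) (a : ℤ) :
    TotPos D (a, 0) ↔ 1 ≤ a := by
  rw [totPos_iff hmod]
  simp only []
  constructor
  · rintro ⟨h1, _⟩
    simp at h1
    have h0 : 0 < a := by exact_mod_cast h1
    omega
  · intro h
    have : (0:ℝ) < a := by exact_mod_cast lt_of_lt_of_le zero_lt_one (by exact_mod_cast h)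
    constructor <;> simp <;> linarith

end PKParity

namespace PKParity

open Finset Multiset

attribute [local instance] Classical.propDecidable

/-- candidate parts -/
noncomputable def Pn (D : ℤ) (n : ℕ) : Finset (ℤ × ℤ) :=
  ((Finset.Icc 1 (n:ℤ)) ×ˢ (Finset.Icc (-(n:ℤ)) (n:ℤ))).filter (fun β => TotPos D β)

def isPart (D : ℤ) (α : ℤ × ℤ) (m : Multiset (ℤ × ℤ)) : Prop :=
  (∀ β ∈ m, TotPos D β) ∧ m.sum = α

/-- candidate multisets -/
noncomputable def cand (D : ℤ) (n : ℕ) : Finset (Multiset (ℤ × ℤ)) :=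
  (Multiset.powerset ((n : ℕ) • (Pn D n).val)).toFinset

noncomputable def PF (D : ℤ) (n : ℕ) (α : ℤ × ℤ) : Finset (Multiset (ℤ × ℤ)) :=
  (cand D n).filter (isPart D α)

lemma fst_sum (m : Multiset (ℤ × ℤ)) : (m.map Prod.fst).sum = m.sum.1 := by
  induction m using Multiset.induction with
  | empty => simp
  | cons a s ih => simp [ih]

variable {D : ℤ} (hD : 2 ≤ D) (hmod : D % 4 = 2 ∨ D % 4 = 3)

include hmod in
lemma card_le_of_isPart {α : ℤ × ℤ} {m : Multiset (ℤ × ℤ)} (h : isPart D α m) :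
    (Multiset.card m : ℤ) ≤ α.1 := by
  have h1 : ((m.map (fun _ => (1:ℤ))).sum ≤ (m.map Prod.fst).sum) :=
    Multiset.sum_map_le_sum_map _ _ (fun β hβ => totPos_fst_pos hmod (h.1 β hβ))
  rw [fst_sum, h.2] at h1
  simpa using h1

include hD hmod in
lemma mem_Pn_of_isPart {α : ℤ × ℤ} {m : Multiset (ℤ × ℤ)} (h : isPart D α m)
    (hα : α.1 ≤ (n:ℕ)) {γ : ℤ × ℤ} (hγ : γ ∈ m) : γ ∈ Pn D n := by
  have h1 : 1 ≤ γ.1 := totPos_fst_pos hmod (h.1 γ hγ)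
  have h2 : |γ.2| < γ.1 := totPos_abs_snd_lt hD hmod (h.1 γ hγ)
  have h3 : γ.1 ≤ α.1 := by
    have := Multiset.single_le_sum (s := m.map Prod.fst) ?_ γ.1 (Multiset.mem_map_of_mem _ hγ)
    · rwa [fst_sum, h.2] at this
    · intro x hx
      obtain ⟨β, hβ, rfl⟩ := Multiset.mem_map.1 hx
      exact le_trans zero_le_one (totPos_fst_pos hmod (h.1 β hβ))
  simp only [Pn, Finset.mem_filter, Finset.mem_product, Finset.mem_Icc]
  have habs := abs_lt.1 h2
  refine ⟨⟨⟨h1, by omega⟩, by omega, by omega⟩, h.1 γ hγ⟩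

include hD hmod in
lemma mem_cand_of_isPart {α : ℤ × ℤ} {m : Multiset (ℤ × ℤ)} (h : isPart D α m)
    (hα0 : 0 ≤ α.1) (hα : α.1 ≤ (n:ℕ)) : m ∈ cand D n := by
  rw [cand, Multiset.mem_toFinset, Multiset.mem_powerset, Multiset.le_iff_count]
  intro β
  rw [Multiset.count_nsmul]
  by_cases hβ : β ∈ m
  · have hmem : β ∈ (Pn D n).val := mem_Pn_of_isPart hD hmod h hα hβ
    have : Multiset.count β (Pn D n).val = 1 := Multiset.count_eq_one_of_mem (Pn D n).nodup hmem
    rw [this, mul_one]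
    calc Multiset.count β m ≤ Multiset.card m := Multiset.count_le_card _ _
    _ ≤ n := by have := card_le_of_isPart hmod h; omega
  · simp [Multiset.count_eq_zero_of_notMem hβ]

lemma pK_def (α : ℤ × ℤ) : pK D α = Nat.card {m : Multiset (ℤ × ℤ) // isPart D α m} := rfl

include hD hmod in
lemma pK_eq_card {α : ℤ × ℤ} (hα0 : 0 ≤ α.1) (hα : α.1 ≤ (n:ℕ)) :
    pK D α = (PF D n α).card := by
  rw [pK_def]
  have he : ∀ m : Multiset (ℤ × ℤ), isPart D α m ↔ m ∈ PF D n α := by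
    intro m
    rw [PF, Finset.mem_filter]
    exact ⟨fun h => ⟨mem_cand_of_isPart hD hmod h hα0 hα, h⟩, fun h => h.2⟩
  rw [Nat.card_congr (Equiv.subtypeEquivRight he)]
  rw [Nat.card_eq_fintype_card, Fintype.card_coe]

include hmod in
lemma pK_zero_of_neg {α : ℤ × ℤ} (hα : α.1 < 0) : pK D α = 0 := by
  rw [pK_def]
  have : IsEmpty {m : Multiset (ℤ × ℤ) // isPart D α m} := by
    constructor
    rintro ⟨m, hm⟩
    have h1 := card_le_of_isPart hmod hm
    have h2 : (0:ℤ) ≤ Multiset.card m := by positivity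
    omega
  exact Nat.card_of_isEmpty

include hmod in
lemma isPart_zero_eq {α : ℤ × ℤ} (hα : α.1 = 0) {m : Multiset (ℤ × ℤ)}
    (hm : isPart D α m) : m = 0 ∧ α = 0 := by
  have h1 := card_le_of_isPart hmod hm
  have h2 : m = 0 := by
    rw [← Multiset.card_eq_zero]
    omega
  refine ⟨h2, ?_⟩
  rw [← hm.2, h2]
  simp

include hmod in
lemma pK_zero_of_zero_ne {α : ℤ × ℤ} (hα : α.1 = 0) (h2 : α ≠ 0) : pK D α = 0 := by
  rw [pK_def]
  have : IsEmpty {m : Multiset (ℤ × ℤ) // isPart D α m} := by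
    constructor
    rintro ⟨m, hm⟩
    exact h2 (isPart_zero_eq hmod hα hm).2
  exact Nat.card_of_isEmpty

include hmod in
lemma pK_zerozero : pK D (((0:ℤ), (0:ℤ))) = 1 := by
  rw [pK_def]
  haveI : Unique {m : Multiset (ℤ × ℤ) // isPart D ((0:ℤ),(0:ℤ)) m} := by
    refine ⟨⟨⟨0, ?_⟩⟩, ?_⟩
    · constructor
      · intro β hβ; simp at hβ
      · simp; rfl
    · rintro ⟨m, hm⟩
      apply Subtype.ext
      exact (isPart_zero_eq hmod rfl hm).1
  exact Nat.card_unique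

end PKParity

namespace PKParity

open Finset Multiset

attribute [local instance] Classical.propDecidable

variable {D : ℤ}

lemma conj_conj (β : ℤ × ℤ) : conj (conj β) = β := by simp [conj]

lemma conj_add (β γ : ℤ × ℤ) : conj (β + γ) = conj β + conj γ := by
  simp [conj, Prod.ext_iff]; ring

lemma conj_sum (m : Multiset (ℤ × ℤ)) : (m.map conj).sum = conj m.sum := by
  induction m using Multiset.induction with
  | empty => simp [conj]; rfl
  | cons a s ih => simp [ih, conj_add]

lemma pK_conj (hmod : D % 4 = 2 ∨ D % 4 = 3) (α : ℤ × ℤ) :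
    pK D (conj α) = pK D α := by
  rw [pK_def, pK_def]
  apply Nat.card_congr
  refine ⟨fun m => ⟨m.1.map conj, ?_, ?_⟩, fun m => ⟨m.1.map conj, ?_, ?_⟩, ?_, ?_⟩
  · intro β hβ
    obtain ⟨γ, hγ, rfl⟩ := Multiset.mem_map.1 hβ
    exact (totPos_conj hmod γ).2 (m.2.1 γ hγ)
  · rw [conj_sum, m.2.2, conj_conj]
  · intro β hβ
    obtain ⟨γ, hγ, rfl⟩ := Multiset.mem_map.1 hβ
    exact (totPos_conj hmod γ).2 (m.2.1 γ hγ)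
  · rw [conj_sum, m.2.2]
  · rintro ⟨m, hm⟩
    apply Subtype.ext
    simp [Multiset.map_map, Function.comp, conj_conj]
  · rintro ⟨m, hm⟩
    apply Subtype.ext
    simp [Multiset.map_map, Function.comp, conj_conj]

lemma fst_sum_nonneg (hmod : D % 4 = 2 ∨ D % 4 = 3) {m : Multiset (ℤ × ℤ)}
    (h : ∀ β ∈ m, TotPos D β) : 0 ≤ (m.map Prod.fst).sum := by
  apply Multiset.sum_nonneg
  intro x hx
  obtain ⟨β, hβ, rfl⟩ := Multiset.mem_map.1 hx
  exact le_trans zero_le_one (totPos_fst_pos hmod (h β hβ))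

/-- the `k`-th shifted target -/
def shift (n : ℕ) (k : ℕ) (β : ℤ × ℤ) : ℤ × ℤ := ((n:ℤ) - (k:ℤ) * β.1, -((k:ℤ) * β.2))

lemma shift_eq (n k : ℕ) (β : ℤ × ℤ) : ((n:ℤ), (0:ℤ)) - k • β = shift n k β := by
  rw [Prod.ext_iff]
  constructor
  · show (n:ℤ) - (k • β).1 = (n:ℤ) - (k:ℤ) * β.1
    rw [Prod.smul_fst, nsmul_eq_mul]
  · show (0:ℤ) - (k • β).2 = -((k:ℤ) * β.2)
    rw [Prod.smul_snd, nsmul_eq_mul]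
    ring

lemma shift_add (n k : ℕ) (β : ℤ × ℤ) : shift n k β + k • β = ((n:ℤ), (0:ℤ)) := by
  rw [← shift_eq]; abel

lemma card_filter_count (hD : 2 ≤ D) (hmod : D % 4 = 2 ∨ D % 4 = 3) (n : ℕ)
    {β : ℤ × ℤ} (hβ : β ∈ Pn D n) {k : ℕ} (hk : 1 ≤ k) :
    ((PF D n ((n:ℤ), 0)).filter (fun m => k ≤ m.count β)).card
      = pK D (shift n k β) := by
  have hβP : TotPos D β := (Finset.mem_filter.1 hβ).2
  have hβ1 : 1 ≤ β.1 := totPos_fst_pos hmod hβP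
  by_cases hle : (k:ℤ) * β.1 ≤ (n:ℤ)
  · -- bijection case
    have hα0 : 0 ≤ (shift n k β).1 := by simp [shift]; omega
    have hα1 : (shift n k β).1 ≤ (n:ℕ) := by
      simp [shift]
      nlinarith [Int.ofNat_zero_le k]
    rw [pK_eq_card hD hmod hα0 hα1 (n := n)]
    apply Finset.card_bij' (fun m _ => m - Multiset.replicate k β)
      (fun m' _ => m' + Multiset.replicate k β)
    · -- maps into PF (shift)
      intro m hm
      rw [Finset.mem_filter] at hm
      obtain ⟨hmPF, hcount⟩ := hm
      rw [PF, Finset.mem_filter] at hmPF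
      obtain ⟨hcand, hpart⟩ := hmPF
      have hrep : Multiset.replicate k β ≤ m := by
        rw [Multiset.le_iff_count]
        intro γ
        rw [Multiset.count_replicate]
        split
        · next h => subst h; exact hcount
        · omega
      have hsplit : (m - Multiset.replicate k β) + Multiset.replicate k β = m :=
        tsub_add_cancel_of_le hrep
      rw [PF, Finset.mem_filter]
      have hpart' : isPart D (shift n k β) (m - Multiset.replicate k β) := by
        constructor
        · intro γ hγ
          exact hpart.1 γ (Multiset.mem_of_le (Multiset.sub_le_self _ _) hγ)
        · have := congrArg Multiset.sum hsplit
          rw [Multiset.sum_add, Multiset.sum_replicate, hpart.2] at this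
          have h2 : (m - Multiset.replicate k β).sum = ((n:ℤ), (0:ℤ)) - k • β := by
            rw [← this]; abel
          rw [h2, shift_eq]
      refine ⟨?_, hpart'⟩
      exact mem_cand_of_isPart hD hmod hpart' hα0 hα1
    · -- maps back into filter
      intro m' hm'
      rw [PF, Finset.mem_filter] at hm'
      obtain ⟨hcand', hpart'⟩ := hm'
      have hpart : isPart D ((n:ℤ), 0) (m' + Multiset.replicate k β) := by
        constructor
        · intro γ hγ
          rcases Multiset.mem_add.1 hγ with h | h
          · exact hpart'.1 γ h
          · rw [Multiset.eq_of_mem_replicate h]; exact hβP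
        · rw [Multiset.sum_add, Multiset.sum_replicate, hpart'.2, shift_add]
      rw [Finset.mem_filter, PF, Finset.mem_filter]
      refine ⟨⟨mem_cand_of_isPart hD hmod hpart (by simp) (by simp), hpart⟩, ?_⟩
      rw [Multiset.count_add, Multiset.count_replicate, if_pos rfl]
      omega
    · intro m hm
      rw [Finset.mem_filter] at hm
      apply tsub_add_cancel_of_le
      rw [Multiset.le_iff_count]
      intro γ
      rw [Multiset.count_replicate]
      split
      · next h => subst h; exact hm.2
      · omega
    · intro m' _
      exact add_tsub_cancel_right _ _
  · -- empty case
    have hneg : (shift n k β).1 < 0 := by simp [shift]; omega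
    rw [pK_zero_of_neg hmod hneg]
    rw [Finset.card_eq_zero, Finset.filter_eq_empty_iff]
    intro m hm
    rw [PF, Finset.mem_filter] at hm
    obtain ⟨hcand, hpart⟩ := hm
    intro hcount
    have hrep : Multiset.replicate k β ≤ m := by
      rw [Multiset.le_iff_count]
      intro γ
      rw [Multiset.count_replicate]
      split
      · next h => subst h; exact hcount
      · omega
    have hsplit : (m - Multiset.replicate k β) + Multiset.replicate k β = m :=
      tsub_add_cancel_of_le hrep
    have h1 : ((m - Multiset.replicate k β).map Prod.fst).sum ≥ 0 :=
      fst_sum_nonneg hmod (fun γ hγ =>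
        hpart.1 γ (Multiset.mem_of_le (Multiset.sub_le_self _ _) hγ))
    have h2 := congrArg (fun s => (Multiset.map Prod.fst s).sum) hsplit
    simp only [Multiset.map_add, Multiset.sum_add, Multiset.map_replicate,
      Multiset.sum_replicate] at h2
    rw [fst_sum (m - Multiset.replicate k β), fst_sum m, hpart.2] at h2
    simp only [nsmul_eq_mul] at h2
    rw [fst_sum] at h1
    linarith

end PKParity

namespace PKParity

open Finset Multiset

attribute [local instance] Classical.propDecidable

variable {D : ℤ}

lemma layer_cake (n : ℕ) (β : ℤ × ℤ) (S : Finset (Multiset (ℤ × ℤ)))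
    (hc : ∀ m ∈ S, m.count β ≤ n) :
    ∑ m ∈ S, m.count β = ∑ k ∈ Finset.Icc 1 n, (S.filter (fun m => k ≤ m.count β)).card := by
  have h1 : ∀ m ∈ S, m.count β = ((Finset.Icc 1 n).filter (fun k => k ≤ m.count β)).card := by
    intro m hm
    have : (Finset.Icc 1 n).filter (fun k => k ≤ m.count β) = Finset.Icc 1 (m.count β) := by
      ext k
      simp only [Finset.mem_filter, Finset.mem_Icc]
      have := hc m hm
      omega
    rw [this, Nat.card_Icc]
    omega
  rw [Finset.sum_congr rfl h1]
  simp only [Finset.card_filter]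
  rw [Finset.sum_comm]

theorem star (hD : 2 ≤ D) (hmod : D % 4 = 2 ∨ D % 4 = 3) (n : ℕ) :
    (n:ℤ) * (pK D ((n:ℤ), 0) : ℤ)
      = ∑ β ∈ Pn D n, β.1 * ∑ k ∈ Finset.Icc 1 n, (pK D (shift n k β) : ℤ) := by
  have hα0 : (0:ℤ) ≤ (((n:ℤ), (0:ℤ)) : ℤ × ℤ).1 := by simp
  have hα1 : (((n:ℤ), (0:ℤ)) : ℤ × ℤ).1 ≤ (n:ℕ) := by simp
  rw [pK_eq_card hD hmod hα0 hα1 (n := n)]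
  set S := PF D n ((n:ℤ), 0) with hS
  have hmemS : ∀ m ∈ S, isPart D ((n:ℤ), 0) m := by
    intro m hm
    exact (Finset.mem_filter.1 hm).2
  have step1 : (n:ℤ) * (S.card : ℤ) = ∑ m ∈ S, ((m.map Prod.fst).sum) := by
    rw [Finset.sum_congr rfl (fun m hm => by
      rw [fst_sum, (hmemS m hm).2])]
    rw [Finset.sum_const, nsmul_eq_mul]
    ring
  have step2 : ∀ m ∈ S, (m.map Prod.fst).sum = ∑ β ∈ Pn D n, (m.count β : ℤ) * β.1 := by
    intro m hm
    rw [Finset.sum_multiset_map_count]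
    have hsub : m.toFinset ⊆ Pn D n :=
      fun γ hγ => mem_Pn_of_isPart hD hmod (hmemS m hm) hα1 (Multiset.mem_toFinset.1 hγ)
    rw [Finset.sum_subset hsub]
    · exact Finset.sum_congr rfl (fun β _ => by rw [nsmul_eq_mul])
    · intro β _ hβ
      rw [Multiset.count_eq_zero_of_notMem (fun h => hβ (Multiset.mem_toFinset.2 h))]
      simp
  have hcount_le : ∀ β : ℤ × ℤ, ∀ m ∈ S, m.count β ≤ n := by
    intro β m hm
    have h1 := card_le_of_isPart hmod (hmemS m hm)
    have h2 := Multiset.count_le_card β m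
    simp only at h1
    omega
  calc (n:ℤ) * (S.card : ℤ) = ∑ m ∈ S, ((m.map Prod.fst).sum) := step1
    _ = ∑ m ∈ S, ∑ β ∈ Pn D n, (m.count β : ℤ) * β.1 := Finset.sum_congr rfl step2
    _ = ∑ β ∈ Pn D n, ∑ m ∈ S, (m.count β : ℤ) * β.1 := Finset.sum_comm
    _ = ∑ β ∈ Pn D n, β.1 * ∑ k ∈ Finset.Icc 1 n, (pK D (shift n k β) : ℤ) := by
        apply Finset.sum_congr rfl
        intro β hβ
        rw [← Finset.sum_mul, mul_comm]
        congr 1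
        have hnat : ∑ m ∈ S, m.count β
            = ∑ k ∈ Finset.Icc 1 n, (S.filter (fun m => k ≤ m.count β)).card :=
          layer_cake n β S (hcount_le β)
        have : (∑ m ∈ S, (m.count β : ℤ)) = ((∑ m ∈ S, m.count β : ℕ) : ℤ) := by
          push_cast
          rfl
        rw [this, hnat]
        push_cast
        apply Finset.sum_congr rfl
        intro k hk
        rw [Finset.mem_Icc] at hk
        rw [card_filter_count hD hmod n hβ hk.1]

end PKParity

namespace PKParity

open Finset Multiset

attribute [local instance] Classical.propDecidable

variable {D : ℤ}

lemma zmod_odd {d : ℕ} (h : Odd d) : ((d:ℕ) : ZMod 2) = 1 := by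
  obtain ⟨j, rfl⟩ := h
  push_cast
  have : (2 : ZMod 2) = 0 := by decide
  rw [this]
  ring

lemma zmod_even {d : ℕ} (h : Even d) : ((d:ℕ) : ZMod 2) = 0 := by
  rw [ZMod.natCast_eq_zero_iff]
  exact even_iff_two_dvd.1 h

/-- parity of the partition function at rational integers -/
noncomputable def pi2 (D : ℤ) (j : ℕ) : ZMod 2 := ((pK D ((j:ℤ), 0) : ℕ) : ZMod 2)

/-- parity of the number of odd divisors -/
noncomputable def del2 (m : ℕ) : ZMod 2 :=
  ((((m).divisors.filter (fun d => Odd d)).card : ℕ) : ZMod 2)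

lemma del2_eq_sum (m : ℕ) : del2 m = ∑ d ∈ m.divisors, ((d:ℕ) : ZMod 2) := by
  rw [del2]
  rw [Finset.card_filter]
  push_cast
  apply Finset.sum_congr rfl
  intro d _
  by_cases h : Odd d
  · rw [if_pos h, zmod_odd h]
  · rw [if_neg h, zmod_even (Nat.not_odd_iff_even.1 h)]

theorem key_congruence (hD : 2 ≤ D) (hmod : D % 4 = 2 ∨ D % 4 = 3) (n : ℕ) :
    ((n:ℕ) : ZMod 2) * pi2 D n = ∑ m ∈ Finset.Icc 1 n, del2 m * pi2 D (n - m) := by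
  -- cast the star identity into ZMod 2
  have hstar := congrArg (fun z : ℤ => (z : ZMod 2)) (star hD hmod n)
  simp only [Int.cast_mul, Int.cast_natCast] at hstar
  rw [Int.cast_sum] at hstar
  -- LHS matches
  rw [show ((n:ℕ) : ZMod 2) * pi2 D n
      = ((n:ℕ) : ZMod 2) * ((pK D ((n:ℤ),0) : ℕ) : ZMod 2) from rfl]
  rw [hstar]
  -- now handle the RHS
  set f : (ℤ × ℤ) → ZMod 2 :=
    fun β => ((β.1 : ℤ) : ZMod 2) * ∑ k ∈ Finset.Icc 1 n, ((pK D (shift n k β) : ℕ) : ZMod 2)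
    with hf
  have hcast : ∀ β ∈ Pn D n,
      ((β.1 * ∑ k ∈ Finset.Icc 1 n, (pK D (shift n k β) : ℤ) : ℤ) : ZMod 2) = f β := by
    intro β _
    rw [hf]
    push_cast
    rfl
  rw [Finset.sum_congr rfl hcast]
  -- split off the conjugation-cancelling part
  rw [← Finset.sum_filter_add_sum_filter_not (Pn D n) (fun β => β.2 = 0) f]
  have hcancel : ∑ β ∈ (Pn D n).filter (fun β => ¬ β.2 = 0), f β = 0 := by
    apply Finset.sum_involution (fun β _ => conj β)
    · intro β hβ
      have hfc : f (conj β) = f β := by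
        show (((conj β).1 : ℤ) : ZMod 2)
              * ∑ k ∈ Finset.Icc 1 n, ((pK D (shift n k (conj β)) : ℕ) : ZMod 2)
            = ((β.1 : ℤ) : ZMod 2)
              * ∑ k ∈ Finset.Icc 1 n, ((pK D (shift n k β) : ℕ) : ZMod 2)
        congr 1
        apply Finset.sum_congr rfl
        intro k _
        have hsh : shift n k (conj β) = conj (shift n k β) := by
          simp [shift, conj, Prod.ext_iff]
        rw [hsh, pK_conj hmod]
      rw [hfc, CharTwo.add_self_eq_zero]
    · intro β hβ _
      rw [Finset.mem_filter] at hβ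
      intro hc
      apply hβ.2
      have : -β.2 = β.2 := congrArg Prod.snd hc
      omega
    · intro β hβ
      rw [Finset.mem_filter] at hβ ⊢
      obtain ⟨hβP, hβ2⟩ := hβ
      refine ⟨?_, by simpa [conj] using hβ2⟩
      rw [Pn, Finset.mem_filter] at hβP ⊢
      obtain ⟨hbox, htp⟩ := hβP
      rw [Finset.mem_product] at hbox
      obtain ⟨hb1, hb2⟩ := hbox
      rw [Finset.mem_Icc] at hb2
      refine ⟨Finset.mem_product.2 ⟨hb1, ?_⟩, (totPos_conj hmod β).2 htp⟩
      show (conj β).2 ∈ Finset.Icc (-(n:ℤ)) (n:ℤ)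
      rw [Finset.mem_Icc]
      simp only [conj]
      omega
    · intro β _
      exact conj_conj β
  rw [hcancel, add_zero]
  -- now the diagonal part
  have himg : (Pn D n).filter (fun β => β.2 = 0)
      = (Finset.Icc 1 n).image (fun a : ℕ => ((a:ℤ), (0:ℤ))) := by
    ext β
    simp only [Finset.mem_filter, Finset.mem_image, Pn, Finset.mem_product, Finset.mem_Icc]
    constructor
    · rintro ⟨⟨⟨h1, h2⟩, _⟩, h3⟩
      refine ⟨β.1.toNat, ?_, ?_⟩
      · omega
      · rw [Prod.ext_iff]
        constructor
        · simp; omega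
        · simp [h3.symm]
    · rintro ⟨a, ha, rfl⟩
      refine ⟨⟨⟨by omega, by omega⟩, ?_⟩, rfl⟩
      exact (totPos_rat hmod _).2 (by omega)
  rw [himg, Finset.sum_image (by intro a _ b _ h; simpa using congrArg Prod.fst h)]
  -- f at rational parts
  have hfr : ∀ a ∈ Finset.Icc 1 n, f ((a:ℤ), (0:ℤ))
      = ∑ k ∈ Finset.Icc 1 n, ((a:ℕ) : ZMod 2) * ((pK D ((n:ℤ) - (a*k : ℕ), 0) : ℕ) : ZMod 2) := by
    intro a _
    show (((((a:ℤ), (0:ℤ)) : ℤ × ℤ).1 : ℤ) : ZMod 2)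
        * ∑ k ∈ Finset.Icc 1 n, ((pK D (shift n k ((a:ℤ), (0:ℤ))) : ℕ) : ZMod 2) = _
    rw [Finset.mul_sum]
    apply Finset.sum_congr rfl
    intro k _
    have : shift n k ((a:ℤ), (0:ℤ)) = ((n:ℤ) - (a*k:ℕ), 0) := by
      simp [shift, Prod.ext_iff]
      push_cast
      ring
    rw [this]
    norm_cast
  rw [Finset.sum_congr rfl hfr]
  -- reindex over products of divisors
  rw [← Finset.sum_product']
  have hsplit := Finset.sum_filter_add_sum_filter_not
    ((Finset.Icc 1 n) ×ˢ (Finset.Icc 1 n)) (fun p : ℕ × ℕ => p.1 * p.2 ≤ n)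
    (fun p : ℕ × ℕ => ((p.1:ℕ) : ZMod 2) * ((pK D ((n:ℤ) - (p.1*p.2 : ℕ), 0) : ℕ) : ZMod 2))
  rw [← hsplit]
  have hzero : ∑ p ∈ ((Finset.Icc 1 n) ×ˢ (Finset.Icc 1 n)).filter
      (fun p : ℕ × ℕ => ¬ p.1 * p.2 ≤ n),
      ((p.1:ℕ) : ZMod 2) * ((pK D ((n:ℤ) - (p.1*p.2 : ℕ), 0) : ℕ) : ZMod 2) = 0 := by
    apply Finset.sum_eq_zero
    intro p hp
    rw [Finset.mem_filter] at hp
    have : pK D ((n:ℤ) - (p.1*p.2 : ℕ), 0) = 0 := by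
      apply pK_zero_of_neg hmod
      have := hp.2
      simp only []
      omega
    rw [this]
    push_cast
    ring
  rw [hzero, add_zero]
  -- bijection with sigma of divisors
  rw [Finset.sum_congr rfl (g := fun m : ℕ => ∑ d ∈ m.divisors, ((d:ℕ) : ZMod 2) * pi2 D (n - m))
    (fun m _ => by rw [del2_eq_sum, Finset.sum_mul])]
  rw [Finset.sum_sigma']
  apply Finset.sum_nbij' (fun p : ℕ × ℕ => (⟨p.1*p.2, p.1⟩ : Σ _ : ℕ, ℕ))
    (fun q : Σ _ : ℕ, ℕ => (q.2, q.1 / q.2))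
  · intro p hp
    rw [Finset.mem_filter, Finset.mem_product, Finset.mem_Icc, Finset.mem_Icc] at hp
    rw [Finset.mem_sigma, Finset.mem_Icc, Nat.mem_divisors]
    refine ⟨⟨by nlinarith [hp.1.1.1, hp.1.2.1], hp.2⟩, ⟨p.2, rfl⟩, by nlinarith [hp.1.1.1, hp.1.2.1]⟩
  · intro q hq
    rw [Finset.mem_sigma, Finset.mem_Icc, Nat.mem_divisors] at hq
    rw [Finset.mem_filter, Finset.mem_product, Finset.mem_Icc, Finset.mem_Icc]
    obtain ⟨⟨hq1, hq2⟩, ⟨c, hc⟩, hq0⟩ := hq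
    have hd1 : 1 ≤ q.2 := by
      rcases Nat.eq_zero_or_pos q.2 with h | h
      · exfalso; apply hq0; rw [hc, h]; ring
      · exact h
    have hc1 : 1 ≤ c := by
      rcases Nat.eq_zero_or_pos c with h | h
      · exfalso; apply hq0; rw [hc, h]; ring
      · exact h
    have hdiv : q.1 / q.2 = c := by rw [hc]; exact Nat.mul_div_cancel_left c hd1
    refine ⟨⟨⟨hd1, ?_⟩, ?_⟩, ?_⟩
    · calc q.2 ≤ q.2 * c := Nat.le_mul_of_pos_right _ hc1
      _ = q.1 := hc.symm
      _ ≤ n := hq2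
    · rw [hdiv]
      constructor
      · exact hc1
      · calc c ≤ q.2 * c := Nat.le_mul_of_pos_left _ hd1
        _ = q.1 := hc.symm
        _ ≤ n := hq2
    · rw [hdiv, ← hc]; exact hq2
  · intro p hp
    rw [Finset.mem_filter, Finset.mem_product, Finset.mem_Icc, Finset.mem_Icc] at hp
    have : p.1 * p.2 / p.1 = p.2 := Nat.mul_div_cancel_left _ (by omega)
    simp [this]
  · intro q hq
    rw [Finset.mem_sigma, Finset.mem_Icc, Nat.mem_divisors] at hq
    obtain ⟨⟨hq1, hq2⟩, ⟨c, hc⟩, hq0⟩ := hq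
    have hd1 : 1 ≤ q.2 := by
      rcases Nat.eq_zero_or_pos q.2 with h | h
      · exfalso; apply hq0; rw [hc, h]; ring
      · exact h
    have : q.2 * (q.1 / q.2) = q.1 := Nat.mul_div_cancel' ⟨c, hc⟩
    exact Sigma.ext (by simpa using this) (by simp)
  · intro p hp
    rw [Finset.mem_filter] at hp
    rw [pi2]
    congr 2
    have : ((n - p.1*p.2 : ℕ) : ℤ) = (n:ℤ) - (p.1*p.2 : ℕ) := by
      have := hp.2
      omega
    rw [this]

end PKParity

namespace PKParity

open Finset

variable {D : ℤ}

lemma pi2_zero (hmod : D % 4 = 2 ∨ D % 4 = 3) : pi2 D 0 = 1 := by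
  rw [pi2]
  rw [show (((0:ℕ):ℤ), (0:ℤ)) = (((0:ℤ)), (0:ℤ)) by norm_num]
  rw [pK_zerozero hmod]
  norm_num

/-- Δ function: partial sums of `del2` -/
noncomputable def Del (t : ℕ) : ZMod 2 := ∑ m ∈ Finset.Icc 1 t, del2 m

lemma Icc_eq_Ioc (t : ℕ) : Finset.Icc 1 t = Finset.Ioc 0 t := by
  ext x; simp [Finset.mem_Icc, Finset.mem_Ioc]; omega

/-- common part of both branches: splitting the key congruence -/
lemma key_split (hD : 2 ≤ D) (hmod : D % 4 = 2 ∨ D % 4 = 3) {N M : ℕ} (hN : 1 ≤ N)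
    (hM : N + 1 ≤ M) :
    ((M:ℕ) : ZMod 2) * pi2 D M
      = (∑ m ∈ Finset.Icc 1 (M - N), del2 m * pi2 D (M - m))
        + (del2 M * pi2 D 0
            + ∑ i ∈ Finset.range (N-1), del2 (M - (i+1)) * pi2 D (i+1)) := by
  rw [key_congruence hD hmod M, Icc_eq_Ioc M, Icc_eq_Ioc (M - N)]
  rw [← Finset.sum_Ioc_consecutive (fun m => del2 m * pi2 D (M - m))
    (by omega : 0 ≤ M - N) (by omega : M - N ≤ M)]
  congr 1
  · -- reindex m ↦ M - m
    have hbij : ∑ m ∈ Finset.Ioc (M - N) M, del2 m * pi2 D (M - m)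
        = ∑ j ∈ Finset.range N, del2 (M - j) * pi2 D j := by
      apply Finset.sum_nbij' (fun m => M - m) (fun j => M - j)
      · intro m hm
        rw [Finset.mem_Ioc] at hm
        rw [Finset.mem_range]
        omega
      · intro j hj
        rw [Finset.mem_range] at hj
        rw [Finset.mem_Ioc]
        omega
      · intro m hm
        rw [Finset.mem_Ioc] at hm
        omega
      · intro j hj
        rw [Finset.mem_range] at hj
        omega
      · intro m hm
        rw [Finset.mem_Ioc] at hm
        have : M - (M - m) = m := by omega
        rw [this]
    rw [hbij]
    -- split off j = 0
    have hN' : N = (N - 1) + 1 := by omega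
    rw [hN', Finset.sum_range_succ']
    rw [Nat.sub_zero]
    exact add_comm _ _

/-- the unified eventual recurrence for `del2`, with `C = 0` in the eventually-even
branch and `C = 1` in the eventually-odd branch. -/
lemma branch_recurrence (hD : 2 ≤ D) (hmod : D % 4 = 2 ∨ D % 4 = 3) {N : ℕ} (hN : 1 ≤ N)
    {C : ZMod 2} (hbr : ∀ j, N ≤ j → pi2 D j = C) :
    ∀ M, N + 1 ≤ M → del2 M
      = C * ((M:ℕ) : ZMod 2) + C * Del (M - N)
        + ∑ i ∈ Finset.range (N-1), pi2 D (i+1) * del2 (M - (i+1)) := by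
  intro M hM
  have hsplit := key_split hD hmod hN hM
  have h1 : ∀ m ∈ Finset.Icc 1 (M - N), del2 m * pi2 D (M - m) = del2 m * C := by
    intro m hm
    rw [Finset.mem_Icc] at hm
    rw [hbr (M - m) (by omega)]
  rw [Finset.sum_congr rfl h1] at hsplit
  rw [hbr M (by omega), pi2_zero hmod, mul_one] at hsplit
  -- hsplit : M * C = (∑ del2 m * C) + (del2 M + ∑ ...)
  have h2 : (∑ m ∈ Finset.Icc 1 (M - N), del2 m * C) = C * Del (M - N) := by
    rw [Del, ← Finset.sum_mul]
    ring
  rw [h2] at hsplit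
  -- char-2 rearrangement
  have hS : ∑ i ∈ Finset.range (N-1), pi2 D (i+1) * del2 (M - (i+1))
      = ∑ i ∈ Finset.range (N-1), del2 (M - (i+1)) * pi2 D (i+1) :=
    Finset.sum_congr rfl (fun i _ => mul_comm _ _)
  rw [hS]
  have heq : ∀ x y : ZMod 2, x + y = 0 → x = y := by
    intro x y h
    have h1 : x = -y := eq_neg_of_add_eq_zero_left h
    rwa [CharTwo.neg_eq] at h1
  apply heq
  have h0 : ((M:ℕ) : ZMod 2) * C + (C * Del (M - N)
      + (del2 M + ∑ i ∈ Finset.range (N-1), del2 (M - (i+1)) * pi2 D (i+1))) = 0 := by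
    nth_rewrite 1 [hsplit]
    exact CharTwo.add_self_eq_zero _
  linear_combination h0

end PKParity

namespace PKParity

open Finset

lemma Del_succ (t : ℕ) : Del (t+1) = Del t + del2 (t+1) := by
  rw [Del, Del, Finset.sum_Icc_succ_top (by omega : 1 ≤ t+1)]

lemma eventually_periodic {N : ℕ} (hN : 1 ≤ N) (C : ZMod 2) (coef : ℕ → ZMod 2)
    (hrec : ∀ M, N + 1 ≤ M → del2 M = C * ((M:ℕ) : ZMod 2) + C * Del (M - N)
      + ∑ i ∈ Finset.range (N-1), coef (i+1) * del2 (M - (i+1))) :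
    ∃ p, 1 ≤ p ∧ ∃ T, ∀ n, T ≤ n → del2 (n + p) = del2 n := by
  classical
  set B := N + 1 with hB
  set Φ : ℕ → ((Fin N → ZMod 2) × (ZMod 2 × ZMod 2)) :=
    fun i => (fun j => del2 (B + i + (j : ℕ)), (Del (B + i), ((B + i : ℕ) : ZMod 2))) with hΦdef
  obtain ⟨a, b, hab, hΦab⟩ := Finite.exists_ne_map_eq_of_infinite Φ
  -- order them
  obtain ⟨i1, i2, h12, hΦ⟩ : ∃ i1 i2, i1 < i2 ∧ Φ i1 = Φ i2 := by
    rcases lt_or_gt_of_ne hab with h | h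
    · exact ⟨a, b, h, hΦab⟩
    · exact ⟨b, a, h, hΦab.symm⟩
  set n1 := B + i1 with hn1
  set n2 := B + i2 with hn2
  have hw : ∀ j : Fin N, del2 (n1 + (j:ℕ)) = del2 (n2 + (j:ℕ)) := by
    intro j
    exact congrFun (congrArg Prod.fst hΦ) j
  have hΔ : Del n1 = Del n2 := congrArg (fun q => q.2.1) hΦ
  have hpar : ((n1 : ℕ) : ZMod 2) = ((n2 : ℕ) : ZMod 2) := congrArg (fun q => q.2.2) hΦ
  -- Del propagation
  have hDel : ∀ u, (∀ v, v ≤ u → del2 (n1 + v) = del2 (n2 + v)) → Del (n1 + u) = Del (n2 + u) := by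
    intro u
    induction u with
    | zero => intro _; simpa using hΔ
    | succ u ihu =>
      intro hv
      rw [show n1 + (u+1) = (n1 + u) + 1 by omega, show n2 + (u+1) = (n2 + u) + 1 by omega]
      rw [Del_succ, Del_succ]
      rw [ihu (fun v hvu => hv v (by omega))]
      rw [show (n1 + u) + 1 = n1 + (u+1) by omega, show (n2 + u) + 1 = n2 + (u+1) by omega]
      rw [hv (u+1) (le_refl _)]
  -- main strong induction
  have hP : ∀ t, del2 (n1 + t) = del2 (n2 + t) := by
    intro t
    induction t using Nat.strong_induction_on with
    | _ t ih =>
      by_cases ht : t < N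
      · exact hw ⟨t, ht⟩
      · push_neg at ht
        have h1 := hrec (n1 + t) (by omega)
        have h2 := hrec (n2 + t) (by omega)
        rw [h1, h2]
        have e1 : ((n1 + t : ℕ) : ZMod 2) = ((n2 + t : ℕ) : ZMod 2) := by
          push_cast
          rw [show ((n1 : ℕ) : ZMod 2) = ((n2 : ℕ) : ZMod 2) from hpar]
        have e2 : Del (n1 + t - N) = Del (n2 + t - N) := by
          rw [show n1 + t - N = n1 + (t - N) by omega, show n2 + t - N = n2 + (t - N) by omega]
          exact hDel (t - N) (fun v hv => ih v (by omega))
        have e3 : ∑ i ∈ Finset.range (N-1), coef (i+1) * del2 (n1 + t - (i+1))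
            = ∑ i ∈ Finset.range (N-1), coef (i+1) * del2 (n2 + t - (i+1)) := by
          apply Finset.sum_congr rfl
          intro i hi
          rw [Finset.mem_range] at hi
          rw [show n1 + t - (i+1) = n1 + (t - (i+1)) by omega,
            show n2 + t - (i+1) = n2 + (t - (i+1)) by omega]
          rw [ih (t - (i+1)) (by omega)]
        rw [e1, e2, e3]
  refine ⟨i2 - i1, by omega, n1, ?_⟩
  intro n hn
  have h := (hP (n - n1)).symm
  rwa [show n1 + (n - n1) = n by omega, show n2 + (n - n1) = n + (i2 - i1) by omega] at h

end PKParity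

namespace PKParity

open Finset

lemma del2_pow3 (i : ℕ) : del2 (3 ^ (2*i)) = 1 := by
  have h3 : Nat.Prime 3 := by norm_num
  have hodd : ∀ d ∈ (3 ^ (2*i)).divisors, Odd d := by
    intro d hd
    obtain ⟨e, _, rfl⟩ := (Nat.dvd_prime_pow h3).1 (Nat.mem_divisors.1 hd).1
    exact Odd.pow (⟨1, by norm_num⟩ : Odd 3)
  rw [del2, Finset.filter_true_of_mem hodd]
  rw [Nat.divisors_prime_pow h3]
  rw [Finset.card_map, Finset.card_range]
  exact zmod_odd ⟨i, by ring⟩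

lemma isSquare_of_del2 {m : ℕ} (hm0 : 0 < m) (hmodd : Odd m) (h : del2 m = 1) :
    IsSquare m := by
  by_contra hns
  have hodd : ∀ d ∈ m.divisors, Odd d := by
    intro d hd
    rcases Nat.even_or_odd d with he | ho
    · exfalso
      have h2 : (2:ℕ) ∣ m := dvd_trans he.two_dvd (Nat.mem_divisors.1 hd).1
      rw [← Nat.not_even_iff_odd] at hmodd
      exact hmodd ((even_iff_two_dvd).2 h2)
    · exact ho
  rw [del2, Finset.filter_true_of_mem hodd] at h
  have hsum : ∑ _d ∈ m.divisors, (1 : ZMod 2) = 0 := by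
    apply Finset.sum_involution (fun d _ => m / d)
    · intro d _
      exact CharTwo.add_self_eq_zero 1
    · intro d hd _
      intro hc
      apply hns
      have hdvd : d ∣ m := (Nat.mem_divisors.1 hd).1
      have hmul : d * (m / d) = m := Nat.mul_div_cancel' hdvd
      rw [hc] at hmul
      exact ⟨d, hmul.symm⟩
    · intro d hd
      rw [Nat.mem_divisors] at hd ⊢
      exact ⟨Nat.div_dvd_of_dvd hd.1, hd.2⟩
    · intro d hd
      exact Nat.div_div_self (Nat.mem_divisors.1 hd).1 (by omega)
  rw [Finset.sum_const, nsmul_eq_mul, mul_one] at hsum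
  rw [h] at hsum
  exact one_ne_zero hsum

lemma no_AP (A B : ℕ) (hA : 1 ≤ A) (hB : 1 ≤ B) (h : ∀ j, IsSquare (A + j * B)) :
    False := by
  obtain ⟨x, hx⟩ := h B
  obtain ⟨y, hy⟩ := h (B + 1)
  have h1 : y * y = x * x + B := by nlinarith [hx, hy]
  have hxB : B < x := by
    by_contra hc
    push_neg at hc
    have := Nat.mul_le_mul hc hc
    linarith
  have hxy : x < y := by
    by_contra hc
    push_neg at hc
    have := Nat.mul_le_mul hc hc
    linarith
  have h2 : (x+1)*(x+1) ≤ y*y := Nat.mul_le_mul (by omega) (by omega)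
  nlinarith

lemma no_periodic (p T : ℕ) (hp : 1 ≤ p) (hper : ∀ n, T ≤ n → del2 (n + p) = del2 n) :
    False := by
  set n₀ := 3 ^ (2 * (T + 1)) with hn0
  have hT : T ≤ n₀ := by
    calc T ≤ T + 1 := by omega
    _ ≤ 3 ^ (T+1) := Nat.le_of_lt (Nat.lt_pow_self (by norm_num))
    _ ≤ 3 ^ (2*(T+1)) := Nat.pow_le_pow_right (by norm_num) (by omega)
  have hn0pos : 1 ≤ n₀ := by
    have : 0 < (3:ℕ) ^ (2*(T+1)) := by positivity
    omega
  have hper2 : ∀ n, T ≤ n → del2 (n + 2*p) = del2 n := by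
    intro n hn
    have h1 := hper (n + p) (by omega)
    have h2 := hper n hn
    rw [show n + 2*p = n + p + p by ring, h1, h2]
  have hj : ∀ j, del2 (n₀ + j * (2*p)) = 1 := by
    intro j
    induction j with
    | zero => simpa using del2_pow3 (T+1)
    | succ j ihj =>
      rw [show n₀ + (j+1)*(2*p) = (n₀ + j*(2*p)) + 2*p by ring]
      rw [hper2 _ (by omega)]
      exact ihj
  apply no_AP n₀ (2*p) (by omega) (by omega)
  intro j
  have hoddm : Odd (n₀ + j * (2*p)) := by
    apply Odd.add_even
    · exact Odd.pow (⟨1, by norm_num⟩ : Odd 3)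
    · exact ⟨j*p, by ring⟩
  exact isSquare_of_del2 (by omega) hoddm (hj j)

end PKParity

theorem parity_of_partition_function (D : ℤ) (hD : 2 ≤ D) (hsf : Squarefree D)
    (hmod : D % 4 = 2 ∨ D % 4 = 3) :
    {n : ℕ | 1 ≤ n ∧ Odd (pK D ((n : ℤ), 0))}.Infinite ∧
    {n : ℕ | 1 ≤ n ∧ Even (pK D ((n : ℤ), 0))}.Infinite := by
  open PKParity in
  constructor
  · -- infinitely many odd values
    by_contra hfin
    rw [Set.not_infinite] at hfin
    obtain ⟨N₀, hN₀⟩ := hfin.bddAbove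
    have hbr : ∀ j, N₀ + 2 ≤ j → pi2 D j = 0 := by
      intro j hj
      have hnot : j ∉ {n : ℕ | 1 ≤ n ∧ Odd (pK D ((n : ℤ), 0))} := by
        intro hmem
        have := hN₀ hmem
        omega
      have hno : ¬ Odd (pK D ((j : ℤ), 0)) := fun ho => hnot ⟨by omega, ho⟩
      exact zmod_even (Nat.not_odd_iff_even.1 hno)
    have hrec := branch_recurrence hD hmod (by omega : 1 ≤ N₀ + 2) (C := 0) hbr
    obtain ⟨p, hp, T, hper⟩ :=
      eventually_periodic (by omega : 1 ≤ N₀ + 2) 0 (pi2 D) hrec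
    exact no_periodic p T hp hper
  · -- infinitely many even values
    by_contra hfin
    rw [Set.not_infinite] at hfin
    obtain ⟨N₀, hN₀⟩ := hfin.bddAbove
    have hbr : ∀ j, N₀ + 2 ≤ j → pi2 D j = 1 := by
      intro j hj
      have hnot : j ∉ {n : ℕ | 1 ≤ n ∧ Even (pK D ((n : ℤ), 0))} := by
        intro hmem
        have := hN₀ hmem
        omega
      have hno : ¬ Even (pK D ((j : ℤ), 0)) := fun ho => hnot ⟨by omega, ho⟩
      exact zmod_odd (Nat.not_even_iff_odd.1 hno)
    have hrec := branch_recurrence hD hmod (by omega : 1 ≤ N₀ + 2) (C := 1) hbr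
    obtain ⟨p, hp, T, hper⟩ :=
      eventually_periodic (by omega : 1 ≤ N₀ + 2) 1 (pi2 D) hrec
    exact no_periodic p T hp hper
end

section
/- Let D ≥ 2 be a squarefree integer and K = ℚ(√D). There exists a totally positive α ∈ O_K with p_K(α) = 3 if and only if D ≠ 5. -/
section General

variable {D : ℤ}

/-- the trace of an element -/
def trD (D : ℤ) (a : ℤ × ℤ) : ℤ := if D % 4 = 1 then 2*a.1 + a.2 else 2*a.1

/-- twice the "square-root coefficient" of an element -/
def sdD (D : ℤ) (a : ℤ × ℤ) : ℤ := if D % 4 = 1 then a.2 else 2*a.2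

lemma sq_sqrtD (hD : 2 ≤ D) : Real.sqrt D ^ 2 = (D : ℝ) := by
  rw [Real.sq_sqrt]; exact_mod_cast le_trans (by norm_num) hD

lemma emb_add' (a b : ℤ × ℤ) : emb D (a + b) = emb D a + emb D b := by
  unfold emb; simp [Prod.fst_add, Prod.snd_add]; push_cast; ring

lemma embConj_add' (a b : ℤ × ℤ) : embConj D (a + b) = embConj D a + embConj D b := by
  unfold embConj; simp [Prod.fst_add, Prod.snd_add]; push_cast; ring

lemma emb_sum (m : Multiset (ℤ × ℤ)) : emb D m.sum = (m.map (emb D)).sum := by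
  induction m using Multiset.induction with
  | empty => simp [emb]
  | cons a s ih => simp [emb_add', ih]

lemma embConj_sum (m : Multiset (ℤ × ℤ)) :
    embConj D m.sum = (m.map (embConj D)).sum := by
  induction m using Multiset.induction with
  | empty => simp [embConj]
  | cons a s ih => simp [embConj_add', ih]

lemma emb_add_embConj (hD : 2 ≤ D) (a : ℤ × ℤ) :
    emb D a + embConj D a = (trD D a : ℝ) := by
  unfold emb embConj omegaD omegaD' trD
  split <;> push_cast <;> ring

lemma emb_sub_embConj (a : ℤ × ℤ) :
    emb D a - embConj D a = (sdD D a : ℝ) * Real.sqrt D := by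
  unfold emb embConj omegaD omegaD' sdD
  split <;> push_cast <;> ring

lemma emb_eq_tr_sd (hD : 2 ≤ D) (a : ℤ × ℤ) :
    emb D a = ((trD D a : ℝ) + (sdD D a : ℝ) * Real.sqrt D) / 2 := by
  have h1 := emb_add_embConj hD a
  have h2 := emb_sub_embConj (D := D) a
  linarith

lemma embConj_eq_tr_sd (hD : 2 ≤ D) (a : ℤ × ℤ) :
    embConj D a = ((trD D a : ℝ) - (sdD D a : ℝ) * Real.sqrt D) / 2 := by
  have h1 := emb_add_embConj hD a
  have h2 := emb_sub_embConj (D := D) a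
  linarith

lemma emb_mul_embConj (hD : 2 ≤ D) (a : ℤ × ℤ) :
    emb D a * embConj D a = (((trD D a)^2 - D * (sdD D a)^2 : ℤ) : ℝ) / 4 := by
  rw [emb_eq_tr_sd hD, embConj_eq_tr_sd hD]
  have hsq := sq_sqrtD hD
  push_cast
  linear_combination (-(sdD D a : ℝ)^2/4) * hsq

lemma totPos_iff (hD : 2 ≤ D) (a : ℤ × ℤ) :
    TotPos D a ↔ 0 < trD D a ∧ D * (sdD D a)^2 < (trD D a)^2 := by
  have h1 := emb_add_embConj hD a
  have hprod := emb_mul_embConj hD a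
  constructor
  · rintro ⟨he, hc⟩
    have ht : (0:ℝ) < (trD D a : ℝ) := by rw [← h1]; positivity
    have hp : (0:ℝ) < emb D a * embConj D a := mul_pos he hc
    rw [hprod] at hp
    have : (0:ℝ) < (((trD D a)^2 - D * (sdD D a)^2 : ℤ) : ℝ) := by linarith
    have : (0:ℤ) < (trD D a)^2 - D * (sdD D a)^2 := by exact_mod_cast this
    exact ⟨by exact_mod_cast ht, by linarith⟩
  · rintro ⟨ht, hlt⟩
    have ht' : (0:ℝ) < (trD D a : ℝ) := by exact_mod_cast ht
    have key : (0:ℝ) < (((trD D a)^2 - D * (sdD D a)^2 : ℤ) : ℝ) := by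
      have : (0:ℤ) < (trD D a)^2 - D * (sdD D a)^2 := by linarith
      exact_mod_cast this
    have hp : (0:ℝ) < emb D a * embConj D a := by rw [hprod]; linarith
    have hsum : (0:ℝ) < emb D a + embConj D a := by rw [h1]; exact ht'
    constructor
    · nlinarith [hp, hsum]
    · nlinarith [hp, hsum]

lemma trD_sdD_parity (a : ℤ × ℤ) : 2 ∣ (trD D a - sdD D a) := by
  unfold trD sdD; split <;> [exact ⟨a.1, by ring⟩; exact ⟨a.1 - a.2, by ring⟩]

lemma sd_sq_small {s : ℤ} (h : s ≠ 0) : 1 ≤ s^2 := by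
  rcases h.lt_or_gt with h|h <;> nlinarith

lemma two_le_trD (hD : 2 ≤ D) {a : ℤ × ℤ} (h : TotPos D a) : 2 ≤ trD D a := by
  obtain ⟨ht, hlt⟩ := (totPos_iff hD a).1 h
  rcases trD_sdD_parity (D := D) a with ⟨k, hk⟩
  by_contra hcon
  have h1 : trD D a = 1 := by omega
  have hs : sdD D a = 0 := by
    by_contra hs
    have := sd_sq_small hs
    nlinarith
  omega

lemma trD_add (a b : ℤ × ℤ) : trD D (a + b) = trD D a + trD D b := by
  unfold trD; split <;> simp [Prod.fst_add, Prod.snd_add] <;> ring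

lemma trD_zero : trD D 0 = 0 := by
  unfold trD; split <;> rfl

lemma trD_sum (m : Multiset (ℤ × ℤ)) : trD D m.sum = (m.map (trD D)).sum := by
  induction m using Multiset.induction with
  | empty => simp [trD_zero]
  | cons a s ih => simp [trD_add, ih]

lemma totPos_one (hD : 2 ≤ D) : TotPos D (1, 0) := by
  constructor <;> simp [emb, embConj]

lemma totPos_add {a b : ℤ × ℤ} (ha : TotPos D a) (hb : TotPos D b) :
    TotPos D (a + b) := by
  exact ⟨by rw [emb_add']; exact add_pos ha.1 hb.1,
    by rw [embConj_add']; exact add_pos ha.2 hb.2⟩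

/-- classification: trace-2 totally positive elements are `(1,0)` -/
lemma trace_two_elt (hD : 2 ≤ D) {a : ℤ × ℤ} (h : TotPos D a) (ht : trD D a = 2) :
    a = (1, 0) := by
  obtain ⟨_, hlt⟩ := (totPos_iff hD a).1 h
  rcases trD_sdD_parity (D := D) a with ⟨k, hk⟩
  have hs : sdD D a = 0 := by
    by_contra hs
    have h2 : 2 ≤ sdD D a ∨ sdD D a ≤ -2 := by omega
    rcases h2 with h2|h2 <;> nlinarith
  unfold trD sdD at *
  split at ht <;> split at hs <;> obtain ⟨x, y⟩ := a <;> simp_all <;> omega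

/-- no trace-3 totally positive elements when `D ≠ 5` -/
lemma no_trace_three (hD : 2 ≤ D) (hne : D ≠ 5) {a : ℤ × ℤ}
    (h : TotPos D a) (ht : trD D a = 3) : False := by
  obtain ⟨_, hlt⟩ := (totPos_iff hD a).1 h
  rcases trD_sdD_parity (D := D) a with ⟨k, hk⟩
  have hs : sdD D a ≠ 0 := by intro h0; omega
  have hs2 : 1 ≤ (sdD D a)^2 := sd_sq_small hs
  have hD9 : D < 9 := by nlinarith
  unfold trD at ht
  split at ht
  · rename_i h41; omega
  · omega

end General

section Forward

variable {D : ℤ}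

lemma totPos_two (hD : 2 ≤ D) : TotPos D (2, 0) := by
  constructor <;> simp [emb, embConj]

lemma totPos_three (hD : 2 ≤ D) : TotPos D (3, 0) := by
  constructor <;> simp [emb, embConj]

lemma tr_three (hD : 2 ≤ D) : trD D (3, 0) = 6 := by
  unfold trD; split <;> norm_num

/-- classification of all partitions of `(3,0)` for `D ≠ 5` -/
lemma partitions_three (hD : 2 ≤ D) (hne : D ≠ 5) :
    {m : Multiset (ℤ × ℤ) | (∀ β ∈ m, TotPos D β) ∧ m.sum = (3, 0)} =
      {({(3,0)} : Multiset (ℤ × ℤ)), {(1,0), (2,0)}, {(1,0), (1,0), (1,0)}} := by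
  ext m
  simp only [Set.mem_setOf_eq, Set.mem_insert_iff, Set.mem_singleton_iff]
  constructor
  · rintro ⟨hm, hsum⟩
    -- trace bookkeeping
    have htr : (m.map (trD D)).sum = 6 := by
      rw [← trD_sum, hsum, tr_three hD]
    have hcard : (Multiset.card (m.map (trD D))) • (2:ℤ) ≤ 6 := by
      rw [← htr]
      apply Multiset.card_nsmul_le_sum
      intro x hx
      obtain ⟨b, hb, rfl⟩ := Multiset.mem_map.1 hx
      exact two_le_trD hD (hm b hb)
    rw [Multiset.card_map, nsmul_eq_mul] at hcard
    have hc3 : Multiset.card m ≤ 3 := by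
      by_contra hcon
      have : (4:ℤ) ≤ (Multiset.card m : ℤ) := by exact_mod_cast by omega
      linarith
    have hc1 : 1 ≤ Multiset.card m := by
      rcases Nat.eq_zero_or_pos (Multiset.card m) with h0 | h0
      · rw [Multiset.card_eq_zero] at h0
        subst h0
        simp only [Multiset.sum_zero] at hsum
        exact absurd hsum (by simp [Prod.ext_iff])
      · exact h0
    interval_cases h : (Multiset.card m)
    · -- one part
      obtain ⟨a, rfl⟩ := Multiset.card_eq_one.1 h
      left
      simp at hsum; subst hsum; rfl
    · -- two parts
      obtain ⟨a, b, rfl⟩ := Multiset.card_eq_two.1 h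
      have ha := hm a (by simp)
      have hb := hm b (by simp)
      have hsum' : a + b = (3, 0) := by
        simpa using hsum
      have htra : trD D a + trD D b = 6 := by
        have := trD_add (D := D) a b
        rw [hsum'] at this
        rw [← this, tr_three hD]
      have h2a := two_le_trD hD ha
      have h2b := two_le_trD hD hb
      have hta : trD D a = 2 ∨ trD D a = 3 ∨ trD D a = 4 := by omega
      right; left
      rcases hta with hta | hta | hta
      · -- a = (1,0), b = (2,0)
        have ha1 : a = (1,0) := trace_two_elt hD ha hta
        have hb1 : b = (2,0) := by
          subst ha1
          have : b = (3,0) - (1,0) := by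
            rw [← hsum']; abel
          simpa using this
        rw [ha1, hb1]
      · exact absurd hta (fun h => no_trace_three hD hne ha h)
      · have htb : trD D b = 2 := by omega
        have hb1 : b = (1,0) := trace_two_elt hD hb htb
        have ha1 : a = (2,0) := by
          subst hb1
          have : a = (3,0) - (1,0) := by
            rw [← hsum']; abel
          simpa using this
        rw [ha1, hb1]
        exact Multiset.cons_swap _ _ _
    · -- three parts
      obtain ⟨a, b, c, rfl⟩ := Multiset.card_eq_three.1 h
      have ha := hm a (by simp)
      have hb := hm b (by simp)
      have hc := hm c (by simp)
      have hsum' : a + b + c = (3, 0) := by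
        have : a + (b + (c + 0)) = (3,0) := by simpa using hsum
        rw [← this]; abel
      have htr' : trD D a + trD D b + trD D c = 6 := by
        have h1 := trD_add (D := D) a b
        have h2 := trD_add (D := D) (a + b) c
        rw [hsum', tr_three hD] at h2
        omega
      have h2a := two_le_trD hD ha
      have h2b := two_le_trD hD hb
      have h2c := two_le_trD hD hc
      have hta : trD D a = 2 := by omega
      have htb : trD D b = 2 := by omega
      have htc : trD D c = 2 := by omega
      right; right
      rw [trace_two_elt hD ha hta, trace_two_elt hD hb htb, trace_two_elt hD hc htc]
  · rintro (rfl | rfl | rfl) <;>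
      refine ⟨?_, by simp [Prod.ext_iff]⟩ <;> intro β hβ <;>
      simp only [Multiset.mem_cons, Multiset.mem_singleton, Multiset.insert_eq_cons] at hβ
    · rw [hβ]; exact totPos_three hD
    · rcases hβ with rfl | rfl
      · exact totPos_one hD
      · exact totPos_two hD
    · rcases hβ with rfl | rfl | rfl <;> exact totPos_one hD

lemma pK_eq_ncard (D : ℤ) (α : ℤ × ℤ) :
    pK D α = {m : Multiset (ℤ × ℤ) | (∀ β ∈ m, TotPos D β) ∧ m.sum = α}.ncard := by
  rw [← Nat.card_coe_set_eq]
  rfl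

lemma pK_three (hD : 2 ≤ D) (hne : D ≠ 5) : pK D (3, 0) = 3 := by
  rw [pK_eq_ncard, partitions_three hD hne]
  have h12 : ({(3,0)} : Multiset (ℤ × ℤ)) ≠ {(1,0), (2,0)} := by decide
  have h13 : ({(3,0)} : Multiset (ℤ × ℤ)) ≠ {(1,0), (1,0), (1,0)} := by decide
  have h23 : ({(1,0), (2,0)} : Multiset (ℤ × ℤ)) ≠ {(1,0), (1,0), (1,0)} := by decide
  rw [Set.ncard_insert_of_notMem (by simp [h12, h13]) (Set.toFinite _),
    Set.ncard_insert_of_notMem (by simp [h23]) (Set.toFinite _),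
    Set.ncard_singleton]

end Forward

namespace Five

noncomputable def φ : ℝ := (1 + Real.sqrt 5) / 2
noncomputable def ψ : ℝ := (1 - Real.sqrt 5) / 2

lemma s5_sq : Real.sqrt 5 ^ 2 = 5 := Real.sq_sqrt (by norm_num)

lemma s5_gt : 2 < Real.sqrt 5 := by
  nlinarith [s5_sq, Real.sqrt_nonneg 5]

lemma s5_lt : Real.sqrt 5 < 3 := by
  nlinarith [s5_sq, Real.sqrt_nonneg 5]

lemma phi_gt_one : 1 < φ := by unfold φ; nlinarith [s5_gt]
lemma phi_pos : 0 < φ := lt_trans one_pos phi_gt_one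
lemma phi_ne : φ ≠ 0 := ne_of_gt phi_pos
lemma phi_add_psi : φ + ψ = 1 := by unfold φ ψ; ring
lemma phi_mul_psi : φ * ψ = -1 := by
  unfold φ ψ; nlinarith [s5_sq]
lemma phi_sq : φ^2 = φ + 1 := by unfold φ; nlinarith [s5_sq]
lemma psi_sq : ψ^2 = ψ + 1 := by unfold ψ; nlinarith [s5_sq]
lemma phi_sq_gt_one : 1 < φ^2 := by nlinarith [phi_gt_one]
lemma psi_sq_eq : ψ^2 = (φ^2)⁻¹ := by
  have h : ψ^2 * φ^2 = 1 := by nlinarith [phi_mul_psi]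
  exact eq_inv_of_mul_eq_one_left h
lemma phi_sq_lt_four : φ^2 < 4 := by
  rw [phi_sq]; unfold φ; nlinarith [s5_lt]

lemma omega5 : omegaD 5 = φ := by
  unfold omegaD φ; norm_num
lemma omega5' : omegaD' 5 = ψ := by
  unfold omegaD' ψ; norm_num

lemma emb5 (a : ℤ × ℤ) : emb 5 a = a.1 + a.2 * φ := by
  rw [emb, omega5]
lemma conj5 (a : ℤ × ℤ) : embConj 5 a = a.1 + a.2 * ψ := by
  rw [embConj, omega5']

/-- the norm form -/
def nrm (a : ℤ × ℤ) : ℤ := a.1^2 + a.1*a.2 - a.2^2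

lemma emb_mul_conj (a : ℤ × ℤ) : emb 5 a * embConj 5 a = (nrm a : ℝ) := by
  rw [emb5, conj5]
  unfold nrm
  push_cast
  linear_combination ((a.1 : ℝ) * a.2) * phi_add_psi + ((a.2 : ℝ)^2) * phi_mul_psi

lemma phi_irrational : Irrational φ := by
  have hirr : Irrational (Real.sqrt 5) := by
    have := Nat.prime_five.irrational_sqrt
    simpa using this
  unfold φ
  have h1 : Irrational ((1:ℚ) + Real.sqrt 5) := hirr.ratCast_add 1
  have h2 : Irrational (((1:ℚ) + Real.sqrt 5) / (2:ℚ)) := h1.div_ratCast (by norm_num)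
  simpa using h2

lemma emb_injective : Function.Injective (emb 5) := by
  intro a b hab
  rw [emb5, emb5] at hab
  by_cases hy : a.2 = b.2
  · have : (a.1 : ℝ) = b.1 := by
      rw [hy] at hab; linarith
    have h1 : a.1 = b.1 := by exact_mod_cast this
    exact Prod.ext h1 hy
  · exfalso
    have hne : ((a.2 : ℝ) - b.2) ≠ 0 := by
      intro h; apply hy; exact_mod_cast sub_eq_zero.1 h
    have hphi : φ = ((b.1 : ℝ) - a.1) / ((a.2 : ℝ) - b.2) := by
      field_simp
      linarith
    apply phi_irrational
    refine ⟨((b.1 - a.1 : ℤ) : ℚ) / ((a.2 - b.2 : ℤ) : ℚ), ?_⟩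
    rw [hphi]
    push_cast
    norm_num
end Five

namespace Five

lemma nrm_pos {a : ℤ × ℤ} (h : TotPos 5 a) : 1 ≤ nrm a := by
  have hp : (0:ℝ) < emb 5 a * embConj 5 a := mul_pos h.1 h.2
  rw [emb_mul_conj] at hp
  exact_mod_cast hp

/-- the norm form does not represent 2 or 3 -/
lemma nrm_ne_two_three (a : ℤ × ℤ) : nrm a ≠ 2 ∧ nrm a ≠ 3 := by
  unfold nrm
  obtain ⟨x, y⟩ := a
  constructor <;> intro h <;>
  · have h5 : ((2*x + y)^2 : ZMod 5) = ((2*x+y)^2 - 5*y^2 : ℤ) := by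
      have h50 : (5 : ZMod 5) = 0 := by decide
      push_cast
      linear_combination ((y : ZMod 5)^2) * h50
    have h2 : ((2*x+y)^2 - 5*y^2 : ℤ) = 4 * (x^2 + x*y - y^2) := by ring
    rw [h2, h] at h5
    have : ∀ t : ZMod 5, t^2 ≠ (4 * 2 : ℤ) ∧ t^2 ≠ (4 * 3 : ℤ) := by decide
    first
      | exact (this _).1 h5
      | exact (this _).2 h5

/-- multiplication in `ℤ[ω]` -/
def mul5 (a b : ℤ × ℤ) : ℤ × ℤ := (a.1*b.1 + a.2*b.2, a.1*b.2 + a.2*b.1 + a.2*b.2)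

lemma emb_mul5 (a b : ℤ × ℤ) : emb 5 (mul5 a b) = emb 5 a * emb 5 b := by
  simp only [emb5, mul5]
  push_cast
  linear_combination (-(a.2 : ℝ) * b.2) * phi_sq

lemma conj_mul5 (a b : ℤ × ℤ) : embConj 5 (mul5 a b) = embConj 5 a * embConj 5 b := by
  simp only [conj5, mul5]
  push_cast
  linear_combination (-(a.2 : ℝ) * b.2) * psi_sq

/-- step maps: multiplication by `ω² = (1,1)` and its inverse `(2,-1)` -/
def fs (p : ℤ × ℤ) : ℤ × ℤ := mul5 p (1, 1)
def fi (p : ℤ × ℤ) : ℤ × ℤ := mul5 p (2, -1)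

/-- `A k` represents `ω^{2k}` -/
def A (k : ℤ) : ℤ × ℤ := if 0 ≤ k then fs^[k.toNat] (1,0) else fi^[(-k).toNat] (1,0)

lemma emb_one : emb 5 (1, 0) = 1 := by simp [emb5]
lemma conj_one : embConj 5 (1, 0) = 1 := by simp [conj5]

lemma emb_omega2 : emb 5 (1, 1) = φ^2 := by
  rw [emb5]; push_cast; linarith [phi_sq]
lemma conj_omega2 : embConj 5 (1, 1) = (φ^2)⁻¹ := by
  rw [conj5, ← psi_sq_eq]; push_cast; linarith [psi_sq]
lemma emb_omega2' : emb 5 (2, -1) = (φ^2)⁻¹ := by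
  have h : (2 - φ) * φ^2 = 1 := by linear_combination (1 - φ) * phi_sq
  have h2 : emb 5 (2, -1) = 2 - φ := by rw [emb5]; push_cast; ring
  rw [h2]
  exact eq_inv_of_mul_eq_one_left h
lemma conj_omega2' : embConj 5 (2, -1) = φ^2 := by
  rw [conj5]
  push_cast
  linear_combination (-1 : ℝ) * phi_sq + (-1 : ℝ) * phi_add_psi

lemma emb_fs_iter (n : ℕ) : emb 5 (fs^[n] (1,0)) = (φ^2)^n ∧
    embConj 5 (fs^[n] (1,0)) = ((φ^2)⁻¹)^n := by
  induction n with
  | zero => simp [emb_one, conj_one]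
  | succ n ih =>
    rw [Function.iterate_succ_apply', fs, emb_mul5, conj_mul5, ih.1, ih.2,
      emb_omega2, conj_omega2, pow_succ, pow_succ]
    exact ⟨rfl, rfl⟩

lemma emb_fi_iter (n : ℕ) : emb 5 (fi^[n] (1,0)) = ((φ^2)⁻¹)^n ∧
    embConj 5 (fi^[n] (1,0)) = (φ^2)^n := by
  induction n with
  | zero => simp [emb_one, conj_one]
  | succ n ih =>
    rw [Function.iterate_succ_apply', fi, emb_mul5, conj_mul5, ih.1, ih.2,
      emb_omega2', conj_omega2', pow_succ, pow_succ]
    exact ⟨rfl, rfl⟩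

lemma emb_A (k : ℤ) : emb 5 (A k) = (φ^2)^k := by
  unfold A
  split
  · rename_i h
    rw [(emb_fs_iter k.toNat).1, ← zpow_natCast, Int.toNat_of_nonneg h]
  · rename_i h
    rw [(emb_fi_iter (-k).toNat).1, inv_pow, ← zpow_natCast,
      Int.toNat_of_nonneg (by omega), ← zpow_neg, neg_neg]

lemma conj_A (k : ℤ) : embConj 5 (A k) = (φ^2)^(-k) := by
  unfold A
  split
  · rename_i h
    rw [(emb_fs_iter k.toNat).2, inv_pow, ← zpow_natCast, Int.toNat_of_nonneg h,
      ← zpow_neg]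
  · rename_i h
    rw [(emb_fi_iter (-k).toNat).2, ← zpow_natCast, Int.toNat_of_nonneg (by omega)]

lemma totPos_A (k : ℤ) : TotPos 5 (A k) := by
  constructor
  · rw [emb_A]; exact zpow_pos (pow_pos phi_pos 2) k
  · rw [conj_A]; exact zpow_pos (pow_pos phi_pos 2) (-k)

lemma nrm_A (k : ℤ) : nrm (A k) = 1 := by
  have h : emb 5 (A k) * embConj 5 (A k) = 1 := by
    rw [emb_A, conj_A, ← zpow_add₀ (pow_pos phi_pos 2).ne']
    simp
  rw [emb_mul_conj] at h
  exact_mod_cast h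

end Five

namespace Five

lemma emb_sub' (a b : ℤ × ℤ) : emb 5 (a - b) = emb 5 a - emb 5 b := by
  simp only [emb5, Prod.fst_sub, Prod.snd_sub]; push_cast; ring

lemma conj_sub' (a b : ℤ × ℤ) : embConj 5 (a - b) = embConj 5 a - embConj 5 b := by
  simp only [conj5, Prod.fst_sub, Prod.snd_sub]; push_cast; ring

lemma nrm_ge_four {a : ℤ × ℤ} (h : TotPos 5 a) (h1 : nrm a ≠ 1) : 4 ≤ nrm a := by
  have := nrm_pos h
  have := nrm_ne_two_three a
  omega

/-- every totally positive element of norm `≥ 2` has a "unit part" -/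
lemma exists_unit_part {a : ℤ × ℤ} (h : TotPos 5 a) (h1 : nrm a ≠ 1) :
    ∃ k : ℤ, TotPos 5 (a - A k) := by
  have hN : (4:ℝ) ≤ (nrm a : ℝ) := by exact_mod_cast nrm_ge_four h h1
  have hec : emb 5 a * embConj 5 a = (nrm a : ℝ) := emb_mul_conj a
  obtain ⟨n, hn1, hn2⟩ := exists_mem_Ioc_zpow h.1 phi_sq_gt_one
  have hP : (0:ℝ) < (φ^2)^n := zpow_pos (pow_pos phi_pos 2) n
  have hc := h.2
  refine ⟨n, ?_, ?_⟩
  · rw [emb_sub', emb_A]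
    linarith
  · rw [conj_sub', conj_A, zpow_neg]
    have hn2' : emb 5 a ≤ (φ^2)^n * φ^2 := by
      rw [← zpow_add_one₀ (pow_pos phi_pos 2).ne']
      exact hn2
    have hQ : (0:ℝ) < ((φ^2)^n)⁻¹ := by positivity
    have hPQ : (φ^2)^n * ((φ^2)^n)⁻¹ = 1 := mul_inv_cancel₀ (ne_of_gt hP)
    have h1' : (nrm a : ℝ) ≤ embConj 5 a * ((φ^2)^n * φ^2) := by
      calc (nrm a : ℝ) = emb 5 a * embConj 5 a := hec.symm
        _ ≤ ((φ^2)^n * φ^2) * embConj 5 a := mul_le_mul_of_nonneg_right hn2' hc.le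
        _ = embConj 5 a * ((φ^2)^n * φ^2) := by ring
    have hcP : 1 < embConj 5 a * (φ^2)^n := by
      nlinarith [phi_sq_lt_four, pow_pos phi_pos 2]
    nlinarith [hcP, hPQ, hP, hQ]

end Five

namespace Five

lemma trD_sub (a b : ℤ × ℤ) : trD 5 (a - b) = trD 5 a - trD 5 b := by
  have h := trD_add (D := 5) (a - b) b
  simp only [sub_add_cancel] at h
  omega

lemma emb_zero : emb 5 0 = 0 := by simp [emb5, Prod.fst_zero, Prod.snd_zero]

lemma totPos_ne_zero {a : ℤ × ℤ} (h : TotPos 5 a) : a ≠ 0 := by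
  intro h0
  have := h.1
  rw [h0, emb_zero] at this
  exact lt_irrefl _ this

/-- every totally positive element is a sum of norm-one totally positive elements -/
lemma sum_units_aux : ∀ n : ℕ, ∀ α : ℤ × ℤ, TotPos 5 α → (trD 5 α).toNat ≤ n →
    ∃ m : Multiset (ℤ × ℤ), (∀ p ∈ m, TotPos 5 p ∧ nrm p = 1) ∧ m.sum = α := by
  intro n
  induction n with
  | zero =>
    intro α hα hle
    have := two_le_trD (by norm_num) hα
    omega
  | succ n ih =>
    intro α hα hle
    by_cases h1 : nrm α = 1
    · refine ⟨{α}, ?_, by simp⟩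
      intro p hp
      rw [Multiset.mem_singleton] at hp
      subst hp
      exact ⟨hα, h1⟩
    · obtain ⟨k, hk⟩ := exists_unit_part hα h1
      have htk := two_le_trD (by norm_num) (totPos_A k)
      have htβ := two_le_trD (by norm_num) hk
      have htα := two_le_trD (by norm_num) hα
      have hsub : trD 5 (α - A k) = trD 5 α - trD 5 (A k) := trD_sub α (A k)
      obtain ⟨m, hm, hsum⟩ := ih (α - A k) hk (by omega)
      refine ⟨A k ::ₘ m, ?_, ?_⟩
      · intro p hp
        rw [Multiset.mem_cons] at hp
        rcases hp with rfl | hp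
        · exact ⟨totPos_A k, nrm_A k⟩
        · exact hm p hp
      · rw [Multiset.sum_cons, hsum]
        abel

lemma sum_units {α : ℤ × ℤ} (hα : TotPos 5 α) :
    ∃ m : Multiset (ℤ × ℤ), (∀ p ∈ m, TotPos 5 p ∧ nrm p = 1) ∧ m.sum = α :=
  sum_units_aux (trD 5 α).toNat α hα le_rfl

/-- uniqueness of representations as a sum of two norm-one elements -/
lemma two_sum_unique {u v u' v' : ℤ × ℤ}
    (hu : TotPos 5 u) (hv : TotPos 5 v) (hu' : TotPos 5 u') (hv' : TotPos 5 v')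
    (nu : nrm u = 1) (nv : nrm v = 1) (nu' : nrm u' = 1) (nv' : nrm v' = 1)
    (h : u + v = u' + v') : ({u, v} : Multiset (ℤ × ℤ)) = {u', v'} := by
  have he : emb 5 u + emb 5 v = emb 5 u' + emb 5 v' := by
    rw [← emb_add', ← emb_add', h]
  have hcn : ∀ w : ℤ × ℤ, nrm w = 1 → emb 5 w * embConj 5 w = 1 := by
    intro w hw
    rw [emb_mul_conj, hw]
    norm_num
  have hc : embConj 5 u + embConj 5 v = embConj 5 u' + embConj 5 v' := by
    rw [← embConj_add', ← embConj_add', h]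
  have h1 := hcn u nu
  have h2 := hcn v nv
  have h3 := hcn u' nu'
  have h4 := hcn v' nv'
  have hprod : emb 5 u * emb 5 v = emb 5 u' * emb 5 v' := by
    have e1 : embConj 5 u = (emb 5 u)⁻¹ := eq_inv_of_mul_eq_one_left (by linarith [h1])
    have e2 : embConj 5 v = (emb 5 v)⁻¹ := eq_inv_of_mul_eq_one_left (by linarith [h2])
    have e3 : embConj 5 u' = (emb 5 u')⁻¹ := eq_inv_of_mul_eq_one_left (by linarith [h3])
    have e4 : embConj 5 v' = (emb 5 v')⁻¹ := eq_inv_of_mul_eq_one_left (by linarith [h4])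
    rw [e1, e2, e3, e4] at hc
    have p1 := hu.1.ne'
    have p2 := hv.1.ne'
    have p3 := hu'.1.ne'
    have p4 := hv'.1.ne'
    field_simp at hc
    -- hc is now a polynomial identity; combine with he
    nlinarith [hc, he, hu.1, hv.1, hu'.1, hv'.1, mul_pos hu.1 hv.1, mul_pos hu'.1 hv'.1]
  have key : (emb 5 u - emb 5 u') * (emb 5 u - emb 5 v') = 0 := by
    linear_combination (emb 5 u) * he - hprod
  rcases mul_eq_zero.1 key with hk | hk
  · have huu : u = u' := emb_injective (by linarith)
    have hvv : v = v' := emb_injective (by linarith)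
    rw [huu, hvv]
  · have huv : u = v' := emb_injective (by linarith)
    have hvu : v = u' := emb_injective (by linarith)
    rw [huv, hvu]
    exact Multiset.pair_comm _ _

end Five

namespace Five

lemma totPos_o2 : TotPos 5 ((1:ℤ), (1:ℤ)) := by
  constructor
  · rw [emb_omega2]; exact pow_pos phi_pos 2
  · rw [conj_omega2]; exact inv_pos.2 (pow_pos phi_pos 2)

lemma totPos_o2' : TotPos 5 ((2:ℤ), (-1:ℤ)) := by
  constructor
  · rw [emb_omega2']; exact inv_pos.2 (pow_pos phi_pos 2)
  · rw [conj_omega2']; exact pow_pos phi_pos 2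

lemma totPos_mul_o2 {a : ℤ × ℤ} (h : TotPos 5 a) : TotPos 5 (mul5 a (1, 1)) := by
  constructor
  · rw [emb_mul5]; exact mul_pos h.1 totPos_o2.1
  · rw [conj_mul5]; exact mul_pos h.2 totPos_o2.2

lemma totPos_mul_o2' {a : ℤ × ℤ} (h : TotPos 5 a) : TotPos 5 (mul5 a (2, -1)) := by
  constructor
  · rw [emb_mul5]; exact mul_pos h.1 totPos_o2'.1
  · rw [conj_mul5]; exact mul_pos h.2 totPos_o2'.2

lemma mul3_sum (a : ℤ × ℤ) : mul5 a (1, 1) + mul5 a (2, -1) = a + a + a := by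
  obtain ⟨x, y⟩ := a
  simp only [mul5, Prod.mk_add_mk, Prod.mk.injEq]
  constructor <;> ring

lemma nrm_sum_ge_two {x y : ℤ × ℤ} (hx : TotPos 5 x) (hy : TotPos 5 y) :
    2 ≤ nrm (x + y) := by
  have h1 : (1:ℝ) ≤ (nrm x : ℝ) := by exact_mod_cast nrm_pos hx
  have h2 : (1:ℝ) ≤ (nrm y : ℝ) := by exact_mod_cast nrm_pos hy
  have hx1 := emb_mul_conj x
  have hy1 := emb_mul_conj y
  have hs := emb_mul_conj (x + y)
  rw [emb_add', embConj_add'] at hs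
  have key : (2:ℝ) ≤ (nrm (x + y) : ℝ) := by
    nlinarith [mul_pos hx.1 hy.2, mul_pos hy.1 hx.2]
  exact_mod_cast key

lemma nrm_sum_ne_one {x y : ℤ × ℤ} (hx : TotPos 5 x) (hy : TotPos 5 y) :
    nrm (x + y) ≠ 1 := by
  have := nrm_sum_ge_two hx hy
  omega

lemma mul_o2_ne_self {a : ℤ × ℤ} (h : TotPos 5 a) : mul5 a (1, 1) ≠ a := by
  intro heq
  have := congrArg (emb 5) heq
  rw [emb_mul5, emb_omega2] at this
  nlinarith [h.1, phi_sq_gt_one]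

lemma mul_o2_ne_double {a : ℤ × ℤ} (h : TotPos 5 a) : mul5 a (1, 1) ≠ a + a := by
  intro heq
  have := congrArg (emb 5) heq
  rw [emb_mul5, emb_omega2, emb_add'] at this
  have hphi2 : 2 < φ^2 := by nlinarith [phi_gt_one, phi_sq]
  nlinarith [h.1]

end Five

namespace Five

lemma pK5_ne_three (α : ℤ × ℤ) (hα : TotPos 5 α) : pK 5 α ≠ 3 := by
  intro h3
  set S : Set (Multiset (ℤ × ℤ)) := {m | (∀ β ∈ m, TotPos 5 β) ∧ m.sum = α} with hSdef
  have hncard : S.ncard = 3 := by rw [← pK_eq_ncard]; exact h3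
  have hfin : S.Finite := by
    rw [← Set.not_infinite]
    intro hinf
    rw [hinf.ncard] at hncard
    omega
  have hsing : ({α} : Multiset (ℤ × ℤ)) ∈ S := by
    constructor
    · intro β hβ
      rw [Multiset.mem_singleton] at hβ
      subst hβ
      exact hα
    · simp
  have hbd : ∀ m ∈ S, Multiset.card m ≤ (trD 5 α).toNat := by
    intro m hm
    obtain ⟨h1, h2⟩ := hm
    have htr : (m.map (trD 5)).sum = trD 5 α := by rw [← trD_sum, h2]
    have hge : (Multiset.card (m.map (trD 5))) • (2:ℤ) ≤ (m.map (trD 5)).sum := by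
      apply Multiset.card_nsmul_le_sum
      intro x hx
      obtain ⟨b, hb, rfl⟩ := Multiset.mem_map.1 hx
      exact two_le_trD (by norm_num) (h1 b hb)
    rw [Multiset.card_map, nsmul_eq_mul, htr] at hge
    omega
  set C : Set ℕ := (fun m => Multiset.card m) '' S with hCdef
  have hCne : C.Nonempty := ⟨1, {α}, hsing, by simp⟩
  have hCbdd : BddAbove C := ⟨(trD 5 α).toNat, by rintro x ⟨m, hm, rfl⟩; exact hbd m hm⟩
  obtain ⟨m₀, hm₀S, hm₀card⟩ := Nat.sSup_mem hCne hCbdd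
  set M := sSup C with hMdef
  have hbound : ∀ m ∈ S, Multiset.card m ≤ M := fun m hm => le_csSup hCbdd ⟨m, hm, rfl⟩
  have hM1 : 1 ≤ M := by
    have := hbound _ hsing
    simpa using this
  -- all parts of a maximal partition have norm one
  have hunits : ∀ p ∈ m₀, nrm p = 1 := by
    intro p hp
    by_contra hne1
    obtain ⟨k, hk⟩ := exists_unit_part (hm₀S.1 p hp) hne1
    have hm' : (A k ::ₘ (p - A k) ::ₘ m₀.erase p) ∈ S := by
      constructor
      · intro β hβ
        rw [Multiset.mem_cons, Multiset.mem_cons] at hβ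
        rcases hβ with rfl | rfl | hβ
        · exact totPos_A k
        · exact hk
        · exact hm₀S.1 β (Multiset.mem_of_mem_erase hβ)
      · rw [Multiset.sum_cons, Multiset.sum_cons]
        calc A k + ((p - A k) + (m₀.erase p).sum) = p + (m₀.erase p).sum := by abel
          _ = (p ::ₘ m₀.erase p).sum := (Multiset.sum_cons _ _).symm
          _ = m₀.sum := by rw [Multiset.cons_erase hp]
          _ = α := hm₀S.2
    have hcard := hbound _ hm'
    rw [Multiset.card_cons, Multiset.card_cons, Multiset.card_erase_of_mem hp] at hcard
    have hpos : 0 < Multiset.card m₀ := Multiset.card_pos_iff_exists_mem.2 ⟨p, hp⟩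
    have hc : Multiset.card m₀ = M := hm₀card
    rw [Nat.pred_eq_sub_one] at hcard
    omega
  have hm₀c : Multiset.card m₀ = M := hm₀card
  have hne0 : ∀ m ∈ S, Multiset.card m ≠ 0 := by
    intro m hm h0
    rw [Multiset.card_eq_zero] at h0
    subst h0
    exact totPos_ne_zero hα (by simpa using hm.2.symm)
  have hcard1 : ∀ m ∈ S, Multiset.card m = 1 → m = {α} := by
    intro m hm h1
    obtain ⟨b, rfl⟩ := Multiset.card_eq_one.1 h1
    have : b = α := by simpa using hm.2
    rw [this]
  rcases lt_or_ge M 3 with hM3 | hM3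
  · -- M = 1 or 2 : at most two partitions
    interval_cases M
    · -- M = 1
      have hsub : S ⊆ {({α} : Multiset (ℤ × ℤ))} := by
        intro m hm
        have hc := hbound m hm
        have hc0 := hne0 m hm
        exact hcard1 m hm (by omega)
      have := Set.ncard_le_ncard hsub (Set.finite_singleton _)
      rw [hncard, Set.ncard_singleton] at this
      omega
    · -- M = 2
      obtain ⟨u, v, huv⟩ := Multiset.card_eq_two.1 hm₀c
      have hu : TotPos 5 u := hm₀S.1 u (by rw [huv]; simp)
      have hv : TotPos 5 v := hm₀S.1 v (by rw [huv]; simp)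
      have hnu : nrm u = 1 := hunits u (by rw [huv]; simp)
      have hnv : nrm v = 1 := hunits v (by rw [huv]; simp)
      have hsumuv : u + v = α := by
        have := hm₀S.2
        rw [huv] at this
        simpa using this
      -- in every 2-part partition both parts are units
      have hnorm1 : ∀ β γ : ℤ × ℤ, TotPos 5 β → TotPos 5 γ → β + γ = α →
          nrm β = 1 := by
        intro β γ hβ hγ hsum
        by_contra hne1
        obtain ⟨k, hk⟩ := exists_unit_part hβ hne1
        have hmem : (A k ::ₘ (β - A k) ::ₘ {γ}) ∈ S := by
          constructor
          · intro x hx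
            rw [Multiset.mem_cons, Multiset.mem_cons, Multiset.mem_singleton] at hx
            rcases hx with rfl | rfl | rfl
            · exact totPos_A k
            · exact hk
            · exact hγ
          · rw [Multiset.sum_cons, Multiset.sum_cons, Multiset.sum_singleton, ← hsum]
            abel
        have := hbound _ hmem
        rw [Multiset.card_cons, Multiset.card_cons, Multiset.card_singleton] at this
        omega
      have hsub : S ⊆ {({α} : Multiset (ℤ × ℤ)), m₀} := by
        intro m hm
        have hc := hbound m hm
        have hc0 := hne0 m hm
        have : Multiset.card m = 1 ∨ Multiset.card m = 2 := by omega
        rcases this with h1 | h2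
        · left; exact hcard1 m hm h1
        · right
          obtain ⟨β, γ, rfl⟩ := Multiset.card_eq_two.1 h2
          have hβ : TotPos 5 β := hm.1 β (by simp)
          have hγ : TotPos 5 γ := hm.1 γ (by simp)
          have hsum : β + γ = α := by simpa using hm.2
          have h1 := hnorm1 β γ hβ hγ hsum
          have h2' := hnorm1 γ β hγ hβ (by rw [add_comm]; exact hsum)
          rw [huv]
          exact two_sum_unique hβ hγ hu hv h1 h2' hnu hnv (by rw [hsum, hsumuv])
      have hle := Set.ncard_le_ncard hsub ((Set.finite_singleton _).insert _)
      have : ({({α} : Multiset (ℤ × ℤ)), m₀} : Set _).ncard ≤ 2 := by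
        apply le_trans (Set.ncard_insert_le _ _)
        rw [Set.ncard_singleton]
      omega
  · -- M ≥ 3 : at least four partitions
    have hfour : ∀ P3 P4 : Multiset (ℤ × ℤ), P3 ∈ S → P4 ∈ S →
        Multiset.card P3 = M - 1 → Multiset.card P4 = M - 1 → P3 ≠ P4 → False := by
      intro P3 P4 h3S h4S hc3 hc4 hne
      have d12 : ({α} : Multiset (ℤ × ℤ)) ≠ m₀ := by
        intro h
        have := congrArg Multiset.card h
        rw [Multiset.card_singleton, hm₀c] at this
        omega
      have d13 : ({α} : Multiset (ℤ × ℤ)) ≠ P3 := by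
        intro h
        have := congrArg Multiset.card h
        rw [Multiset.card_singleton, hc3] at this
        omega
      have d14 : ({α} : Multiset (ℤ × ℤ)) ≠ P4 := by
        intro h
        have := congrArg Multiset.card h
        rw [Multiset.card_singleton, hc4] at this
        omega
      have d23 : m₀ ≠ P3 := by
        intro h
        have := congrArg Multiset.card h
        rw [hm₀c, hc3] at this
        omega
      have d24 : m₀ ≠ P4 := by
        intro h
        have := congrArg Multiset.card h
        rw [hm₀c, hc4] at this
        omega
      have hsub : ({({α} : Multiset (ℤ × ℤ)), m₀, P3, P4} : Set (Multiset (ℤ × ℤ))) ⊆ S := by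
        intro x hx
        simp only [Set.mem_insert_iff, Set.mem_singleton_iff] at hx
        rcases hx with rfl | rfl | rfl | rfl
        · exact hsing
        · exact hm₀S
        · exact h3S
        · exact h4S
      have h4 : ({({α} : Multiset (ℤ × ℤ)), m₀, P3, P4} : Set (Multiset (ℤ × ℤ))).ncard = 4 := by
        rw [Set.ncard_insert_of_notMem (by simp [d12, d13, d14]) (Set.toFinite _),
          Set.ncard_insert_of_notMem (by simp [d23, d24]) (Set.toFinite _),
          Set.ncard_insert_of_notMem (by simp [hne]) (Set.toFinite _),
          Set.ncard_singleton]
      have := Set.ncard_le_ncard hsub hfin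
      rw [h4, hncard] at this
      omega
    have hapos : 0 < Multiset.card m₀ := by omega
    obtain ⟨a, ha⟩ := Multiset.card_pos_iff_exists_mem.1 hapos
    have hatp : TotPos 5 a := hm₀S.1 a ha
    by_cases hall : ∀ x ∈ m₀, x = a
    · -- all parts equal
      have hrep : m₀ = Multiset.replicate M a := by
        have := Multiset.eq_replicate_card.2 hall
        rwa [hm₀c] at this
      have hsumM : M • a = α := by
        have := hm₀S.2
        rwa [hrep, Multiset.sum_replicate] at this
      have h33 : (3:ℕ) • a = a + a + a := by
        rw [succ_nsmul, two_nsmul]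
      have hP3 : ((a + a) ::ₘ Multiset.replicate (M - 2) a) ∈ S := by
        constructor
        · intro x hx
          rw [Multiset.mem_cons] at hx
          rcases hx with rfl | hx
          · exact totPos_add hatp hatp
          · rw [Multiset.eq_of_mem_replicate hx]
            exact hatp
        · rw [Multiset.sum_cons, Multiset.sum_replicate]
          have h2 : M - 2 + 2 = M := by omega
          calc (a + a) + (M-2) • a = (M-2) • a + 2 • a := by rw [two_nsmul]; abel
            _ = (M-2+2) • a := (add_nsmul a (M-2) 2).symm
            _ = α := by rw [h2, hsumM]
      have hP4 : (mul5 a (1,1) ::ₘ mul5 a (2,-1) ::ₘ Multiset.replicate (M - 3) a) ∈ S := by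
        constructor
        · intro x hx
          rw [Multiset.mem_cons, Multiset.mem_cons] at hx
          rcases hx with rfl | rfl | hx
          · exact totPos_mul_o2 hatp
          · exact totPos_mul_o2' hatp
          · rw [Multiset.eq_of_mem_replicate hx]
            exact hatp
        · rw [Multiset.sum_cons, Multiset.sum_cons, Multiset.sum_replicate]
          have h3 : M - 3 + 3 = M := by omega
          calc mul5 a (1,1) + (mul5 a (2,-1) + (M-3) • a)
              = (mul5 a (1,1) + mul5 a (2,-1)) + (M-3) • a := by abel
            _ = (a + a + a) + (M-3) • a := by rw [mul3_sum]
            _ = (M-3) • a + 3 • a := by rw [h33]; abel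
            _ = (M-3+3) • a := (add_nsmul a (M-3) 3).symm
            _ = α := by rw [h3, hsumM]
      refine hfour _ _ hP3 hP4 ?_ ?_ ?_
      · rw [Multiset.card_cons, Multiset.card_replicate]
        omega
      · rw [Multiset.card_cons, Multiset.card_cons, Multiset.card_replicate]
        omega
      · intro h
        have hmem : mul5 a (1,1) ∈ ((a + a) ::ₘ Multiset.replicate (M - 2) a) := by
          rw [h]
          exact Multiset.mem_cons_self _ _
        rw [Multiset.mem_cons] at hmem
        rcases hmem with heq | hmem
        · exact mul_o2_ne_double hatp heq
        · exact mul_o2_ne_self hatp (Multiset.eq_of_mem_replicate hmem)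
    · -- not all parts equal
      push_neg at hall
      obtain ⟨p0, hp0m, hp0ne⟩ := hall
      obtain ⟨t1, ht1⟩ := Multiset.exists_cons_of_mem ha
      have hp0t1 : p0 ∈ t1 := by
        have := hp0m
        rw [ht1, Multiset.mem_cons] at this
        rcases this with h | h
        · exact absurd h hp0ne
        · exact h
      obtain ⟨t2, ht2⟩ := Multiset.exists_cons_of_mem hp0t1
      have hct2 : 0 < Multiset.card t2 := by
        have h1 : Multiset.card m₀ = Multiset.card t2 + 2 := by
          rw [ht1, ht2, Multiset.card_cons, Multiset.card_cons]
        omega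
      obtain ⟨q, hq⟩ := Multiset.card_pos_iff_exists_mem.1 hct2
      obtain ⟨r, hr⟩ := Multiset.exists_cons_of_mem hq
      have hm0eq : m₀ = a ::ₘ p0 ::ₘ q ::ₘ r := by rw [ht1, ht2, hr]
      have hptp : TotPos 5 p0 := hm₀S.1 p0 hp0m
      have hqtp : TotPos 5 q := hm₀S.1 q (by rw [hm0eq]; simp)
      have hrm : ∀ x ∈ r, x ∈ m₀ := by
        intro x hx
        rw [hm0eq]
        exact Multiset.mem_cons_of_mem (Multiset.mem_cons_of_mem
          (Multiset.mem_cons_of_mem hx))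
      have hsum0 : a + (p0 + (q + r.sum)) = α := by
        have := hm₀S.2
        rw [hm0eq, Multiset.sum_cons, Multiset.sum_cons, Multiset.sum_cons] at this
        exact this
      have hcr : Multiset.card m₀ = Multiset.card r + 3 := by
        rw [hm0eq, Multiset.card_cons, Multiset.card_cons, Multiset.card_cons]
      have hP3 : ((a + q) ::ₘ p0 ::ₘ r) ∈ S := by
        constructor
        · intro x hx
          rw [Multiset.mem_cons, Multiset.mem_cons] at hx
          rcases hx with rfl | rfl | hx
          · exact totPos_add hatp hqtp
          · exact hptp
          · exact hm₀S.1 x (hrm x hx)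
        · rw [Multiset.sum_cons, Multiset.sum_cons, ← hsum0]
          abel
      have hP4 : ((p0 + q) ::ₘ a ::ₘ r) ∈ S := by
        constructor
        · intro x hx
          rw [Multiset.mem_cons, Multiset.mem_cons] at hx
          rcases hx with rfl | rfl | hx
          · exact totPos_add hptp hqtp
          · exact hatp
          · exact hm₀S.1 x (hrm x hx)
        · rw [Multiset.sum_cons, Multiset.sum_cons, ← hsum0]
          abel
      refine hfour _ _ hP3 hP4 ?_ ?_ ?_
      · rw [Multiset.card_cons, Multiset.card_cons]
        omega
      · rw [Multiset.card_cons, Multiset.card_cons]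
        omega
      · intro h
        have hmem : a + q ∈ ((p0 + q) ::ₘ a ::ₘ r) := by
          rw [← h]
          exact Multiset.mem_cons_self _ _
        rw [Multiset.mem_cons, Multiset.mem_cons] at hmem
        rcases hmem with heq | heq | hmem
        · exact hp0ne (add_right_cancel heq).symm
        · have : q = 0 := by
            have h0 : a + q = a + 0 := by rw [heq, add_zero]
            exact add_left_cancel h0
          exact totPos_ne_zero hqtp this
        · exact nrm_sum_ne_one hatp hqtp (hunits (a + q) (hrm _ hmem))

end Five


theorem exists_three_partitions_iff (D : ℤ) (hD : 2 ≤ D) (hsf : Squarefree D) :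
    (∃ α : ℤ × ℤ, TotPos D α ∧ pK D α = 3) ↔ D ≠ 5 := by
  constructor
  · rintro ⟨α, hα, h3⟩ rfl
    exact Five.pK5_ne_three α hα h3
  · intro hne
    exact ⟨(3, 0), totPos_three hD, pK_three hD hne⟩
end

section
/- Let D ≥ 2 be a squarefree integer and K = ℚ(√D). There exists a totally positive α ∈ O_K with p_K(α) = 7 if and only if D ∉ {2, 5}. -/
namespace P7

/-- integer trace -/
def trI (D : ℤ) (a : ℤ × ℤ) : ℤ := if D % 4 = 1 then 2*a.1 + a.2 else 2*a.1

/-- 4 (emb a) (embConj a) as an integer -/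
def nrm (D : ℤ) (a : ℤ × ℤ) : ℤ := (trI D a)^2 - (if D % 4 = 1 then D else 4*D) * a.2^2

lemma sqrt_sq {D : ℤ} (hD : 2 ≤ D) : Real.sqrt D * Real.sqrt D = (D : ℝ) :=
  Real.mul_self_sqrt (by exact_mod_cast (by omega : (0:ℤ) ≤ D))

lemma trI_cast {D : ℤ} (hD : 2 ≤ D) (a : ℤ × ℤ) :
    (trI D a : ℝ) = emb D a + embConj D a := by
  unfold trI emb embConj omegaD omegaD'
  split <;> push_cast <;> ring

lemma nrm_cast {D : ℤ} (hD : 2 ≤ D) (a : ℤ × ℤ) :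
    (nrm D a : ℝ) = 4 * (emb D a * embConj D a) := by
  unfold nrm trI emb embConj omegaD omegaD'
  have h := sqrt_sq hD
  split <;> push_cast <;> nlinarith [h]

lemma pos_iff {u v : ℝ} : (0 < u ∧ 0 < v) ↔ (0 < u + v ∧ 0 < u * v) := by
  constructor
  · rintro ⟨h1, h2⟩; exact ⟨by linarith, mul_pos h1 h2⟩
  · rintro ⟨h1, h2⟩
    rcases lt_trichotomy u 0 with h | h | h
    · have : v < 0 := by
        rcases lt_trichotomy v 0 with h' | h' | h'
        · exact h'
        · nlinarith
        · nlinarith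
      constructor <;> nlinarith
    · simp [h] at h2
    · exact ⟨h, by nlinarith⟩

lemma nonneg_iff {u v : ℝ} : (0 ≤ u ∧ 0 ≤ v) ↔ (0 ≤ u + v ∧ 0 ≤ u * v) := by
  constructor
  · rintro ⟨h1, h2⟩; exact ⟨by linarith, mul_nonneg h1 h2⟩
  · rintro ⟨h1, h2⟩
    rcases le_or_gt 0 u with h | h
    · refine ⟨h, ?_⟩
      rcases le_or_gt 0 v with h' | h'
      · exact h'
      · nlinarith
    · exfalso
      have hv : 0 ≤ v := by nlinarith
      nlinarith

lemma totPos_iff {D : ℤ} (hD : 2 ≤ D) (a : ℤ × ℤ) :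
    TotPos D a ↔ (1 ≤ trI D a ∧ 1 ≤ nrm D a) := by
  rw [TotPos, pos_iff, ← trI_cast hD]
  constructor
  · rintro ⟨h1, h2⟩
    refine ⟨by exact_mod_cast h1, ?_⟩
    have : (0:ℝ) < (nrm D a : ℝ) := by rw [nrm_cast hD]; linarith
    exact_mod_cast this
  · rintro ⟨h1, h2⟩
    refine ⟨by exact_mod_cast (by linarith : (0:ℤ) < trI D a), ?_⟩
    have : (0:ℝ) < (nrm D a : ℝ) := by exact_mod_cast (by linarith : (0:ℤ) < nrm D a)
    rw [nrm_cast hD] at this; linarith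

lemma wk_iff {D : ℤ} (hD : 2 ≤ D) (a : ℤ × ℤ) :
    (0 ≤ emb D a ∧ 0 ≤ embConj D a) ↔ (0 ≤ trI D a ∧ 0 ≤ nrm D a) := by
  rw [nonneg_iff, ← trI_cast hD]
  constructor
  · rintro ⟨h1, h2⟩
    refine ⟨by exact_mod_cast h1, ?_⟩
    have : (0:ℝ) ≤ (nrm D a : ℝ) := by rw [nrm_cast hD]; linarith
    exact_mod_cast this
  · rintro ⟨h1, h2⟩
    refine ⟨by exact_mod_cast h1, ?_⟩
    have : (0:ℝ) ≤ (nrm D a : ℝ) := by exact_mod_cast h2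
    rw [nrm_cast hD] at this; linarith

lemma emb_add {D : ℤ} (a b : ℤ × ℤ) : emb D (a + b) = emb D a + emb D b := by
  unfold emb; push_cast [Prod.fst_add, Prod.snd_add]; ring

lemma embConj_add {D : ℤ} (a b : ℤ × ℤ) : embConj D (a + b) = embConj D a + embConj D b := by
  unfold embConj; push_cast [Prod.fst_add, Prod.snd_add]; ring

lemma trI_add {D : ℤ} (a b : ℤ × ℤ) : trI D (a + b) = trI D a + trI D b := by
  unfold trI; split <;> simp [Prod.fst_add, Prod.snd_add] <;> ring

lemma trI_sub {D : ℤ} (a b : ℤ × ℤ) : trI D (a - b) = trI D a - trI D b := by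
  unfold trI; split <;> simp [Prod.fst_sub, Prod.snd_sub] <;> ring



def tf (c a : ℤ × ℤ) : ℤ := c.1 * a.1 + c.2 * a.2

lemma tf_add (c a b : ℤ × ℤ) : tf c (a + b) = tf c a + tf c b := by
  unfold tf; simp [Prod.fst_add, Prod.snd_add]; ring

def tfHom (c : ℤ × ℤ) : ℤ × ℤ →+ ℤ := AddMonoidHom.mk' (tf c) (tf_add c)

lemma tf_sum (c : ℤ × ℤ) (m : Multiset (ℤ × ℤ)) : tf c m.sum = (m.map (tf c)).sum :=
  map_multiset_sum (tfHom c) m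

def enum (c : ℤ × ℤ) (N : ℕ) : List (ℤ × ℤ) → (ℤ × ℤ) → List (Multiset (ℤ × ℤ))
  | [], α => if α = 0 then [0] else []
  | β :: l, α => (List.range (N+1)).flatMap
      (fun k => if tf c (α - k • β) < 0 then [] else
        (enum c N l (α - k • β)).map (· + Multiset.replicate k β))

lemma enum_sound (c : ℤ × ℤ) (N : ℕ) :
    ∀ (l : List (ℤ × ℤ)) (α : ℤ × ℤ) (m : Multiset (ℤ × ℤ)),
      m ∈ enum c N l α → (∀ γ ∈ m, γ ∈ l) ∧ m.sum = α := by
  intro l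
  induction l with
  | nil =>
    intro α m hm
    simp only [enum] at hm
    split at hm
    · simp only [List.mem_singleton] at hm
      subst hm; simp_all
    · simp at hm
  | cons β l ih =>
    intro α m hm
    simp only [enum, List.mem_flatMap, List.mem_range] at hm
    obtain ⟨k, hk, hm⟩ := hm
    split at hm
    · simp at hm
    · simp only [List.mem_map] at hm
      obtain ⟨m', hm', rfl⟩ := hm
      obtain ⟨h1, h2⟩ := ih _ _ hm'
      constructor
      · intro γ hγ
        rcases Multiset.mem_add.1 hγ with h | h
        · exact List.mem_cons_of_mem _ (h1 _ h)
        · rw [Multiset.eq_of_mem_replicate h]; exact List.mem_cons_self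
      · rw [Multiset.sum_add, h2, Multiset.sum_replicate]
        abel

lemma enum_complete (c : ℤ × ℤ) (N : ℕ) :
    ∀ (l : List (ℤ × ℤ)) (α : ℤ × ℤ) (m : Multiset (ℤ × ℤ)),
      (∀ γ ∈ l, 0 ≤ tf c γ) →
      (∀ γ ∈ m, γ ∈ l) → (∀ γ, m.count γ ≤ N) → m.sum = α →
      m ∈ enum c N l α := by
  intro l
  induction l with
  | nil =>
    intro α m _ h1 _ h3
    have : m = 0 := Multiset.eq_zero_of_forall_notMem (fun γ hγ => by simpa using h1 γ hγ)
    subst this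
    simp only [enum]
    rw [if_pos (by simpa using h3.symm)]
    simp
  | cons β l ih =>
    intro α m h0 h1 h2 h3
    simp only [enum, List.mem_flatMap, List.mem_range]
    set k := m.count β with hk
    set m' := m.filter (· ≠ β) with hm'
    have hsplit : m = m' + Multiset.replicate k β := by
      ext γ
      rw [Multiset.count_add, hm', Multiset.count_filter, Multiset.count_replicate]
      by_cases h : γ = β
      · subst h; simp [hk]
      · rw [if_pos h, if_neg (fun h' => h h'.symm)]
        omega
    have hmem' : ∀ γ ∈ m', γ ∈ l := by
      intro γ hγ
      rw [hm', Multiset.mem_filter] at hγ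
      rcases List.mem_cons.1 (h1 γ hγ.1) with h | h
      · exact absurd h hγ.2
      · exact h
    have hcount' : ∀ γ, m'.count γ ≤ N := fun γ =>
      le_trans (by rw [hm']; exact Multiset.count_le_of_le _ (Multiset.filter_le _ _)) (h2 γ)
    have hsum' : m'.sum = α - k • β := by
      have h4 := h3
      rw [hsplit, Multiset.sum_add, Multiset.sum_replicate] at h4
      rw [← h4]; abel
    refine ⟨k, Nat.lt_succ_of_le (h2 β), ?_⟩
    rw [if_neg ?pos]
    case pos =>
      rw [← hsum', tf_sum]
      have hnn : ∀ t ∈ m'.map (tf c), 0 ≤ t := by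
        intro t ht
        obtain ⟨γ, hγ, rfl⟩ := Multiset.mem_map.1 ht
        exact h0 γ (List.mem_cons_of_mem _ (hmem' γ hγ))
      have := Multiset.sum_nonneg hnn
      omega
    simp only [List.mem_map]
    exact ⟨m', ih _ m' (fun γ hγ => h0 γ (List.mem_cons_of_mem _ hγ)) hmem' hcount' hsum', hsplit.symm⟩


end P7

namespace P7

/-- the candidate-list filter -/
def cand (D : ℤ) (L : List (ℤ × ℤ)) (α : ℤ × ℤ) : List (ℤ × ℤ) :=
  L.filter (fun β => decide (0 ≤ trI D (α - β) ∧ 0 ≤ nrm D (α - β)))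

lemma mem_cand {D : ℤ} {L : List (ℤ × ℤ)} {α β : ℤ × ℤ} :
    β ∈ cand D L α ↔ β ∈ L ∧ (0 ≤ trI D (α - β) ∧ 0 ≤ nrm D (α - β)) := by
  simp [cand, List.mem_filter]

/-- trace vector for D -/
def cD (D : ℤ) : ℤ × ℤ := if D % 4 = 1 then (2, 1) else (2, 0)

lemma trI_eq_tf (D : ℤ) (a : ℤ × ℤ) : trI D a = tf (cD D) a := by
  unfold trI cD tf; split <;> simp <;> ring

lemma card_le_trI {D : ℤ} (hD : 2 ≤ D) {m : Multiset (ℤ × ℤ)}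
    (h : ∀ γ ∈ m, TotPos D γ) :
    (if D % 4 = 1 then 1 else 2) * (Multiset.card m : ℤ) ≤ trI D m.sum := by
  set w : ℤ := if D % 4 = 1 then 1 else 2 with hw
  rw [trI_eq_tf, tf_sum]
  calc w * (Multiset.card m : ℤ) = (m.map (fun _ => w)).sum := by
        simp [Multiset.sum_replicate, mul_comm]
    _ ≤ (m.map (tf (cD D))).sum := by
        apply Multiset.sum_map_le_sum_map
        intro γ hγ
        rw [← trI_eq_tf]
        have h1 := ((totPos_iff hD γ).1 (h γ hγ)).1
        rw [hw]; unfold trI at h1 ⊢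
        split <;> omega

/-- every part of a partition of α fits the weak bound -/
lemma part_wk {D : ℤ} (hD : 2 ≤ D) {m : Multiset (ℤ × ℤ)} {α γ : ℤ × ℤ}
    (h : ∀ δ ∈ m, TotPos D δ) (hsum : m.sum = α) (hγ : γ ∈ m) :
    0 ≤ trI D (α - γ) ∧ 0 ≤ nrm D (α - γ) := by
  rw [← wk_iff hD]
  have hrest : α - γ = (m.erase γ).sum := by
    have h5 := Multiset.cons_erase hγ
    have : m.sum = γ + (m.erase γ).sum := by rw [← Multiset.sum_cons, h5]
    rw [← hsum, this]; abel
  have h1 : 0 ≤ emb D (m.erase γ).sum := by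
    have : emb D (m.erase γ).sum = ((m.erase γ).map (emb D)).sum :=
      map_multiset_sum (AddMonoidHom.mk' (emb D) (emb_add)) _
    rw [this]
    apply Multiset.sum_nonneg
    intro t ht
    obtain ⟨δ, hδ, rfl⟩ := Multiset.mem_map.1 ht
    exact le_of_lt (h δ (Multiset.mem_of_mem_erase hδ)).1
  have h2 : 0 ≤ embConj D (m.erase γ).sum := by
    have : embConj D (m.erase γ).sum = ((m.erase γ).map (embConj D)).sum :=
      map_multiset_sum (AddMonoidHom.mk' (embConj D) (embConj_add)) _
    rw [this]
    apply Multiset.sum_nonneg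
    intro t ht
    obtain ⟨δ, hδ, rfl⟩ := Multiset.mem_map.1 ht
    exact le_of_lt (h δ (Multiset.mem_of_mem_erase hδ)).2
  rw [hrest]
  exact ⟨h1, h2⟩

lemma pK_eq {D : ℤ} (hD : 2 ≤ D) (α : ℤ × ℤ) (N : ℕ) (L : List (ℤ × ℤ))
    (hLtp : ∀ β ∈ L, TotPos D β)
    (hLtf : ∀ β ∈ L, 0 ≤ tf (cD D) β)
    (hmaster : ∀ β, TotPos D β → 0 ≤ trI D (α - β) → 0 ≤ nrm D (α - β) → β ∈ L)
    (hN : trI D α ≤ (if D % 4 = 1 then 1 else 2) * (N : ℤ)) :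
    pK D α = (enum (cD D) N (cand D L α) α).toFinset.card := by
  have key : ∀ m : Multiset (ℤ × ℤ),
      ((∀ β ∈ m, TotPos D β) ∧ m.sum = α) ↔ m ∈ enum (cD D) N (cand D L α) α := by
    intro m
    constructor
    · rintro ⟨h1, h2⟩
      apply enum_complete
      · intro γ hγ
        rw [← trI_eq_tf]
        have := (totPos_iff hD γ).1 (hLtp γ (mem_cand.1 hγ).1)
        omega
      · intro γ hγ
        rw [mem_cand]
        have hwk := part_wk hD h1 h2 hγ
        exact ⟨hmaster γ (h1 γ hγ) hwk.1 hwk.2, hwk⟩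
      · intro γ
        have hcard := card_le_trI hD h1
        rw [h2] at hcard
        have := Multiset.count_le_card γ m
        split at hcard <;> split at hN <;> omega
      · exact h2
    · intro hm
      obtain ⟨h1, h2⟩ := enum_sound _ _ _ _ _ hm
      exact ⟨fun β hβ => hLtp β (mem_cand.1 (h1 β hβ)).1, h2⟩
  unfold pK
  rw [Nat.card_congr (Equiv.subtypeEquivRight key)]
  rw [Nat.card_congr (Equiv.subtypeEquivRight
    (fun m => (List.mem_toFinset (a := m) (l := enum (cD D) N (cand D L α) α)).symm))]
  exact Nat.card_eq_finsetCard _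

end P7

namespace P7

lemma y_bound {D : ℤ} (hD : 2 ≤ D) {γ : ℤ × ℤ} (h : TotPos D γ) {T : ℤ}
    (hT : trI D γ ≤ T) : (1 ≤ trI D γ) ∧ |γ.1| ≤ T ∧ |γ.2| ≤ T := by
  obtain ⟨h1, h2⟩ := (totPos_iff hD γ).1 h
  refine ⟨h1, ?_⟩
  unfold trI at h1 hT
  unfold nrm trI at h2
  by_cases hsplit : D % 4 = 1 <;>
    simp only [hsplit, if_true, if_false, reduceIte] at h1 h2 hT
  · -- D % 4 = 1, so D ≥ 5
    have hD5 : 5 ≤ D := by omega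
    constructor
    · rw [abs_le]; constructor <;> nlinarith [sq_nonneg γ.2, sq_nonneg (2*γ.1 + γ.2), sq_nonneg (γ.2 - (2*γ.1+γ.2)), sq_nonneg (γ.2 + (2*γ.1+γ.2))]
    · rw [abs_le]; constructor <;> nlinarith [sq_nonneg (γ.2 - (2*γ.1+γ.2)), sq_nonneg (γ.2 + (2*γ.1+γ.2))]
  · constructor
    · rw [abs_le]; constructor <;> omega
    · rw [abs_le]; constructor <;> nlinarith [sq_nonneg (γ.1 - γ.2), sq_nonneg (γ.1 + γ.2)]

lemma partitions_finite {D : ℤ} (hD : 2 ≤ D) (α : ℤ × ℤ) :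
    Finite {m : Multiset (ℤ × ℤ) // (∀ β ∈ m, TotPos D β) ∧ m.sum = α} := by
  set T : ℕ := (trI D α).toNat with hT
  set box : Finset (ℤ × ℤ) := Finset.Icc (-(T:ℤ)) T ×ˢ Finset.Icc (-(T:ℤ)) T with hbox
  have key : ∀ (m : Multiset (ℤ × ℤ)), (∀ β ∈ m, TotPos D β) → m.sum = α →
      (∀ γ ∈ m, γ ∈ box) ∧ (∀ γ, m.count γ ≤ T) := by
    intro m h1 h2
    have hbnd : ∀ γ ∈ m, 1 ≤ trI D γ ∧ |γ.1| ≤ (T:ℤ) ∧ |γ.2| ≤ (T:ℤ) := by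
      intro γ hγ
      have hwk := part_wk hD h1 h2 hγ
      have htr : trI D γ ≤ (T:ℤ) := by
        have := hwk.1
        rw [trI_sub] at this
        have h3 : trI D γ ≤ trI D α := by omega
        have h4 : 1 ≤ trI D γ := ((totPos_iff hD γ).1 (h1 γ hγ)).1
        omega
      exact y_bound hD (h1 γ hγ) htr
    constructor
    · intro γ hγ
      obtain ⟨_, hx, hy⟩ := hbnd γ hγ
      rw [hbox, Finset.mem_product, Finset.mem_Icc, Finset.mem_Icc]
      rw [abs_le] at hx hy
      exact ⟨⟨hx.1, hx.2⟩, ⟨hy.1, hy.2⟩⟩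
    · intro γ
      have hcard := card_le_trI hD h1
      rw [h2] at hcard
      have hc2 := Multiset.count_le_card γ m
      have : (Multiset.card m : ℤ) ≤ trI D α := by split at hcard <;> omega
      omega
  apply Finite.of_injective (β := ↥box → Fin (T+1))
    (f := fun m p => ⟨min (m.1.count p.1) T, by omega⟩)
  rintro ⟨m, hm1, hm2⟩ ⟨m', hm1', hm2'⟩ hf
  obtain ⟨hmem, hcnt⟩ := key m hm1 hm2
  obtain ⟨hmem', hcnt'⟩ := key m' hm1' hm2'
  apply Subtype.ext
  dsimp only at hf ⊢
  ext γ
  by_cases h : γ ∈ box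
  · have := congrFun hf ⟨γ, h⟩
    simp only [Fin.mk.injEq] at this
    have c1 := hcnt γ
    have c2 := hcnt' γ
    omega
  · rw [Multiset.count_eq_zero_of_notMem (fun hc => h (hmem γ hc)),
       Multiset.count_eq_zero_of_notMem (fun hc => h (hmem' γ hc))]

lemma pK_mono {D : ℤ} (hD : 2 ≤ D) (α β : ℤ × ℤ) (hβ : TotPos D β) :
    pK D α ≤ pK D (α + β) := by
  have : Finite {m : Multiset (ℤ × ℤ) // (∀ γ ∈ m, TotPos D γ) ∧ m.sum = α + β} :=
    partitions_finite hD _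
  apply Nat.card_le_card_of_injective
    (f := fun m => (⟨β ::ₘ m.1, by
      constructor
      · intro γ hγ
        rcases Multiset.mem_cons.1 hγ with h | h
        · subst h; exact hβ
        · exact m.2.1 γ h
      · rw [Multiset.sum_cons, m.2.2]; abel⟩ :
      {m : Multiset (ℤ × ℤ) // (∀ γ ∈ m, TotPos D γ) ∧ m.sum = α + β}))
  rintro ⟨m, hm⟩ ⟨m', hm'⟩ h
  simp only [Subtype.mk.injEq] at h ⊢
  exact (Multiset.cons_inj_right β).mp h

lemma pK_map {D : ℤ} (M Minv : ℤ × ℤ → ℤ × ℤ)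
    (hMadd : ∀ a b, M (a + b) = M a + M b)
    (hNadd : ∀ a b, Minv (a + b) = Minv a + Minv b)
    (hMN : ∀ a, M (Minv a) = a) (hNM : ∀ a, Minv (M a) = a)
    (hTP : ∀ a, TotPos D a ↔ TotPos D (M a)) (α : ℤ × ℤ) :
    pK D (M α) = pK D α := by
  unfold pK
  apply Nat.card_congr
  have hMsum : ∀ m : Multiset (ℤ × ℤ), (m.map M).sum = M m.sum := fun m =>
    (map_multiset_sum (AddMonoidHom.mk' M hMadd) m).symm
  have hNsum : ∀ m : Multiset (ℤ × ℤ), (m.map Minv).sum = Minv m.sum := fun m =>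
    (map_multiset_sum (AddMonoidHom.mk' Minv hNadd) m).symm
  refine ⟨fun m => ⟨m.1.map Minv, ?_, ?_⟩, fun m => ⟨m.1.map M, ?_, ?_⟩, ?_, ?_⟩
  · intro γ hγ
    obtain ⟨δ, hδ, rfl⟩ := Multiset.mem_map.1 hγ
    rw [hTP, hMN]
    exact m.2.1 δ hδ
  · rw [hNsum, m.2.2, hNM]
  · intro γ hγ
    obtain ⟨δ, hδ, rfl⟩ := Multiset.mem_map.1 hγ
    rw [← hTP]
    exact m.2.1 δ hδ
  · rw [hMsum, m.2.2]
  · rintro ⟨m, hm⟩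
    apply Subtype.ext
    dsimp only
    rw [Multiset.map_map]
    have h : M ∘ Minv = id := funext hMN
    rw [h, Multiset.map_id]
  · rintro ⟨m, hm⟩
    apply Subtype.ext
    dsimp only
    rw [Multiset.map_map]
    have h : Minv ∘ M = id := funext hNM
    rw [h, Multiset.map_id]

end P7

namespace P7
def L2 : List (ℤ × ℤ) := [((1 : ℤ), (0 : ℤ)), ((2 : ℤ), (-1 : ℤ)), ((2 : ℤ), (0 : ℤ)), ((2 : ℤ), (1 : ℤ)), ((3 : ℤ), (-2 : ℤ)), ((3 : ℤ), (-1 : ℤ)), ((3 : ℤ), (0 : ℤ)), ((3 : ℤ), (1 : ℤ)), ((3 : ℤ), (2 : ℤ)), ((4 : ℤ), (-2 : ℤ)), ((4 : ℤ), (-1 : ℤ)), ((4 : ℤ), (0 : ℤ)), ((4 : ℤ), (1 : ℤ)), ((4 : ℤ), (2 : ℤ)), ((5 : ℤ), (-3 : ℤ)), ((5 : ℤ), (-2 : ℤ)), ((5 : ℤ), (-1 : ℤ)), ((5 : ℤ), (0 : ℤ)), ((5 : ℤ), (1 : ℤ)), ((5 : ℤ), (2 : ℤ)), ((5 : ℤ),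 (3 : ℤ)), ((6 : ℤ), (-4 : ℤ)), ((6 : ℤ), (-3 : ℤ)), ((6 : ℤ), (-2 : ℤ)), ((6 : ℤ), (-1 : ℤ)), ((6 : ℤ), (0 : ℤ)), ((6 : ℤ), (1 : ℤ)), ((6 : ℤ), (2 : ℤ)), ((6 : ℤ), (3 : ℤ)), ((6 : ℤ), (4 : ℤ)), ((7 : ℤ), (-4 : ℤ)), ((7 : ℤ), (-3 : ℤ)), ((7 : ℤ), (-2 : ℤ)), ((7 : ℤ), (-1 : ℤ)), ((7 : ℤ), (0 : ℤ)), ((7 : ℤ), (1 : ℤ)), ((7 : ℤ), (2 : ℤ)), ((7 : ℤ), (3 : ℤ)), ((7 : ℤ), (4 : ℤ)), ((8 : ℤ), (-5 : ℤ)), ((8 : ℤ), (-4 : ℤ)), ((8 : ℤ), (-3 : ℤ)), ((8 : ℤ), (-2 : ℤ)), ((8 : ℤ), (-1 : ℤ)), ((8 : ℤ), (0 : ℤ)), ((8 : ℤ), (1 : ℤ)), ((8 : ℤ), (2 : ℤ)), ((8 : ℤ), (3 : ℤ)), ((8 : ℤ), (4 : ℤ)), ((8 : ℤ), (5 : ℤ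))]
def L5 : List (ℤ × ℤ)  := [((1 : ℤ), (0 : ℤ)), ((2 : ℤ), (-1 : ℤ)), ((1 : ℤ), (1 : ℤ)), ((2 : ℤ), (0 : ℤ)), ((3 : ℤ), (-1 : ℤ)), ((2 : ℤ), (1 : ℤ)), ((4 : ℤ), (-2 : ℤ)), ((3 : ℤ), (0 : ℤ)), ((2 : ℤ), (2 : ℤ)), ((5 : ℤ), (-3 : ℤ)), ((4 : ℤ), (-1 : ℤ)), ((3 : ℤ), (1 : ℤ)), ((2 : ℤ), (3 : ℤ)), ((5 : ℤ), (-2 : ℤ)), ((4 : ℤ), (0 : ℤ)), ((3 : ℤ), (2 : ℤ)), ((6 : ℤ), (-3 : ℤ)), ((5 : ℤ), (-1 : ℤ)), ((4 : ℤ), (1 : ℤ)), ((3 : ℤ), (3 : ℤ)), ((7 : ℤ), (-4 : ℤ)), ((6 : ℤ), (-2 : ℤ)), ((5 : ℤ), (0 : ℤ)), ((4 : ℤ), (2 : ℤ)), ((3 : ℤ), (4 : ℤ))]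
def L3 : List (ℤ × ℤ)  := [((1 : ℤ), (0 : ℤ)), ((2 : ℤ), (-1 : ℤ)), ((2 : ℤ), (0 : ℤ)), ((2 : ℤ), (1 : ℤ)), ((3 : ℤ), (-1 : ℤ)), ((3 : ℤ), (0 : ℤ)), ((3 : ℤ), (1 : ℤ)), ((4 : ℤ), (-2 : ℤ)), ((4 : ℤ), (-1 : ℤ)), ((4 : ℤ), (0 : ℤ)), ((4 : ℤ), (1 : ℤ)), ((4 : ℤ), (2 : ℤ)), ((5 : ℤ), (-2 : ℤ)), ((5 : ℤ), (-1 : ℤ)), ((5 : ℤ), (0 : ℤ)), ((5 : ℤ), (1 : ℤ)), ((5 : ℤ), (2 : ℤ))]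
def L13 : List (ℤ × ℤ) := [((1 : ℤ), (0 : ℤ)), ((2 : ℤ), (0 : ℤ)), ((3 : ℤ), (-1 : ℤ)), ((2 : ℤ), (1 : ℤ)), ((3 : ℤ), (0 : ℤ)), ((4 : ℤ), (-1 : ℤ)), ((3 : ℤ), (1 : ℤ)), ((5 : ℤ), (-2 : ℤ)), ((4 : ℤ), (0 : ℤ)), ((3 : ℤ), (2 : ℤ)), ((5 : ℤ), (-1 : ℤ)), ((4 : ℤ), (1 : ℤ)), ((6 : ℤ), (-2 : ℤ)), ((5 : ℤ), (0 : ℤ)), ((4 : ℤ), (2 : ℤ)), ((7 : ℤ), (-3 : ℤ)), ((6 : ℤ), (-1 : ℤ)), ((5 : ℤ), (1 : ℤ)), ((4 : ℤ), (3 : ℤ))]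
def L17 : List (ℤ × ℤ) := [((1 : ℤ), (0 : ℤ)), ((2 : ℤ), (0 : ℤ)), ((3 : ℤ), (-1 : ℤ)), ((2 : ℤ), (1 : ℤ)), ((3 : ℤ), (0 : ℤ)), ((4 : ℤ), (-1 : ℤ)), ((3 : ℤ), (1 : ℤ)), ((4 : ℤ), (0 : ℤ)), ((5 : ℤ), (-1 : ℤ)), ((4 : ℤ), (1 : ℤ)), ((6 : ℤ), (-2 : ℤ)), ((5 : ℤ), (0 : ℤ)), ((4 : ℤ), (2 : ℤ)), ((6 : ℤ), (-1 : ℤ)), ((5 : ℤ), (1 : ℤ))]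
def L21 : List (ℤ × ℤ) := [((1 : ℤ), (0 : ℤ)), ((2 : ℤ), (0 : ℤ)), ((3 : ℤ), (-1 : ℤ)), ((2 : ℤ), (1 : ℤ)), ((3 : ℤ), (0 : ℤ)), ((4 : ℤ), (-1 : ℤ)), ((3 : ℤ), (1 : ℤ)), ((4 : ℤ), (0 : ℤ)), ((5 : ℤ), (-1 : ℤ)), ((4 : ℤ), (1 : ℤ)), ((6 : ℤ), (-2 : ℤ)), ((5 : ℤ), (0 : ℤ)), ((4 : ℤ), (2 : ℤ)), ((6 : ℤ), (-1 : ℤ)), ((5 : ℤ), (1 : ℤ))]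

lemma tp2 (β : ℤ × ℤ) : TotPos 2 β ↔ 1 ≤ 2*β.1 ∧ 1 ≤ (2*β.1)^2 - 8*β.2^2 := by
  rw [totPos_iff (by norm_num)]
  norm_num [trI, nrm]

lemma tp3 (β : ℤ × ℤ) : TotPos 3 β ↔ 1 ≤ 2*β.1 ∧ 1 ≤ (2*β.1)^2 - 12*β.2^2 := by
  rw [totPos_iff (by norm_num)]
  norm_num [trI, nrm]

lemma tp5 (β : ℤ × ℤ) : TotPos 5 β ↔ 1 ≤ 2*β.1+β.2 ∧ 1 ≤ (2*β.1+β.2)^2 - 5*β.2^2 := by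
  rw [totPos_iff (by norm_num)]
  norm_num [trI, nrm]

lemma tp13 (β : ℤ × ℤ) : TotPos 13 β ↔ 1 ≤ 2*β.1+β.2 ∧ 1 ≤ (2*β.1+β.2)^2 - 13*β.2^2 := by
  rw [totPos_iff (by norm_num)]
  norm_num [trI, nrm]

lemma tp17 (β : ℤ × ℤ) : TotPos 17 β ↔ 1 ≤ 2*β.1+β.2 ∧ 1 ≤ (2*β.1+β.2)^2 - 17*β.2^2 := by
  rw [totPos_iff (by norm_num)]
  norm_num [trI, nrm]

lemma tp21 (β : ℤ × ℤ) : TotPos 21 β ↔ 1 ≤ 2*β.1+β.2 ∧ 1 ≤ (2*β.1+β.2)^2 - 21*β.2^2 := by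
  rw [totPos_iff (by norm_num)]
  norm_num [trI, nrm]

lemma master2 (β : ℤ × ℤ) (h : TotPos 2 β) (hb : trI 2 β ≤ 16) : β ∈ L2 := by
  obtain ⟨h1, h2⟩ := (tp2 β).1 h
  simp only [trI, show ¬((2:ℤ)%4 = 1) by norm_num, if_false] at hb
  have hx : 1 ≤ β.1 ∧ β.1 ≤ 8 := by omega
  have hy : -5 ≤ β.2 ∧ β.2 ≤ 5 := by constructor <;> nlinarith
  have key : ∀ x ∈ Finset.Icc (1:ℤ) 8, ∀ y ∈ Finset.Icc (-5:ℤ) 5,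
      1 ≤ (2*x)^2 - 8*y^2 → (x, y) ∈ L2 := by decide
  exact key β.1 (Finset.mem_Icc.2 hx) β.2 (Finset.mem_Icc.2 hy) h2

lemma master3 (β : ℤ × ℤ) (h : TotPos 3 β) (hb : trI 3 β ≤ 10) : β ∈ L3 := by
  obtain ⟨h1, h2⟩ := (tp3 β).1 h
  simp only [trI, show ¬((3:ℤ)%4 = 1) by norm_num, if_false] at hb
  have hx : 1 ≤ β.1 ∧ β.1 ≤ 5 := by omega
  have hy : -2 ≤ β.2 ∧ β.2 ≤ 2 := by constructor <;> nlinarith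
  have key : ∀ x ∈ Finset.Icc (1:ℤ) 5, ∀ y ∈ Finset.Icc (-2:ℤ) 2,
      1 ≤ (2*x)^2 - 12*y^2 → (x, y) ∈ L3 := by decide
  exact key β.1 (Finset.mem_Icc.2 hx) β.2 (Finset.mem_Icc.2 hy) h2

lemma master5 (β : ℤ × ℤ) (h : TotPos 5 β) (hb : trI 5 β ≤ 10) : β ∈ L5 := by
  obtain ⟨h1, h2⟩ := (tp5 β).1 h
  simp only [trI, show ((5:ℤ)%4 = 1) by norm_num, if_true] at hb
  have hy : -4 ≤ β.2 ∧ β.2 ≤ 4 := by constructor <;> nlinarith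
  have hx : -1 ≤ β.1 ∧ β.1 ≤ 7 := by omega
  have key : ∀ x ∈ Finset.Icc (-1:ℤ) 7, ∀ y ∈ Finset.Icc (-4:ℤ) 4,
      1 ≤ 2*x+y → 2*x+y ≤ 10 → 1 ≤ (2*x+y)^2 - 5*y^2 → (x, y) ∈ L5 := by decide
  exact key β.1 (Finset.mem_Icc.2 hx) β.2 (Finset.mem_Icc.2 hy) h1 hb h2

lemma master13 (β : ℤ × ℤ) (h : TotPos 13 β) (hb : trI 13 β ≤ 11) : β ∈ L13 := by
  obtain ⟨h1, h2⟩ := (tp13 β).1 h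
  simp only [trI, show ((13:ℤ)%4 = 1) by norm_num, if_true] at hb
  have hy : -3 ≤ β.2 ∧ β.2 ≤ 3 := by constructor <;> nlinarith
  have hx : -1 ≤ β.1 ∧ β.1 ≤ 7 := by omega
  have key : ∀ x ∈ Finset.Icc (-1:ℤ) 7, ∀ y ∈ Finset.Icc (-3:ℤ) 3,
      1 ≤ 2*x+y → 2*x+y ≤ 11 → 1 ≤ (2*x+y)^2 - 13*y^2 → (x, y) ∈ L13 := by decide
  exact key β.1 (Finset.mem_Icc.2 hx) β.2 (Finset.mem_Icc.2 hy) h1 hb h2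

lemma master17 (β : ℤ × ℤ) (h : TotPos 17 β) (hb : trI 17 β ≤ 11) : β ∈ L17 := by
  obtain ⟨h1, h2⟩ := (tp17 β).1 h
  simp only [trI, show ((17:ℤ)%4 = 1) by norm_num, if_true] at hb
  have hy : -3 ≤ β.2 ∧ β.2 ≤ 3 := by constructor <;> nlinarith
  have hx : -1 ≤ β.1 ∧ β.1 ≤ 7 := by omega
  have key : ∀ x ∈ Finset.Icc (-1:ℤ) 7, ∀ y ∈ Finset.Icc (-3:ℤ) 3,
      1 ≤ 2*x+y → 2*x+y ≤ 11 → 1 ≤ (2*x+y)^2 - 17*y^2 → (x, y) ∈ L17 := by decide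
  exact key β.1 (Finset.mem_Icc.2 hx) β.2 (Finset.mem_Icc.2 hy) h1 hb h2

lemma master21 (β : ℤ × ℤ) (h : TotPos 21 β) (hb : trI 21 β ≤ 11) : β ∈ L21 := by
  obtain ⟨h1, h2⟩ := (tp21 β).1 h
  simp only [trI, show ((21:ℤ)%4 = 1) by norm_num, if_true] at hb
  have hy : -3 ≤ β.2 ∧ β.2 ≤ 3 := by constructor <;> nlinarith
  have hx : -1 ≤ β.1 ∧ β.1 ≤ 7 := by omega
  have key : ∀ x ∈ Finset.Icc (-1:ℤ) 7, ∀ y ∈ Finset.Icc (-3:ℤ) 3,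
      1 ≤ 2*x+y → 2*x+y ≤ 11 → 1 ≤ (2*x+y)^2 - 21*y^2 → (x, y) ∈ L21 := by decide
  exact key β.1 (Finset.mem_Icc.2 hx) β.2 (Finset.mem_Icc.2 hy) h1 hb h2

end P7

namespace P7

lemma hLtp2 : ∀ β ∈ L2, TotPos 2 β := by
  have key : ∀ β ∈ L2, 1 ≤ trI 2 β ∧ 1 ≤ nrm 2 β := by decide
  exact fun β h => (totPos_iff (by norm_num) β).2 (key β h)

lemma hLtf2 : ∀ β ∈ L2, 0 ≤ tf (cD 2) β := by decide

lemma hLtp3 : ∀ β ∈ L3, TotPos 3 β := by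
  have key : ∀ β ∈ L3, 1 ≤ trI 3 β ∧ 1 ≤ nrm 3 β := by decide
  exact fun β h => (totPos_iff (by norm_num) β).2 (key β h)

lemma hLtf3 : ∀ β ∈ L3, 0 ≤ tf (cD 3) β := by decide

lemma hLtp5 : ∀ β ∈ L5, TotPos 5 β := by
  have key : ∀ β ∈ L5, 1 ≤ trI 5 β ∧ 1 ≤ nrm 5 β := by decide
  exact fun β h => (totPos_iff (by norm_num) β).2 (key β h)

lemma hLtf5 : ∀ β ∈ L5, 0 ≤ tf (cD 5) β := by decide

lemma hLtp13 : ∀ β ∈ L13, TotPos 13 β := by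
  have key : ∀ β ∈ L13, 1 ≤ trI 13 β ∧ 1 ≤ nrm 13 β := by decide
  exact fun β h => (totPos_iff (by norm_num) β).2 (key β h)

lemma hLtf13 : ∀ β ∈ L13, 0 ≤ tf (cD 13) β := by decide

lemma hLtp17 : ∀ β ∈ L17, TotPos 17 β := by
  have key : ∀ β ∈ L17, 1 ≤ trI 17 β ∧ 1 ≤ nrm 17 β := by decide
  exact fun β h => (totPos_iff (by norm_num) β).2 (key β h)

lemma hLtf17 : ∀ β ∈ L17, 0 ≤ tf (cD 17) β := by decide

lemma hLtp21 : ∀ β ∈ L21, TotPos 21 β := by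
  have key : ∀ β ∈ L21, 1 ≤ trI 21 β ∧ 1 ≤ nrm 21 β := by decide
  exact fun β h => (totPos_iff (by norm_num) β).2 (key β h)

lemma hLtf21 : ∀ β ∈ L21, 0 ≤ tf (cD 21) β := by decide

lemma app2 (α : ℤ × ℤ) (hα : trI 2 α ≤ 16) :
    ∀ β, TotPos 2 β → 0 ≤ trI 2 (α - β) → 0 ≤ nrm 2 (α - β) → β ∈ L2 := by
  intro β h1 h2 _
  rw [trI_sub] at h2
  exact master2 β h1 (by omega)

lemma app3 (α : ℤ × ℤ) (hα : trI 3 α ≤ 10) :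
    ∀ β, TotPos 3 β → 0 ≤ trI 3 (α - β) → 0 ≤ nrm 3 (α - β) → β ∈ L3 := by
  intro β h1 h2 _
  rw [trI_sub] at h2
  exact master3 β h1 (by omega)

lemma app5 (α : ℤ × ℤ) (hα : trI 5 α ≤ 10) :
    ∀ β, TotPos 5 β → 0 ≤ trI 5 (α - β) → 0 ≤ nrm 5 (α - β) → β ∈ L5 := by
  intro β h1 h2 _
  rw [trI_sub] at h2
  exact master5 β h1 (by omega)

lemma app13 (α : ℤ × ℤ) (hα : trI 13 α ≤ 11) :
    ∀ β, TotPos 13 β → 0 ≤ trI 13 (α - β) → 0 ≤ nrm 13 (α - β) → β ∈ L13 := by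
  intro β h1 h2 _
  rw [trI_sub] at h2
  exact master13 β h1 (by omega)

lemma app17 (α : ℤ × ℤ) (hα : trI 17 α ≤ 11) :
    ∀ β, TotPos 17 β → 0 ≤ trI 17 (α - β) → 0 ≤ nrm 17 (α - β) → β ∈ L17 := by
  intro β h1 h2 _
  rw [trI_sub] at h2
  exact master17 β h1 (by omega)

lemma app21 (α : ℤ × ℤ) (hα : trI 21 α ≤ 11) :
    ∀ β, TotPos 21 β → 0 ≤ trI 21 (α - β) → 0 ≤ nrm 21 (α - β) → β ∈ L21 := by
  intro β h1 h2 _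
  rw [trI_sub] at h2
  exact master21 β h1 (by omega)

set_option maxRecDepth 100000 in
set_option maxHeartbeats 4000000 in
lemma v2_1_0 : pK 2 (1, 0) = 1 := by
  rw [pK_eq (by norm_num) (1,0) 1 L2 hLtp2 hLtf2 (app2 _ (by norm_num [trI])) (by norm_num [trI])]
  decide

set_option maxRecDepth 100000 in
set_option maxHeartbeats 4000000 in
lemma v2_2_0 : pK 2 (2, 0) = 2 := by
  rw [pK_eq (by norm_num) (2,0) 2 L2 hLtp2 hLtf2 (app2 _ (by norm_num [trI])) (by norm_num [trI])]
  decide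

set_option maxRecDepth 100000 in
set_option maxHeartbeats 4000000 in
lemma v2_3_0 : pK 2 (3, 0) = 3 := by
  rw [pK_eq (by norm_num) (3,0) 3 L2 hLtp2 hLtf2 (app2 _ (by norm_num [trI])) (by norm_num [trI])]
  decide

set_option maxRecDepth 100000 in
set_option maxHeartbeats 4000000 in
lemma v2_4_0 : pK 2 (4, 0) = 6 := by
  rw [pK_eq (by norm_num) (4,0) 4 L2 hLtp2 hLtf2 (app2 _ (by norm_num [trI])) (by norm_num [trI])]
  decide

set_option maxRecDepth 100000 in
set_option maxHeartbeats 4000000 in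
lemma v2_5_0 : pK 2 (5, 0) = 10 := by
  rw [pK_eq (by norm_num) (5,0) 5 L2 hLtp2 hLtf2 (app2 _ (by norm_num [trI])) (by norm_num [trI])]
  decide

set_option maxRecDepth 100000 in
set_option maxHeartbeats 4000000 in
lemma v2_2_1 : pK 2 (2, 1) = 1 := by
  rw [pK_eq (by norm_num) (2,1) 2 L2 hLtp2 hLtf2 (app2 _ (by norm_num [trI])) (by norm_num [trI])]
  decide

set_option maxRecDepth 100000 in
set_option maxHeartbeats 4000000 in
lemma v2_3_1 : pK 2 (3, 1) = 2 := by
  rw [pK_eq (by norm_num) (3,1) 3 L2 hLtp2 hLtf2 (app2 _ (by norm_num [trI])) (by norm_num [trI])]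
  decide

set_option maxRecDepth 100000 in
set_option maxHeartbeats 4000000 in
lemma v2_4_1 : pK 2 (4, 1) = 4 := by
  rw [pK_eq (by norm_num) (4,1) 4 L2 hLtp2 hLtf2 (app2 _ (by norm_num [trI])) (by norm_num [trI])]
  decide

set_option maxRecDepth 100000 in
set_option maxHeartbeats 4000000 in
lemma v2_5_1 : pK 2 (5, 1) = 8 := by
  rw [pK_eq (by norm_num) (5,1) 5 L2 hLtp2 hLtf2 (app2 _ (by norm_num [trI])) (by norm_num [trI])]
  decide

set_option maxRecDepth 100000 in
set_option maxHeartbeats 4000000 in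
lemma v2_4_2 : pK 2 (4, 2) = 3 := by
  rw [pK_eq (by norm_num) (4,2) 4 L2 hLtp2 hLtf2 (app2 _ (by norm_num [trI])) (by norm_num [trI])]
  decide

set_option maxRecDepth 100000 in
set_option maxHeartbeats 4000000 in
lemma v2_5_2 : pK 2 (5, 2) = 6 := by
  rw [pK_eq (by norm_num) (5,2) 5 L2 hLtp2 hLtf2 (app2 _ (by norm_num [trI])) (by norm_num [trI])]
  decide

set_option maxRecDepth 100000 in
set_option maxHeartbeats 4000000 in
lemma v2_6_2 : pK 2 (6, 2) = 12 := by
  rw [pK_eq (by norm_num) (6,2) 6 L2 hLtp2 hLtf2 (app2 _ (by norm_num [trI])) (by norm_num [trI])]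
  decide

set_option maxRecDepth 100000 in
set_option maxHeartbeats 4000000 in
lemma v2_6_3 : pK 2 (6, 3) = 6 := by
  rw [pK_eq (by norm_num) (6,3) 6 L2 hLtp2 hLtf2 (app2 _ (by norm_num [trI])) (by norm_num [trI])]
  decide

set_option maxRecDepth 100000 in
set_option maxHeartbeats 4000000 in
lemma v2_7_3 : pK 2 (7, 3) = 13 := by
  rw [pK_eq (by norm_num) (7,3) 7 L2 hLtp2 hLtf2 (app2 _ (by norm_num [trI])) (by norm_num [trI])]
  decide

set_option maxRecDepth 100000 in
set_option maxHeartbeats 4000000 in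
lemma v2_8_4 : pK 2 (8, 4) = 16 := by
  rw [pK_eq (by norm_num) (8,4) 8 L2 hLtp2 hLtf2 (app2 _ (by norm_num [trI])) (by norm_num [trI])]
  decide

set_option maxRecDepth 100000 in
set_option maxHeartbeats 4000000 in
lemma v5_1_0 : pK 5 (1, 0) = 1 := by
  rw [pK_eq (by norm_num) (1,0) 2 L5 hLtp5 hLtf5 (app5 _ (by norm_num [trI])) (by norm_num [trI])]
  decide

set_option maxRecDepth 100000 in
set_option maxHeartbeats 4000000 in
lemma v5_2_0 : pK 5 (2, 0) = 2 := by
  rw [pK_eq (by norm_num) (2,0) 4 L5 hLtp5 hLtf5 (app5 _ (by norm_num [trI])) (by norm_num [trI])]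
  decide

set_option maxRecDepth 100000 in
set_option maxHeartbeats 4000000 in
lemma v5_3_0 : pK 5 (3, 0) = 4 := by
  rw [pK_eq (by norm_num) (3,0) 6 L5 hLtp5 hLtf5 (app5 _ (by norm_num [trI])) (by norm_num [trI])]
  decide

set_option maxRecDepth 100000 in
set_option maxHeartbeats 4000000 in
lemma v5_4_0 : pK 5 (4, 0) = 8 := by
  rw [pK_eq (by norm_num) (4,0) 8 L5 hLtp5 hLtf5 (app5 _ (by norm_num [trI])) (by norm_num [trI])]
  decide

set_option maxRecDepth 100000 in
set_option maxHeartbeats 4000000 in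
lemma v5_2_1 : pK 5 (2, 1) = 2 := by
  rw [pK_eq (by norm_num) (2,1) 5 L5 hLtp5 hLtf5 (app5 _ (by norm_num [trI])) (by norm_num [trI])]
  decide

set_option maxRecDepth 100000 in
set_option maxHeartbeats 4000000 in
lemma v5_3_1 : pK 5 (3, 1) = 4 := by
  rw [pK_eq (by norm_num) (3,1) 7 L5 hLtp5 hLtf5 (app5 _ (by norm_num [trI])) (by norm_num [trI])]
  decide

set_option maxRecDepth 100000 in
set_option maxHeartbeats 4000000 in
lemma v5_4_1 : pK 5 (4, 1) = 9 := by
  rw [pK_eq (by norm_num) (4,1) 9 L5 hLtp5 hLtf5 (app5 _ (by norm_num [trI])) (by norm_num [trI])]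
  decide

set_option maxRecDepth 100000 in
set_option maxHeartbeats 4000000 in
lemma v5_4_2 : pK 5 (4, 2) = 10 := by
  rw [pK_eq (by norm_num) (4,2) 10 L5 hLtp5 hLtf5 (app5 _ (by norm_num [trI])) (by norm_num [trI])]
  decide

set_option maxRecDepth 100000 in
set_option maxHeartbeats 4000000 in
lemma v3_5_1 : pK 3 (5, 1) = 7 := by
  rw [pK_eq (by norm_num) (5,1) 5 L3 hLtp3 hLtf3 (app3 _ (by norm_num [trI])) (by norm_num [trI])]
  decide

set_option maxRecDepth 100000 in
set_option maxHeartbeats 4000000 in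
lemma v13_5_1 : pK 13 (5, 1) = 7 := by
  rw [pK_eq (by norm_num) (5,1) 11 L13 hLtp13 hLtf13 (app13 _ (by norm_num [trI])) (by norm_num [trI])]
  decide

set_option maxRecDepth 100000 in
set_option maxHeartbeats 4000000 in
lemma v17_5_1 : pK 17 (5, 1) = 7 := by
  rw [pK_eq (by norm_num) (5,1) 11 L17 hLtp17 hLtf17 (app17 _ (by norm_num [trI])) (by norm_num [trI])]
  decide

set_option maxRecDepth 100000 in
set_option maxHeartbeats 4000000 in
lemma v21_5_1 : pK 21 (5, 1) = 7 := by
  rw [pK_eq (by norm_num) (5,1) 11 L21 hLtp21 hLtf21 (app21 _ (by norm_num [trI])) (by norm_num [trI])]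
  decide

end P7

namespace P7

lemma conj2 (α : ℤ × ℤ) : pK 2 (α.1, -α.2) = pK 2 α := by
  apply pK_map (fun p => (p.1, -p.2)) (fun p => (p.1, -p.2))
  · intro a b; simp only [Prod.mk_add_mk, Prod.fst_add, Prod.snd_add, Prod.mk.injEq]; exact ⟨trivial, by ring⟩
  · intro a b; simp only [Prod.mk_add_mk, Prod.fst_add, Prod.snd_add, Prod.mk.injEq]; exact ⟨trivial, by ring⟩
  · intro a; rw [Prod.ext_iff]; constructor <;> dsimp only <;> ring
  · intro a; rw [Prod.ext_iff]; constructor <;> dsimp only <;> ring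
  · intro a
    rw [tp2, tp2]
    dsimp only
    constructor <;> rintro ⟨h1, h2⟩ <;> exact ⟨h1, by nlinarith⟩

lemma unit2 (α : ℤ × ℤ) : pK 2 (3*α.1+4*α.2, 2*α.1+3*α.2) = pK 2 α := by
  apply pK_map (fun p => (3*p.1+4*p.2, 2*p.1+3*p.2)) (fun p => (3*p.1-4*p.2, -2*p.1+3*p.2))
  · intro a b; simp only [Prod.mk_add_mk, Prod.fst_add, Prod.snd_add, Prod.mk.injEq]; constructor <;> ring
  · intro a b; simp only [Prod.mk_add_mk, Prod.fst_add, Prod.snd_add, Prod.mk.injEq]; constructor <;> ring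
  · intro a; rw [Prod.ext_iff]; constructor <;> dsimp only <;> ring
  · intro a; rw [Prod.ext_iff]; constructor <;> dsimp only <;> ring
  · intro a
    rw [tp2, tp2]
    dsimp only
    constructor <;> rintro ⟨h1, h2⟩
    · refine ⟨by nlinarith, by nlinarith⟩
    · refine ⟨by nlinarith, by nlinarith⟩

lemma conj5 (α : ℤ × ℤ) : pK 5 (α.1 + α.2, -α.2) = pK 5 α := by
  apply pK_map (fun p => (p.1+p.2, -p.2)) (fun p => (p.1+p.2, -p.2))
  · intro a b; simp only [Prod.mk_add_mk, Prod.fst_add, Prod.snd_add, Prod.mk.injEq]; constructor <;> ring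
  · intro a b; simp only [Prod.mk_add_mk, Prod.fst_add, Prod.snd_add, Prod.mk.injEq]; constructor <;> ring
  · intro a; rw [Prod.ext_iff]; constructor <;> dsimp only <;> ring
  · intro a; rw [Prod.ext_iff]; constructor <;> dsimp only <;> ring
  · intro a
    rw [tp5, tp5]
    dsimp only
    constructor <;> rintro ⟨h1, h2⟩
    · refine ⟨by nlinarith, by nlinarith⟩
    · refine ⟨by nlinarith, by nlinarith⟩

lemma unit5 (α : ℤ × ℤ) : pK 5 (α.1+α.2, α.1+2*α.2) = pK 5 α := by
  apply pK_map (fun p => (p.1+p.2, p.1+2*p.2)) (fun p => (2*p.1-p.2, p.2-p.1))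
  · intro a b; simp only [Prod.mk_add_mk, Prod.fst_add, Prod.snd_add, Prod.mk.injEq]; constructor <;> ring
  · intro a b; simp only [Prod.mk_add_mk, Prod.fst_add, Prod.snd_add, Prod.mk.injEq]; constructor <;> ring
  · intro a; rw [Prod.ext_iff]; constructor <;> dsimp only <;> ring
  · intro a; rw [Prod.ext_iff]; constructor <;> dsimp only <;> ring
  · intro a
    rw [tp5, tp5]
    dsimp only
    constructor <;> rintro ⟨h1, h2⟩
    · refine ⟨by nlinarith, by nlinarith⟩
    · refine ⟨by nlinarith, by nlinarith⟩

end P7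

namespace P7

lemma d2main : ∀ n : ℕ, ∀ α : ℤ × ℤ, TotPos 2 α → α.1 ≤ (n:ℤ) → pK 2 α ≠ 7 := by
  intro n
  induction n with
  | zero =>
    intro α h hle
    obtain ⟨h1, _⟩ := (tp2 α).1 h
    exfalso; omega
  | succ n ih =>
    rintro ⟨a, b0⟩ hTP hle
    obtain ⟨h1, h2⟩ := (tp2 (a, b0)).1 hTP
    dsimp only at h1 h2 hle
    have main : ∀ b : ℤ, 0 ≤ b → 1 ≤ (2*a)^2 - 8*b^2 → pK 2 (a, b) ≠ 7 := by
      intro b hb0 h2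
      rcases lt_or_ge a (2*b) with hcone | hcone
      · -- reduction by the totally positive unit 3+2√2
        have e : ((a:ℤ), (b:ℤ)) = (3*(3*a-4*b)+4*(3*b-2*a), 2*(3*a-4*b)+3*(3*b-2*a)) := by
          rw [Prod.ext_iff]; constructor <;> dsimp only <;> ring
        have hu := unit2 (3*a-4*b, 3*b-2*a)
        dsimp only at hu
        rw [e, hu]
        apply ih (3*a-4*b, 3*b-2*a) ?_ ?_
        · apply (tp2 _).2
          constructor <;> dsimp only
          · nlinarith
          · nlinarith
        · dsimp only
          push_cast at hle ⊢
          omega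
      · rcases le_or_gt 9 b with hb9 | hb9
        · have hβ : TotPos 2 (a-8, b-4) := (tp2 _).2 ⟨by dsimp only; omega, by dsimp only; nlinarith⟩
          have hm := pK_mono (by norm_num) (8,4) (a-8,b-4) hβ
          have e : ((8:ℤ),(4:ℤ)) + (a-8, b-4) = (a, b) := by
            rw [Prod.ext_iff]; constructor <;> simp [Prod.fst_add, Prod.snd_add] <;> ring
          rw [e, v2_8_4] at hm
          omega
        · interval_cases b
          · -- b = 0
            rcases le_or_gt 6 a with h6 | h6
            · have hβ : TotPos 2 (a-5, 0) := (tp2 _).2 ⟨by dsimp only; omega, by dsimp only; nlinarith⟩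
              have hm := pK_mono (by norm_num) (5,0) (a-5,0) hβ
              have e : ((5:ℤ),(0:ℤ)) + (a-5, 0) = (a, 0) := by
                rw [Prod.ext_iff]; constructor <;> simp [Prod.fst_add, Prod.snd_add] <;> ring
              rw [e, v2_5_0] at hm
              omega
            · have hlo : 1 ≤ a := by nlinarith
              interval_cases a
              · rw [v2_1_0]; omega
              · rw [v2_2_0]; omega
              · rw [v2_3_0]; omega
              · rw [v2_4_0]; omega
              · rw [v2_5_0]; omega
          · -- b = 1
            rcases le_or_gt 6 a with h6 | h6
            · have hβ : TotPos 2 (a-5, 0) := (tp2 _).2 ⟨by dsimp only; omega, by dsimp only; nlinarith⟩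
              have hm := pK_mono (by norm_num) (5,1) (a-5,0) hβ
              have e : ((5:ℤ),(1:ℤ)) + (a-5, 0) = (a, 1) := by
                rw [Prod.ext_iff]; constructor <;> simp [Prod.fst_add, Prod.snd_add] <;> ring
              rw [e, v2_5_1] at hm
              omega
            · have hlo : 2 ≤ a := by nlinarith
              interval_cases a
              · rw [v2_2_1]; omega
              · rw [v2_3_1]; omega
              · rw [v2_4_1]; omega
              · rw [v2_5_1]; omega
          · -- b = 2
            rcases le_or_gt 7 a with h6 | h6
            · have hβ : TotPos 2 (a-6, 0) := (tp2 _).2 ⟨by dsimp only; omega, by dsimp only; nlinarith⟩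
              have hm := pK_mono (by norm_num) (6,2) (a-6,0) hβ
              have e : ((6:ℤ),(2:ℤ)) + (a-6, 0) = (a, 2) := by
                rw [Prod.ext_iff]; constructor <;> simp [Prod.fst_add, Prod.snd_add] <;> ring
              rw [e, v2_6_2] at hm
              omega
            · have hlo : 4 ≤ a := by nlinarith
              interval_cases a
              · rw [v2_4_2]; omega
              · rw [v2_5_2]; omega
              · rw [v2_6_2]; omega
          · -- b = 3
            rcases le_or_gt 8 a with h6 | h6
            · have hβ : TotPos 2 (a-7, 0) := (tp2 _).2 ⟨by dsimp only; omega, by dsimp only; nlinarith⟩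
              have hm := pK_mono (by norm_num) (7,3) (a-7,0) hβ
              have e : ((7:ℤ),(3:ℤ)) + (a-7, 0) = (a, 3) := by
                rw [Prod.ext_iff]; constructor <;> simp [Prod.fst_add, Prod.snd_add] <;> ring
              rw [e, v2_7_3] at hm
              omega
            · have hlo : 6 ≤ a := by nlinarith
              interval_cases a
              · rw [v2_6_3]; omega
              · rw [v2_7_3]; omega
          · -- b = 4
            rcases le_or_gt 9 a with h6 | h6
            · have hβ : TotPos 2 (a-8, 0) := (tp2 _).2 ⟨by dsimp only; omega, by dsimp only; nlinarith⟩
              have hm := pK_mono (by norm_num) (8,4) (a-8,0) hβ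
              have e : ((8:ℤ),(4:ℤ)) + (a-8, 0) = (a, 4) := by
                rw [Prod.ext_iff]; constructor <;> simp [Prod.fst_add, Prod.snd_add] <;> ring
              rw [e, v2_8_4] at hm
              omega
            · have hlo : 8 ≤ a := by nlinarith
              interval_cases a
              · rw [v2_8_4]; omega
          · -- b = 5
            have hβ : TotPos 2 (a-8, 1) := (tp2 _).2 ⟨by dsimp only; omega, by dsimp only; nlinarith⟩
            have hm := pK_mono (by norm_num) (8,4) (a-8,1) hβ
            have e : ((8:ℤ),(4:ℤ)) + (a-8, 1) = (a, 5) := by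
              rw [Prod.ext_iff]; constructor <;> simp [Prod.fst_add, Prod.snd_add] <;> ring
            rw [e, v2_8_4] at hm
            omega
          · -- b = 6
            have hβ : TotPos 2 (a-8, 2) := (tp2 _).2 ⟨by dsimp only; omega, by dsimp only; nlinarith⟩
            have hm := pK_mono (by norm_num) (8,4) (a-8,2) hβ
            have e : ((8:ℤ),(4:ℤ)) + (a-8, 2) = (a, 6) := by
              rw [Prod.ext_iff]; constructor <;> simp [Prod.fst_add, Prod.snd_add] <;> ring
            rw [e, v2_8_4] at hm
            omega
          · -- b = 7
            have hβ : TotPos 2 (a-8, 3) := (tp2 _).2 ⟨by dsimp only; omega, by dsimp only; nlinarith⟩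
            have hm := pK_mono (by norm_num) (8,4) (a-8,3) hβ
            have e : ((8:ℤ),(4:ℤ)) + (a-8, 3) = (a, 7) := by
              rw [Prod.ext_iff]; constructor <;> simp [Prod.fst_add, Prod.snd_add] <;> ring
            rw [e, v2_8_4] at hm
            omega
          · -- b = 8
            have hβ : TotPos 2 (a-8, 4) := (tp2 _).2 ⟨by dsimp only; omega, by dsimp only; nlinarith⟩
            have hm := pK_mono (by norm_num) (8,4) (a-8,4) hβ
            have e : ((8:ℤ),(4:ℤ)) + (a-8, 4) = (a, 8) := by
              rw [Prod.ext_iff]; constructor <;> simp [Prod.fst_add, Prod.snd_add] <;> ring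
            rw [e, v2_8_4] at hm
            omega
    rcases le_or_gt 0 b0 with hb | hb
    · exact main b0 hb h2
    · have hc := conj2 (a, -b0)
      dsimp only at hc
      rw [neg_neg] at hc
      rw [hc]
      apply main (-b0) (by omega)
      nlinarith

lemma d2 (α : ℤ × ℤ) (h : TotPos 2 α) : pK 2 α ≠ 7 :=
  d2main α.1.toNat α h (Int.self_le_toNat _)

end P7

namespace P7

lemma d5main : ∀ n : ℕ, ∀ α : ℤ × ℤ, TotPos 5 α → 2*α.1 + α.2 ≤ (n:ℤ) → pK 5 α ≠ 7 := by
  intro n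
  induction n with
  | zero =>
    intro α h hle
    obtain ⟨h1, _⟩ := (tp5 α).1 h
    exfalso; omega
  | succ n ih =>
    rintro ⟨x0, y0⟩ hTP hle
    obtain ⟨h10, h20⟩ := (tp5 (x0, y0)).1 hTP
    dsimp only at h10 h20 hle
    have main : ∀ x y : ℤ, 0 ≤ y → 1 ≤ 2*x+y → 1 ≤ (2*x+y)^2 - 5*y^2 →
        2*x+y ≤ ((n:ℤ)+1) → pK 5 (x, y) ≠ 7 := by
      intro x y hy0 h1 h2 hle
      rcases lt_or_ge x (2*y) with hcone | hcone
      · -- reduction by the totally positive unit (3+√5)/2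
        have e : ((x:ℤ), (y:ℤ)) = ((2*x-y)+(y-x), (2*x-y)+2*(y-x)) := by
          rw [Prod.ext_iff]; constructor <;> dsimp only <;> ring
        have hu := unit5 (2*x-y, y-x)
        dsimp only at hu
        rw [e, hu]
        apply ih (2*x-y, y-x) ?_ ?_
        · apply (tp5 _).2
          constructor <;> dsimp only
          · nlinarith
          · have er : (2*(2*x-y)+(y-x))^2 - 5*(y-x)^2 = (2*x+y)^2 - 5*y^2 := by ring
            omega
        · dsimp only
          omega
      · rcases le_or_gt 3 y with hy3 | hy3
        · have hβ : TotPos 5 (x-4, y-2) := (tp5 _).2 ⟨by dsimp only; omega, by dsimp only; nlinarith⟩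
          have hm := pK_mono (by norm_num) (4,2) (x-4,y-2) hβ
          have e : ((4:ℤ),(2:ℤ)) + (x-4, y-2) = (x, y) := by
            rw [Prod.ext_iff]; constructor <;> simp [Prod.fst_add, Prod.snd_add] <;> ring
          rw [e, v5_4_2] at hm
          omega
        · interval_cases y
          · -- y = 0
            rcases le_or_gt 5 x with h6 | h6
            · have hβ : TotPos 5 (x-4, 0) := (tp5 _).2 ⟨by dsimp only; omega, by dsimp only; nlinarith⟩
              have hm := pK_mono (by norm_num) (4,0) (x-4,0) hβ
              have e : ((4:ℤ),(0:ℤ)) + (x-4, 0) = (x, 0) := by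
                rw [Prod.ext_iff]; constructor <;> simp [Prod.fst_add, Prod.snd_add] <;> ring
              rw [e, v5_4_0] at hm
              omega
            · have hlo : 1 ≤ x := by omega
              interval_cases x
              · rw [v5_1_0]; omega
              · rw [v5_2_0]; omega
              · rw [v5_3_0]; omega
              · rw [v5_4_0]; omega
          · -- y = 1
            rcases le_or_gt 5 x with h6 | h6
            · have hβ : TotPos 5 (x-4, 0) := (tp5 _).2 ⟨by dsimp only; omega, by dsimp only; nlinarith⟩
              have hm := pK_mono (by norm_num) (4,1) (x-4,0) hβ
              have e : ((4:ℤ),(1:ℤ)) + (x-4, 0) = (x, 1) := by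
                rw [Prod.ext_iff]; constructor <;> simp [Prod.fst_add, Prod.snd_add] <;> ring
              rw [e, v5_4_1] at hm
              omega
            · have hlo : 2 ≤ x := by omega
              interval_cases x
              · rw [v5_2_1]; omega
              · rw [v5_3_1]; omega
              · rw [v5_4_1]; omega
          · -- y = 2
            rcases le_or_gt 5 x with h6 | h6
            · have hβ : TotPos 5 (x-4, 0) := (tp5 _).2 ⟨by dsimp only; omega, by dsimp only; nlinarith⟩
              have hm := pK_mono (by norm_num) (4,2) (x-4,0) hβ
              have e : ((4:ℤ),(2:ℤ)) + (x-4, 0) = (x, 2) := by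
                rw [Prod.ext_iff]; constructor <;> simp [Prod.fst_add, Prod.snd_add] <;> ring
              rw [e, v5_4_2] at hm
              omega
            · have hlo : 4 ≤ x := by omega
              interval_cases x
              · rw [v5_4_2]; omega
    rcases le_or_gt 0 y0 with hb | hb
    · exact main x0 y0 hb h10 h20 (by push_cast at hle ⊢; omega)
    · have hc := conj5 (x0+y0, -y0)
      dsimp only at hc
      rw [neg_neg] at hc
      have e : ((x0 + y0 + -y0 : ℤ), (y0 : ℤ)) = (x0, y0) := by
        rw [Prod.ext_iff]; constructor <;> dsimp only <;> ring
      rw [e] at hc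
      rw [hc]
      apply main (x0+y0) (-y0) (by omega) (by omega) ?_ (by push_cast at hle ⊢; omega)
      have er : (2*(x0+y0)+(-y0))^2 - 5*(-y0)^2 = (2*x0+y0)^2 - 5*y0^2 := by ring
      omega

lemma d5 (α : ℤ × ℤ) (h : TotPos 5 α) : pK 5 α ≠ 7 :=
  d5main (2*α.1+α.2).toNat α h (Int.self_le_toNat _)

end P7

namespace P7

def Lg : List (ℤ × ℤ) := [(1, 0), (2, 0), (3, 0), (4, 0), (5, 0)]

lemma tp_x0 {D : ℤ} (hD : 2 ≤ D) (x : ℤ) (hx : 1 ≤ x) : TotPos D (x, 0) := by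
  apply (totPos_iff hD _).2
  by_cases h : D % 4 = 1 <;> simp only [trI, nrm, h, if_true, if_false, reduceIte] <;>
    constructor <;> nlinarith

lemma hLtpg {D : ℤ} (hD : 2 ≤ D) : ∀ β ∈ Lg, TotPos D β := by
  intro β hβ
  fin_cases hβ <;> exact tp_x0 hD _ (by norm_num)

lemma hLtfg (D : ℤ) : ∀ β ∈ Lg, 0 ≤ tf (cD D) β := by
  intro β hβ
  fin_cases hβ <;> (unfold tf cD; split <;> norm_num)

lemma cand_g (D : ℤ) : cand D Lg (5, 0) = Lg := by
  apply List.filter_eq_self.2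
  intro β hβ
  rw [decide_eq_true_eq]
  by_cases h : D % 4 = 1 <;> fin_cases hβ <;>
    constructor <;> simp only [trI, nrm, h, if_true, if_false, reduceIte, Prod.mk_sub_mk] <;>
    norm_num

lemma genA {D : ℤ} (hD6 : 6 ≤ D) (h4 : D % 4 ≠ 1) : pK D (5, 0) = 7 := by
  have hD : (2:ℤ) ≤ D := by omega
  have hmaster : ∀ β, TotPos D β → 0 ≤ trI D ((5,0) - β) → 0 ≤ nrm D ((5,0) - β) → β ∈ Lg := by
    rintro ⟨x, y⟩ htp h1 h2
    obtain ⟨g1, g2⟩ := (totPos_iff hD _).1 htp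
    simp only [trI, nrm, h4, if_false, reduceIte] at g1 g2 h1 h2
    simp only [Prod.mk_sub_mk, Prod.fst_sub, Prod.snd_sub] at h1 h2 ⊢
    have hy : y = 0 := by
      by_contra hy
      have hy2 : 1 ≤ y^2 := by rcases lt_or_gt_of_ne hy with h | h <;> nlinarith
      have hx3 : 3 ≤ x := by nlinarith
      have hx2 : x ≤ 2 := by nlinarith
      omega
    subst hy
    have hx : 1 ≤ x ∧ x ≤ 5 := by omega
    obtain ⟨hx1, hx2⟩ := hx
    interval_cases x <;> decide
  have := pK_eq hD (5,0) 5 Lg (hLtpg hD) (hLtfg D) hmaster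
    (by unfold trI; rw [if_neg h4, if_neg h4]; norm_num)
  rw [this, cand_g, show cD D = (2, 0) by unfold cD; rw [if_neg h4]]
  decide

lemma genB {D : ℤ} (hD29 : 29 ≤ D) (h4 : D % 4 = 1) : pK D (5, 0) = 7 := by
  have hD : (2:ℤ) ≤ D := by omega
  have hmaster : ∀ β, TotPos D β → 0 ≤ trI D ((5,0) - β) → 0 ≤ nrm D ((5,0) - β) → β ∈ Lg := by
    rintro ⟨x, y⟩ htp h1 h2
    obtain ⟨g1, g2⟩ := (totPos_iff hD _).1 htp
    simp only [trI, nrm, h4, if_true, reduceIte] at g1 g2 h1 h2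
    simp only [Prod.mk_sub_mk, Prod.fst_sub, Prod.snd_sub] at h1 h2 ⊢
    have hy : y = 0 := by
      by_contra hy
      have hy2 : 1 ≤ y^2 := by rcases lt_or_gt_of_ne hy with h | h <;> nlinarith
      have ht6 : 6 ≤ 2*x + y := by nlinarith
      have ht4 : 2*x + y ≤ 4 := by nlinarith
      omega
    subst hy
    have hx : 1 ≤ x ∧ x ≤ 5 := by omega
    obtain ⟨hx1, hx2⟩ := hx
    interval_cases x <;> decide
  have := pK_eq hD (5,0) 10 Lg (hLtpg hD) (hLtfg D) hmaster
    (by unfold trI; rw [if_pos h4, if_pos h4]; norm_num)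
  rw [this, cand_g, show cD D = (2, 1) by unfold cD; rw [if_pos h4]]
  decide

end P7

theorem exists_seven_partitions_iff (D : ℤ) (hD : 2 ≤ D) (hsf : Squarefree D) :
    (∃ α : ℤ × ℤ, TotPos D α ∧ pK D α = 7) ↔ D ∉ ({2, 5} : Set ℤ) := by
  constructor
  · rintro ⟨α, hα, h7⟩ hmem
    simp only [Set.mem_insert_iff, Set.mem_singleton_iff] at hmem
    rcases hmem with rfl | rfl
    · exact P7.d2 α hα h7
    · exact P7.d5 α hα h7
  · intro hmem
    simp only [Set.mem_insert_iff, Set.mem_singleton_iff, not_or] at hmem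
    obtain ⟨hne2, hne5⟩ := hmem
    by_cases h4 : D % 4 = 1
    · by_cases h13 : D = 13
      · subst h13; exact ⟨(5,1), (P7.tp13 _).2 (by norm_num), P7.v13_5_1⟩
      by_cases h17 : D = 17
      · subst h17; exact ⟨(5,1), (P7.tp17 _).2 (by norm_num), P7.v17_5_1⟩
      by_cases h21 : D = 21
      · subst h21; exact ⟨(5,1), (P7.tp21 _).2 (by norm_num), P7.v21_5_1⟩
      have h9 : D ≠ 9 := by
        intro h; subst h
        have := hsf 3 (by norm_num)
        rw [Int.isUnit_iff] at this; omega
      have h25 : D ≠ 25 := by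
        intro h; subst h
        have := hsf 5 (by norm_num)
        rw [Int.isUnit_iff] at this; omega
      have h29 : 29 ≤ D := by omega
      exact ⟨(5,0), P7.tp_x0 hD 5 (by norm_num), P7.genB h29 h4⟩
    · by_cases h3 : D = 3
      · subst h3; exact ⟨(5,1), (P7.tp3 _).2 (by norm_num), P7.v3_5_1⟩
      have hne4 : D ≠ 4 := by
        intro h; subst h
        have := hsf 2 (by norm_num)
        rw [Int.isUnit_iff] at this; omega
      have h6 : 6 ≤ D := by omega
      exact ⟨(5,0), P7.tp_x0 hD 5 (by norm_num), P7.genA h6 h4⟩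
end

section
/- Let D ≥ 2 be a squarefree integer and K = ℚ(√D). If α = (⌈ξ_D⌉ + 2) + ω_D, then α is totally positive and p_K(α) = 4. In particular, every real quadratic field contains a totally positive integer with exactly 4 partitions. -/
/-! ### Auxiliary multiset lemmas -/

lemma msum_fst_nonneg (m : Multiset (ℤ × ℤ)) (h : ∀ β ∈ m, 1 ≤ β.1) : 0 ≤ m.sum.1 := by
  induction m using Multiset.induction_on with
  | empty => simp
  | cons a t ih =>
    have ha := h a (Multiset.mem_cons_self a t)
    have ht := ih (fun β hβ => h β (Multiset.mem_cons_of_mem hβ))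
    simp only [Multiset.sum_cons, Prod.fst_add]
    omega

lemma msum_snd_nonneg (m : Multiset (ℤ × ℤ)) (h : ∀ β ∈ m, 0 ≤ β.2) : 0 ≤ m.sum.2 := by
  induction m using Multiset.induction_on with
  | empty => simp
  | cons a t ih =>
    have ha := h a (Multiset.mem_cons_self a t)
    have ht := ih (fun β hβ => h β (Multiset.mem_cons_of_mem hβ))
    simp only [Multiset.sum_cons, Prod.snd_add]
    omega

lemma msum_snd_nonpos (m : Multiset (ℤ × ℤ)) (h : ∀ β ∈ m, β.2 ≤ 0) : m.sum.2 ≤ 0 := by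
  induction m using Multiset.induction_on with
  | empty => simp
  | cons a t ih =>
    have ha := h a (Multiset.mem_cons_self a t)
    have ht := ih (fun β hβ => h β (Multiset.mem_cons_of_mem hβ))
    simp only [Multiset.sum_cons, Prod.snd_add]
    omega

lemma exists_snd_pos (m : Multiset (ℤ × ℤ)) (h : 1 ≤ m.sum.2) : ∃ β ∈ m, 1 ≤ β.2 := by
  by_contra hc
  push_neg at hc
  have := msum_snd_nonpos m (fun β hβ => by have := hc β hβ; omega)
  omega

lemma snd_zero_of (m : Multiset (ℤ × ℤ)) (h : ∀ β ∈ m, 0 ≤ β.2) (hs : m.sum.2 = 0) :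
    ∀ β ∈ m, β.2 = 0 := by
  induction m using Multiset.induction_on with
  | empty => simp
  | cons a t ih =>
    have ha := h a (Multiset.mem_cons_self a t)
    have ht : ∀ β ∈ t, 0 ≤ β.2 := fun β hβ => h β (Multiset.mem_cons_of_mem hβ)
    have htn := msum_snd_nonneg t ht
    simp only [Multiset.sum_cons, Prod.snd_add] at hs
    intro β hβ
    rcases Multiset.mem_cons.mp hβ with rfl | hβt
    · omega
    · exact ih ht (by omega) β hβt

lemma classify01 (m : Multiset (ℤ × ℤ)) (h : ∀ β ∈ m, 1 ≤ β.1 ∧ β.2 = 0) :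
    (m.sum.1 = 0 → m = 0) ∧ (m.sum.1 = 1 → m = {((1:ℤ), (0:ℤ))}) ∧
      (m.sum.1 = 2 → m = {((2:ℤ), (0:ℤ))} ∨ m = {((1:ℤ), (0:ℤ)), ((1:ℤ), (0:ℤ))}) := by
  induction m using Multiset.induction_on with
  | empty =>
    refine ⟨fun _ => rfl, fun h1 => ?_, fun h2 => ?_⟩
    · simp at h1
    · simp at h2
  | cons a t ih =>
    have ha := h a (Multiset.mem_cons_self a t)
    have ht : ∀ β ∈ t, 1 ≤ β.1 ∧ β.2 = 0 := fun β hβ => h β (Multiset.mem_cons_of_mem hβ)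
    have ih' := ih ht
    have htn := msum_fst_nonneg t (fun β hβ => (ht β hβ).1)
    have hsum : (a ::ₘ t).sum.1 = a.1 + t.sum.1 := by
      simp [Multiset.sum_cons]
    refine ⟨fun h0 => ?_, fun h1 => ?_, fun h2 => ?_⟩
    · rw [hsum] at h0; omega
    · rw [hsum] at h1
      have h0 : t = 0 := ih'.1 (by omega)
      have haa : a = ((1:ℤ), (0:ℤ)) := by
        obtain ⟨a1, a2⟩ := a
        simp_all
      rw [h0, haa]
      rfl
    · rw [hsum] at h2
      rcases (show a.1 = 2 ∧ t.sum.1 = 0 ∨ a.1 = 1 ∧ t.sum.1 = 1 by omega) with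
        ⟨h2', h0⟩ | ⟨h1', h1t⟩
      · left
        have h0' : t = 0 := ih'.1 h0
        have haa : a = ((2:ℤ), (0:ℤ)) := by
          obtain ⟨a1, a2⟩ := a; simp_all
        rw [h0', haa]; rfl
      · right
        have ht' : t = {((1:ℤ), (0:ℤ))} := ih'.2.1 h1t
        have haa : a = ((1:ℤ), (0:ℤ)) := by
          obtain ⟨a1, a2⟩ := a; simp_all
        rw [ht', haa]; rfl

/-! ### Totally positive element lemmas -/

lemma embConj_eq (D : ℤ) (a : ℤ × ℤ) : embConj D a = a.1 - a.2 * xiD D := by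
  simp only [embConj, xiD]; ring

variable {D : ℤ}

lemma totpos_one_le_fst (hξ : 0 < xiD D) (hω : 0 < omegaD D) {β : ℤ × ℤ}
    (h : TotPos D β) : 1 ≤ β.1 := by
  obtain ⟨h1, h2⟩ := h
  rw [emb] at h1
  rw [embConj_eq] at h2
  have : (0:ℝ) < β.1 := by
    rcases le_or_gt 0 (β.2 : ℝ) with hy | hy
    · nlinarith
    · nlinarith
  have : (0:ℤ) < β.1 := by exact_mod_cast this
  omega

lemma totpos_ceil_le_fst (hξ : 0 < xiD D) {β : ℤ × ℤ}
    (h : TotPos D β) (hy : 1 ≤ β.2) : ⌈xiD D⌉ ≤ β.1 := by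
  have h2 := h.2
  rw [embConj_eq] at h2
  have hy' : (1:ℝ) ≤ (β.2 : ℝ) := by exact_mod_cast hy
  have : xiD D ≤ (β.1 : ℝ) := by nlinarith
  exact Int.ceil_le.mpr this

lemma totpos_two_xi_le_fst (hξ : 0 < xiD D) {β : ℤ × ℤ}
    (h : TotPos D β) (hy : 2 ≤ β.2) : ⌈2 * xiD D⌉ ≤ β.1 := by
  have h2 := h.2
  rw [embConj_eq] at h2
  have hy' : (2:ℝ) ≤ (β.2 : ℝ) := by exact_mod_cast hy
  have : 2 * xiD D ≤ (β.1 : ℝ) := by nlinarith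
  exact Int.ceil_le.mpr this

lemma totpos_omega_le_fst (hω : 0 < omegaD D) {β : ℤ × ℤ}
    (h : TotPos D β) (hy : β.2 ≤ -1) : ⌈omegaD D⌉ ≤ β.1 := by
  have h1 := h.1
  rw [emb] at h1
  have hy' : (β.2 : ℝ) ≤ -1 := by exact_mod_cast hy
  have : omegaD D ≤ (β.1 : ℝ) := by nlinarith
  exact Int.ceil_le.mpr this

lemma totpos_y0 (hω : 0 < omegaD D) {x : ℤ} (hx : 1 ≤ x) : TotPos D (x, 0) := by
  constructor <;> [rw [emb]; rw [embConj_eq]] <;>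
    · simp only [Prod.fst, Prod.snd]
      push_cast
      have : (1:ℝ) ≤ (x:ℝ) := by exact_mod_cast hx
      linarith

lemma totpos_y1 (hξ : 0 < xiD D) (hω : 0 < omegaD D) (hξc : xiD D < (⌈xiD D⌉ : ℝ)) {x : ℤ}
    (hx : ⌈xiD D⌉ ≤ x) : TotPos D (x, 1) := by
  have hx' : (⌈xiD D⌉ : ℝ) ≤ (x : ℝ) := by exact_mod_cast hx
  constructor
  · rw [emb]
    simp only [Prod.fst, Prod.snd]
    push_cast
    linarith
  · rw [embConj_eq]
    simp only [Prod.fst, Prod.snd]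
    push_cast
    linarith

/-! ### Numeric facts -/

lemma numeric (D : ℤ) (hD : 2 ≤ D) (hsf : Squarefree D) :
    0 < xiD D ∧ 1 < omegaD D ∧ xiD D < (⌈xiD D⌉ : ℝ) ∧ 2 ≤ ⌈omegaD D⌉ ∧
      ⌈xiD D⌉ + 3 ≤ ⌈omegaD D⌉ + ⌈2 * xiD D⌉ ∧ 1 ≤ ⌈xiD D⌉ := by
  set s := Real.sqrt (D : ℝ) with hs
  have hD0 : (0:ℝ) ≤ (D:ℝ) := by positivity
  have hs0 : 0 ≤ s := Real.sqrt_nonneg _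
  have hs_sq : s ^ 2 = (D : ℝ) := Real.sq_sqrt hD0
  have hD2 : (2:ℝ) ≤ (D:ℝ) := by exact_mod_cast hD
  have hs1 : 1 < s := by nlinarith
  have hnsq : ¬ IsSquare D := by
    rintro ⟨r, hr⟩
    have : IsUnit r := hsf r (by rw [hr])
    rcases Int.isUnit_iff.mp this with rfl | rfl <;> omega
  have hirr : Irrational s :=
    (irrational_sqrt_intCast_iff_of_nonneg (by omega)).mpr hnsq
  by_cases h4 : D % 4 = 1
  · have hD5 : 5 ≤ D := by omega
    have hD5' : (5:ℝ) ≤ (D:ℝ) := by exact_mod_cast hD5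
    have hs2 : 2 < s := by nlinarith
    have hxi_eq : xiD D = (s - 1) / 2 := by
      simp only [xiD, omegaD', if_pos h4]; ring
    have hom_eq : omegaD D = (s + 1) / 2 := by
      simp only [omegaD, if_pos h4]; ring
    have hom_xi : omegaD D = xiD D + 1 := by rw [hxi_eq, hom_eq]; ring
    have N1 : 0 < xiD D := by rw [hxi_eq]; linarith
    have N2 : 1 < omegaD D := by rw [hom_eq]; linarith
    have N3 : xiD D < (⌈xiD D⌉ : ℝ) := by
      refine lt_of_le_of_ne (Int.le_ceil _) (fun he => ?_)
      exact hirr.ne_int (2 * ⌈xiD D⌉ + 1) (by push_cast; rw [← he, hxi_eq]; ring)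
    have N4 : 2 ≤ ⌈omegaD D⌉ := by
      have : (1:ℤ) < ⌈omegaD D⌉ := Int.lt_ceil.mpr (by exact_mod_cast N2)
      omega
    have N5 : ⌈xiD D⌉ + 3 ≤ ⌈omegaD D⌉ + ⌈2 * xiD D⌉ := by
      have h1 : ⌈omegaD D⌉ = ⌈xiD D⌉ + 1 := by rw [hom_xi, Int.ceil_add_one]
      have h2 : (1:ℤ) < ⌈2 * xiD D⌉ := Int.lt_ceil.mpr (by rw [hxi_eq]; push_cast; linarith)
      omega
    exact ⟨N1, N2, N3, N4, N5, Int.ceil_pos.mpr N1⟩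
  · have hxi_eq : xiD D = s := by simp only [xiD, omegaD', if_neg h4]; ring
    have hom_eq : omegaD D = s := by simp only [omegaD, if_neg h4]; rfl
    have N1 : 0 < xiD D := by rw [hxi_eq]; linarith
    have N2 : 1 < omegaD D := by rw [hom_eq]; linarith
    have N3 : xiD D < (⌈xiD D⌉ : ℝ) := by
      refine lt_of_le_of_ne (Int.le_ceil _) (fun he => ?_)
      exact hirr.ne_int ⌈xiD D⌉ (hxi_eq ▸ he)
    have N4 : 2 ≤ ⌈omegaD D⌉ := by
      have : (1:ℤ) < ⌈omegaD D⌉ := Int.lt_ceil.mpr (by exact_mod_cast N2)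
      omega
    have N5 : ⌈xiD D⌉ + 3 ≤ ⌈omegaD D⌉ + ⌈2 * xiD D⌉ := by
      have h1 : ⌈omegaD D⌉ = ⌈xiD D⌉ := by rw [hom_eq, hxi_eq]
      have h2 : (2:ℤ) < ⌈2 * xiD D⌉ := Int.lt_ceil.mpr (by rw [hxi_eq]; push_cast; linarith)
      omega
    exact ⟨N1, N2, N3, N4, N5, Int.ceil_pos.mpr N1⟩

/-! ### Main theorem -/

theorem four_partitions (D : ℤ) (hD : 2 ≤ D) (hsf : Squarefree D) :
    TotPos D (⌈xiD D⌉ + 2, 1) ∧ pK D (⌈xiD D⌉ + 2, 1) = 4 := by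
  obtain ⟨N1, N2, N3, N4, N5, N6⟩ := numeric D hD hsf
  have N7 : 0 < omegaD D := lt_trans one_pos N2
  set c := ⌈xiD D⌉ with hc
  refine ⟨totpos_y1 N1 N7 N3 (by omega), ?_⟩
  have key : ∀ m : Multiset (ℤ × ℤ),
      ((∀ β ∈ m, TotPos D β) ∧ m.sum = (c + 2, 1)) ↔
        m ∈ ({ {(c, 1), (2, 0)}, {(c, 1), (1, 0), (1, 0)}, {(c + 1, 1), (1, 0)},
          {(c + 2, 1)} } : Finset (Multiset (ℤ × ℤ))) := by
    intro m
    constructor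
    · rintro ⟨hT, hS⟩
      have hS1 : m.sum.1 = c + 2 := by rw [hS]
      have hS2 : m.sum.2 = 1 := by rw [hS]
      clear hS
      have hx1 : ∀ β ∈ m, 1 ≤ β.1 := fun β hβ => totpos_one_le_fst N1 N7 (hT β hβ)
      have hynn : ∀ β ∈ m, 0 ≤ β.2 := by
        by_contra hcon
        push_neg at hcon
        obtain ⟨β, hβm, hβ2⟩ := hcon
        obtain ⟨m1, rfl⟩ := Multiset.exists_cons_of_mem hβm
        simp only [Multiset.sum_cons, Prod.snd_add, Prod.fst_add] at hS1 hS2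
        obtain ⟨γ, hγm, hγ2⟩ := exists_snd_pos m1 (by omega)
        obtain ⟨m2, rfl⟩ := Multiset.exists_cons_of_mem hγm
        simp only [Multiset.sum_cons, Prod.snd_add, Prod.fst_add] at hS1 hS2
        have hm2nn : 0 ≤ m2.sum.1 := msum_fst_nonneg m2 (fun β' hβ' =>
          hx1 β' (Multiset.mem_cons_of_mem (Multiset.mem_cons_of_mem hβ')))
        have hβx : ⌈omegaD D⌉ ≤ β.1 :=
          totpos_omega_le_fst N7 (hT β (Multiset.mem_cons_self _ _)) (by omega)
        by_cases hg2 : 2 ≤ γ.2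
        · have hγx : ⌈2 * xiD D⌉ ≤ γ.1 := totpos_two_xi_le_fst N1
            (hT γ (Multiset.mem_cons_of_mem (Multiset.mem_cons_self _ _))) hg2
          omega
        · have hγ1 : γ.2 = 1 := by omega
          obtain ⟨δ, hδm, hδ2⟩ := exists_snd_pos m2 (by omega)
          have hγx : c ≤ γ.1 := totpos_ceil_le_fst N1
            (hT γ (Multiset.mem_cons_of_mem (Multiset.mem_cons_self _ _))) (by omega)
          have hδx : c ≤ δ.1 := totpos_ceil_le_fst N1
            (hT δ (Multiset.mem_cons_of_mem (Multiset.mem_cons_of_mem hδm))) hδ2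
          obtain ⟨m3, rfl⟩ := Multiset.exists_cons_of_mem hδm
          simp only [Multiset.sum_cons, Prod.snd_add, Prod.fst_add] at hS1 hS2
          have hm3nn : 0 ≤ m3.sum.1 := msum_fst_nonneg m3 (fun β' hβ' =>
            hx1 β' (Multiset.mem_cons_of_mem (Multiset.mem_cons_of_mem
              (Multiset.mem_cons_of_mem hβ'))))
          omega
      obtain ⟨γ, hγm, hγ2⟩ := exists_snd_pos m (by omega)
      obtain ⟨m1, rfl⟩ := Multiset.exists_cons_of_mem hγm
      simp only [Multiset.sum_cons, Prod.snd_add, Prod.fst_add] at hS1 hS2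
      have hm1nn2 : 0 ≤ m1.sum.2 := msum_snd_nonneg m1 (fun β hβ =>
        hynn β (Multiset.mem_cons_of_mem hβ))
      have hγ21 : γ.2 = 1 := by omega
      have hm1s2 : m1.sum.2 = 0 := by omega
      have hall : ∀ β ∈ m1, 1 ≤ β.1 ∧ β.2 = 0 := fun β hβ =>
        ⟨hx1 β (Multiset.mem_cons_of_mem hβ),
          snd_zero_of m1 (fun β' hβ' => hynn β' (Multiset.mem_cons_of_mem hβ')) hm1s2 β hβ⟩
      have hm1nn : 0 ≤ m1.sum.1 := msum_fst_nonneg m1 (fun β hβ => (hall β hβ).1)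
      have hγx : c ≤ γ.1 := totpos_ceil_le_fst N1 (hT γ (Multiset.mem_cons_self _ _)) (by omega)
      have hγeq : γ = (γ.1, 1) := by rw [← hγ21]
      obtain h123 := classify01 m1 hall
      simp only [Finset.mem_insert, Finset.mem_singleton]
      rcases show γ.1 = c ∨ γ.1 = c + 1 ∨ γ.1 = c + 2 by omega with h | h | h
      · rcases h123.2.2 (by omega) with rfl | rfl
        · left; rw [hγeq, h]; rfl
        · right; left; rw [hγeq, h]; rfl
      · right; right; left
        rw [h123.2.1 (by omega), hγeq, h]; rfl
      · right; right; right
        rw [h123.1 (by omega), hγeq, h]; rfl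
    · intro hm
      simp only [Finset.mem_insert, Finset.mem_singleton] at hm
      rcases hm with rfl | rfl | rfl | rfl
      · refine ⟨fun β hβ => ?_, ?_⟩
        · simp only [Multiset.insert_eq_cons, Multiset.mem_cons, Multiset.mem_singleton] at hβ
          rcases hβ with rfl | rfl
          · exact totpos_y1 N1 N7 N3 le_rfl
          · exact totpos_y0 N7 (by omega)
        · simp [Multiset.insert_eq_cons, Prod.ext_iff]
      · refine ⟨fun β hβ => ?_, ?_⟩
        · simp only [Multiset.insert_eq_cons, Multiset.mem_cons, Multiset.mem_singleton] at hβ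
          rcases hβ with rfl | rfl | rfl
          · exact totpos_y1 N1 N7 N3 le_rfl
          · exact totpos_y0 N7 (by omega)
          · exact totpos_y0 N7 (by omega)
        · simp [Multiset.insert_eq_cons, Prod.ext_iff]
      · refine ⟨fun β hβ => ?_, ?_⟩
        · simp only [Multiset.insert_eq_cons, Multiset.mem_cons, Multiset.mem_singleton] at hβ
          rcases hβ with rfl | rfl
          · exact totpos_y1 N1 N7 N3 (by omega)
          · exact totpos_y0 N7 (by omega)
        · simp only [Multiset.insert_eq_cons, Multiset.sum_cons, Multiset.sum_singleton,
            Prod.mk_add_mk, Prod.mk.injEq]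
          omega
      · refine ⟨fun β hβ => ?_, ?_⟩
        · simp only [Multiset.mem_singleton] at hβ
          subst hβ
          exact totpos_y1 N1 N7 N3 (by omega)
        · simp
  have hpk : pK D (c + 2, 1) =
      Nat.card {m : Multiset (ℤ × ℤ) // (∀ β ∈ m, TotPos D β) ∧ m.sum = (c + 2, 1)} := rfl
  rw [hpk, Nat.card_congr (Equiv.subtypeEquivRight key), Nat.card_eq_finsetCard]
  have d12 : ({(c, 1), (2, 0)} : Multiset (ℤ × ℤ)) ≠ {(c, 1), (1, 0), (1, 0)} := by
    intro h; simpa using congrArg Multiset.card h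
  have d13 : ({(c, 1), (2, 0)} : Multiset (ℤ × ℤ)) ≠ {(c + 1, 1), (1, 0)} := by
    intro h
    have h2 : ((2:ℤ), (0:ℤ)) ∈ ({(c, 1), (2, 0)} : Multiset (ℤ × ℤ)) := by simp
    rw [h] at h2
    simp [Prod.ext_iff] at h2
  have d14 : ({(c, 1), (2, 0)} : Multiset (ℤ × ℤ)) ≠ {(c + 2, 1)} := by
    intro h; simpa using congrArg Multiset.card h
  have d23 : ({(c, 1), (1, 0), (1, 0)} : Multiset (ℤ × ℤ)) ≠ {(c + 1, 1), (1, 0)} := by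
    intro h; simpa using congrArg Multiset.card h
  have d24 : ({(c, 1), (1, 0), (1, 0)} : Multiset (ℤ × ℤ)) ≠ {(c + 2, 1)} := by
    intro h; simpa using congrArg Multiset.card h
  have d34 : ({(c + 1, 1), (1, 0)} : Multiset (ℤ × ℤ)) ≠ {(c + 2, 1)} := by
    intro h; simpa using congrArg Multiset.card h
  rw [Finset.card_insert_of_notMem (by
      simp only [Finset.mem_insert, Finset.mem_singleton, not_or]
      exact ⟨d12, d13, d14⟩),
    Finset.card_insert_of_notMem (by
      simp only [Finset.mem_insert, Finset.mem_singleton, not_or]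
      exact ⟨d23, d24⟩),
    Finset.card_insert_of_notMem (by
      simp only [Finset.mem_singleton]
      exact d34), Finset.card_singleton]
end
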